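/- arXiv:1904.05295 — 11 statements merged into one kernel-verified Lean document; each statement's English description precedes it below -/
import Mathlib

section
/- Hölder's theorem on the line: Let Γ be a group (under composition) of orientation-preserving homeomorphisms of ℝ, i.e. of strictly increasing continuous bijections of ℝ, and assume Γ acts freely on ℝ, meaning that every element of Γ other than the identity has no fixed point. Then Γ is isomorphic to a subgroup of the additive group (ℝ, +); equivalently, there exists an injective group homomorphism from Γ into (ℝ, +). -/
open Function Set Filter Topology

namespace HolderAux

structure Good (Γ : Subgroup (Equiv.Perm ℝ)) : Prop where
  mono : ∀ g ∈ Γ, StrictMono (g : ℝ → ℝ)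
  cont : ∀ g ∈ Γ, Continuous (g : ℝ → ℝ)
  free : ∀ g ∈ Γ, g ≠ 1 → ∀ x : ℝ, g x ≠ x

variable {Γ : Subgroup (Equiv.Perm ℝ)}

def ap (u : Γ) (x : ℝ) : ℝ := (u : Equiv.Perm ℝ) x

lemma ap_mul (u v : Γ) (x : ℝ) : ap (u * v) x = ap u (ap v x) := rfl

lemma ap_one (x : ℝ) : ap (1 : Γ) x = x := rfl

lemma ap_strictMono (H : Good Γ) (u : Γ) : StrictMono (ap u) := H.mono u u.2

lemma ap_continuous (H : Good Γ) (u : Γ) : Continuous (ap u) := H.cont u u.2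

lemma ap_inv_ap (u : Γ) (x : ℝ) : ap u⁻¹ (ap u x) = x := by
  rw [← ap_mul, inv_mul_cancel, ap_one]

lemma ap_ap_inv (u : Γ) (x : ℝ) : ap u (ap u⁻¹ x) = x := by
  rw [← ap_mul, mul_inv_cancel, ap_one]

lemma ap_ne (H : Good Γ) {u : Γ} (hu : u ≠ 1) (x : ℝ) : ap u x ≠ x :=
  H.free u u.2 (OneMemClass.coe_eq_one.not.mpr hu) x

lemma sign_lemma (H : Good Γ) {u : Γ} (hu : u ≠ 1) :
    (∀ x, ap u x < x) ∨ (∀ x, x < ap u x) := by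
  by_contra h
  push_neg at h
  obtain ⟨⟨a, ha⟩, b, hb⟩ := h
  have ha' : a < ap u a := ha.lt_of_ne (Ne.symm (ap_ne H hu a))
  have hb' : ap u b < b := hb.lt_of_ne (ap_ne H hu b)
  have hFc : Continuous (fun x => ap u x - x) := (ap_continuous H u).sub continuous_id
  rcases le_total a b with hab | hab
  · have h0 : (0:ℝ) ∈ Set.Icc (ap u b - b) (ap u a - a) := ⟨by linarith, by linarith⟩
    obtain ⟨c, _, hc⟩ := intermediate_value_Icc' hab hFc.continuousOn h0
    have hc' : ap u c - c = 0 := hc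
    exact ap_ne H hu c (by linarith)
  · have h0 : (0:ℝ) ∈ Set.Icc (ap u b - b) (ap u a - a) := ⟨by linarith, by linarith⟩
    obtain ⟨c, _, hc⟩ := intermediate_value_Icc hab hFc.continuousOn h0
    have hc' : ap u c - c = 0 := hc
    exact ap_ne H hu c (by linarith)

lemma cmp_le (H : Good Γ) {u v : Γ} {x : ℝ} (h : ap u x ≤ ap v x) (y : ℝ) :
    ap u y ≤ ap v y := by
  rcases eq_or_ne u v with rfl | huv
  · exact le_rfl
  have hw : u * v⁻¹ ≠ 1 := by simpa [mul_inv_eq_one] using huv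
  rcases sign_lemma H hw with hs | hs
  · have := hs (ap v y)
    rw [ap_mul, ap_inv_ap] at this
    exact this.le
  · have := hs (ap v x)
    rw [ap_mul, ap_inv_ap] at this
    exact absurd h (not_le.mpr this)

lemma cmp_lt (H : Good Γ) {u v : Γ} {x : ℝ} (h : ap u x < ap v x) (y : ℝ) :
    ap u y < ap v y := by
  rcases (cmp_le H h.le y).lt_or_eq with h' | h'
  · exact h'
  · exfalso
    have huv : u * v⁻¹ ≠ 1 := by
      rw [Ne, mul_inv_eq_one]
      rintro rfl; exact lt_irrefl _ h
    exact ap_ne H huv (ap v y) (by rw [ap_mul, ap_inv_ap, h'])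


noncomputable section

def ev (u : Γ) : ℝ := ap u 0

lemma ev_one : ev (1 : Γ) = 0 := rfl

lemma ev_mul (u v : Γ) : ev (u * v) = ap u (ev v) := rfl

lemma eq_of_ev_eq (H : Good Γ) {u v : Γ} (h : ev u = ev v) : u = v := by
  by_contra huv
  have hw : u * v⁻¹ ≠ 1 := by rw [Ne, mul_inv_eq_one]; exact huv
  exact ap_ne H hw (ap v 0) (by rw [ap_mul, ap_inv_ap]; exact h)

lemma mul_le' (H : Good Γ) {u v w z : Γ} (h1 : ev u ≤ ev v) (h2 : ev w ≤ ev z) :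
    ev (u * w) ≤ ev (v * z) := by
  rw [ev_mul, ev_mul]
  exact le_trans ((ap_strictMono H u).monotone h2) (cmp_le H h1 (ev z))

lemma mul_le_lt' (H : Good Γ) {u v w z : Γ} (h1 : ev u ≤ ev v) (h2 : ev w < ev z) :
    ev (u * w) < ev (v * z) := by
  rw [ev_mul, ev_mul]
  exact lt_of_lt_of_le ((ap_strictMono H u) h2) (cmp_le H h1 (ev z))

lemma mul_lt' (H : Good Γ) {u v w z : Γ} (h1 : ev u < ev v) (h2 : ev w < ev z) :
    ev (u * w) < ev (v * z) := mul_le_lt' H h1.le h2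

lemma inv_le' (H : Good Γ) {u v : Γ} (h : ev u ≤ ev v) : ev v⁻¹ ≤ ev u⁻¹ := by
  have h1 : ap u (ev v⁻¹) ≤ ap v (ev v⁻¹) := cmp_le H h _
  have h2 : ap v (ev v⁻¹) = 0 := ap_ap_inv v 0
  have h3 : ap u (ev u⁻¹) = 0 := ap_ap_inv u 0
  exact ((ap_strictMono H u).le_iff_le).mp (by rw [h3]; exact h2 ▸ h1)

lemma pow_le' (H : Good Γ) {u v : Γ} (h : ev u ≤ ev v) (n : ℕ) :
    ev (u ^ n) ≤ ev (v ^ n) := by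
  induction n with
  | zero => simp
  | succ n ih => rw [pow_succ, pow_succ]; exact mul_le' H ih h

lemma pow_lt' (H : Good Γ) {u v : Γ} (h : ev u < ev v) {n : ℕ} (hn : 0 < n) :
    ev (u ^ n) < ev (v ^ n) := by
  obtain ⟨m, rfl⟩ := Nat.exists_eq_succ_of_ne_zero hn.ne'
  rw [pow_succ, pow_succ]
  exact mul_le_lt' H (pow_le' H h.le m) h

lemma orbit_up (H : Good Γ) (u : Γ) (hu : ∀ x, x < ap u x) (x y : ℝ) :
    ∃ n : ℕ, y < ap (u ^ n) x := by
  by_contra h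
  push_neg at h
  set s : ℕ → ℝ := fun n => ap (u ^ n) x with hs
  have hstep : ∀ n, s (n + 1) = ap u (s n) := by
    intro n; rw [hs]; simp only; rw [pow_succ', ap_mul]
  have hmono_s : Monotone s := monotone_nat_of_le_succ fun n => by
    rw [hstep n]; exact (hu (s n)).le
  have hbdd : BddAbove (Set.range s) := ⟨y, by rintro _ ⟨n, rfl⟩; exact h n⟩
  have hlim : Tendsto s atTop (𝓝 (⨆ n, s n)) := tendsto_atTop_ciSup hmono_s hbdd
  have h1 : Tendsto (fun n => s (n + 1)) atTop (𝓝 (⨆ n, s n)) :=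
    hlim.comp (tendsto_add_atTop_nat 1)
  have h2 : Tendsto (fun n => ap u (s n)) atTop (𝓝 (ap u (⨆ n, s n))) :=
    ((ap_continuous H u).tendsto _).comp hlim
  have heq : ap u (⨆ n, s n) = ⨆ n, s n := by
    refine tendsto_nhds_unique ?_ h1
    convert h2 using 2 with n
    exact hstep n
  exact (hu (⨆ n, s n)).ne' heq

lemma ap_lt_iff (H : Good Γ) (u : Γ) {x y : ℝ} : ap u x < y ↔ x < ap u⁻¹ y := by
  constructor
  · intro h
    have := ap_strictMono H u⁻¹ h
    rwa [ap_inv_ap] at this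
  · intro h
    have := ap_strictMono H u h
    rwa [ap_ap_inv] at this

lemma orbit_down (H : Good Γ) (u : Γ) (hu : ∀ x, ap u x < x) (x y : ℝ) :
    ∃ n : ℕ, ap (u ^ n) x < y := by
  have hu' : ∀ z, z < ap u⁻¹ z := fun z => by
    have := hu (ap u⁻¹ z); rwa [ap_ap_inv] at this
  obtain ⟨n, hn⟩ := orbit_up H u⁻¹ hu' y x
  refine ⟨n, ?_⟩
  rw [ap_lt_iff H]
  rwa [inv_pow] at hn

lemma zpow_strictMono (H : Good Γ) (f : Γ) (hf : ∀ x, x < ap f x) :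
    StrictMono (fun p : ℤ => ev (f ^ p)) := by
  apply strictMono_int_of_lt_succ
  intro p
  show ev (f ^ p) < ev (f ^ (p + 1))
  rw [zpow_add_one, ev_mul]
  have h0 : (0:ℝ) < ev f := hf 0
  calc ev (f ^ p) = ap (f ^ p) 0 := rfl
    _ < ap (f ^ p) (ev f) := ap_strictMono H _ h0

lemma floor_lemma (H : Good Γ) (f : Γ) (hf : ∀ x, x < ap f x) (g : Γ) :
    ∃ m : ℤ, ev (f ^ m) ≤ ev g ∧ ev g < ev (f ^ (m + 1)) := by
  have hfdown : ∀ z, ap f⁻¹ z < z := fun z => by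
    have := hf (ap f⁻¹ z); rwa [ap_ap_inv] at this
  obtain ⟨n₁, hn₁⟩ := orbit_up H f hf 0 (ev g)
  obtain ⟨n₂, hn₂⟩ := orbit_down H f⁻¹ hfdown 0 (ev g)
  have hmem : (-(n₂:ℤ)) ∈ {p : ℤ | ev (f ^ p) ≤ ev g} := by
    have : ev (f ^ (-(n₂:ℤ))) = ap (f⁻¹ ^ n₂) 0 := by
      rw [zpow_neg, zpow_natCast, ← inv_pow]; rfl
    rw [Set.mem_setOf_eq, this]
    exact hn₂.le
  have hub : ∀ p ∈ {p : ℤ | ev (f ^ p) ≤ ev g}, p ≤ (n₁ : ℤ) := by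
    intro p hp
    have hlt : ev (f ^ p) < ev (f ^ (n₁:ℤ)) := by
      rw [zpow_natCast]
      exact lt_of_le_of_lt hp hn₁
    exact ((zpow_strictMono H f hf).lt_iff_lt.mp hlt).le
  obtain ⟨m, hm, hmax⟩ := Int.exists_greatest_of_bdd ⟨n₁, hub⟩ ⟨_, hmem⟩
  refine ⟨m, hm, ?_⟩
  by_contra hcon
  push_neg at hcon
  have := hmax (m + 1) hcon
  omega


lemma up_of_ev_pos (H : Good Γ) {u : Γ} (hu : 0 < ev u) : ∀ x, x < ap u x := by
  have h1 : u ≠ 1 := fun h => by rw [h, ev_one] at hu; exact lt_irrefl _ hu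
  rcases sign_lemma H h1 with h | h
  · exact absurd (h 0) (not_lt.mpr hu.le)
  · exact h

lemma comm_lemma (H : Good Γ) (u v : Γ) : u * v = v * u := by
  by_cases hmin : ∃ a : Γ, 0 < ev a ∧ ∀ b : Γ, 0 < ev b → ev a ≤ ev b
  · -- least positive element: the group is cyclic
    obtain ⟨a, ha0, hamin⟩ := hmin
    have haup : ∀ x, x < ap a x := up_of_ev_pos H ha0
    have key : ∀ g : Γ, ∃ m : ℤ, g = a ^ m := by
      intro g
      obtain ⟨m, h1, h2⟩ := floor_lemma H a haup g
      refine ⟨m, ?_⟩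
      have hw0 : 0 ≤ ev ((a ^ m)⁻¹ * g) := by
        have := (ap_strictMono H (a ^ m)⁻¹).monotone h1
        rwa [show ap (a ^ m)⁻¹ (ev (a ^ m)) = 0 from ap_inv_ap _ 0, ← ev_mul] at this
      have hw1 : ev ((a ^ m)⁻¹ * g) < ev a := by
        have := ap_strictMono H (a ^ m)⁻¹ h2
        rw [← ev_mul, ← ev_mul] at this
        rwa [show (a ^ m)⁻¹ * a ^ (m + 1) = a by rw [zpow_add_one]; group] at this
      rcases hw0.eq_or_lt with he | hlt
      · have : (a ^ m)⁻¹ * g = 1 := eq_of_ev_eq H (by rw [← he, ev_one])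
        exact (inv_mul_eq_one.mp this).symm
      · exact absurd hw1 (not_lt.mpr (hamin _ hlt))
    obtain ⟨m, rfl⟩ := key u
    obtain ⟨n, rfl⟩ := key v
    rw [← zpow_add, ← zpow_add, add_comm]
  · -- no least positive element
    push_neg at hmin
    by_contra hne
    -- reduce to the case ev (v*u) < ev (u*v)
    have main : ∀ u v : Γ, ev (v * u) < ev (u * v) → False := by
      clear hne u v
      intro u v hlt
      set c := (v * u)⁻¹ * (u * v) with hc
      have hc0 : 0 < ev c := by
        have := ap_strictMono H (v * u)⁻¹ hlt
        rw [← ev_mul, ← ev_mul, inv_mul_cancel] at this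
        rwa [ev_one] at this
      obtain ⟨b, hb0, hbc⟩ := hmin c hc0
      have hcb0 : 0 < ev (c * b⁻¹) := by
        have h1 := cmp_lt H (x := 0) hbc (ap b⁻¹ 0)
        rw [show ap b (ap b⁻¹ 0) = 0 from ap_ap_inv b 0] at h1
        exact h1
      set δ := if ev b ≤ ev (c * b⁻¹) then b else c * b⁻¹ with hδ
      have hδ0 : 0 < ev δ := by rw [hδ]; split <;> assumption
      have hδ1 : ev δ ≤ ev b := by
        rw [hδ]; split
        · exact le_rfl
        · exact (le_of_not_ge (by assumption))
      have hδ2 : ev δ ≤ ev (c * b⁻¹) := by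
        rw [hδ]; split
        · assumption
        · exact le_rfl
      have hδδ : ev (δ * δ) ≤ ev c := by
        have := mul_le' H hδ2 hδ1
        rwa [inv_mul_cancel_right] at this
      have hδup : ∀ x, x < ap δ x := up_of_ev_pos H hδ0
      obtain ⟨m, hm1, hm2⟩ := floor_lemma H δ hδup u
      obtain ⟨n, hn1, hn2⟩ := floor_lemma H δ hδup v
      have h1 : ev (u * v) < ev (δ ^ (m + 1) * δ ^ (n + 1)) := mul_lt' H hm2 hn2
      have h2 : ev (δ ^ n * δ ^ m) ≤ ev (v * u) := mul_le' H hn1 hm1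
      have h3 : ev ((v * u)⁻¹) ≤ ev ((δ ^ n * δ ^ m)⁻¹) := inv_le' H h2
      have h4 : ev c < ev ((δ ^ n * δ ^ m)⁻¹ * (δ ^ (m + 1) * δ ^ (n + 1))) :=
        mul_le_lt' H h3 h1
      have h5 : (δ ^ n * δ ^ m)⁻¹ * (δ ^ (m + 1) * δ ^ (n + 1)) = δ * δ := by
        rw [← zpow_add, ← zpow_add, ← zpow_neg, ← zpow_add]
        have : -(n + m) + (m + 1 + (n + 1)) = 2 := by ring
        rw [this, show (2:ℤ) = 1 + 1 from rfl, zpow_add, zpow_one]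
      rw [h5] at h4
      exact absurd hδδ (not_le.mpr h4)
    have hvu : ev (u * v) ≠ ev (v * u) := fun h => hne (eq_of_ev_eq H h)
    rcases hvu.lt_or_gt with h | h
    · exact main v u h
    · exact main u v h


variable (f : Γ)

def As (g : Γ) : Set ℝ := {x | ∃ (p : ℤ) (q : ℕ), 0 < q ∧ ev (f ^ p) ≤ ev (g ^ q) ∧ x = p / q}

def Bs (g : Γ) : Set ℝ := {x | ∃ (p : ℤ) (q : ℕ), 0 < q ∧ ev (g ^ q) < ev (f ^ p) ∧ x = p / q}

lemma pow_scale_le (H : Good Γ) {g : Γ} {p : ℤ} {q : ℕ} (h : ev (f ^ p) ≤ ev (g ^ q))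
    (q' : ℕ) : ev (f ^ (p * q')) ≤ ev (g ^ (q * q')) := by
  have := pow_le' H h q'
  rwa [← zpow_natCast (f ^ p) q', ← zpow_mul, ← pow_mul] at this

lemma pow_scale_lt (H : Good Γ) {g : Γ} {p : ℤ} {q : ℕ} (h : ev (g ^ q) < ev (f ^ p))
    {q' : ℕ} (hq' : 0 < q') : ev (g ^ (q * q')) < ev (f ^ (p * q')) := by
  have := pow_lt' H h hq'
  rwa [← zpow_natCast (f ^ p) q', ← zpow_mul, ← pow_mul] at this

lemma A_lt_B (H : Good Γ) (hf : ∀ x, x < ap f x) {g : Γ} {x y : ℝ}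
    (hx : x ∈ As f g) (hy : y ∈ Bs f g) : x < y := by
  obtain ⟨p, q, hq, hpq, rfl⟩ := hx
  obtain ⟨p', q', hq', hpq', rfl⟩ := hy
  have h1 : ev (f ^ (p * q')) ≤ ev (g ^ (q * q')) := pow_scale_le f H hpq q'
  have h2 : ev (g ^ (q' * q)) < ev (f ^ (p' * q)) := pow_scale_lt f H hpq' hq
  rw [Nat.mul_comm q' q] at h2
  have h3 : p * (q' : ℤ) < p' * q :=
    (zpow_strictMono H f hf).lt_iff_lt.mp (h1.trans_lt h2)
  rw [div_lt_div_iff₀ (by exact_mod_cast hq) (by exact_mod_cast hq')]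
  exact_mod_cast h3

lemma A_nonempty (H : Good Γ) (hf : ∀ x, x < ap f x) (g : Γ) : (As f g).Nonempty := by
  obtain ⟨m, h1, _⟩ := floor_lemma H f hf g
  exact ⟨(m : ℝ) / 1, m, 1, one_pos, by rwa [pow_one], by norm_num⟩

lemma B_nonempty (H : Good Γ) (hf : ∀ x, x < ap f x) (g : Γ) : (Bs f g).Nonempty := by
  obtain ⟨m, _, h2⟩ := floor_lemma H f hf g
  exact ⟨((m + 1 : ℤ) : ℝ) / 1, m + 1, 1, one_pos, by rwa [pow_one], by norm_num⟩

lemma A_bddAbove (H : Good Γ) (hf : ∀ x, x < ap f x) (g : Γ) : BddAbove (As f g) := by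
  obtain ⟨b, hb⟩ := B_nonempty f H hf g
  exact ⟨b, fun x hx => (A_lt_B f H hf hx hb).le⟩

lemma B_bddBelow (H : Good Γ) (hf : ∀ x, x < ap f x) (g : Γ) : BddBelow (Bs f g) := by
  obtain ⟨a, ha⟩ := A_nonempty f H hf g
  exact ⟨a, fun y hy => (A_lt_B f H hf ha hy).le⟩

def tau (g : Γ) : ℝ := sSup (As f g)

def tau' (g : Γ) : ℝ := sInf (Bs f g)

lemma tau_le_tau' (H : Good Γ) (hf : ∀ x, x < ap f x) (g : Γ) : tau f g ≤ tau' f g :=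
  csSup_le (A_nonempty f H hf g) fun x hx =>
    le_csInf (B_nonempty f H hf g) fun y hy => (A_lt_B f H hf hx hy).le

lemma tau'_le_tau (H : Good Γ) (hf : ∀ x, x < ap f x) (g : Γ) : tau' f g ≤ tau f g := by
  apply le_of_forall_pos_le_add
  intro ε hε
  obtain ⟨n, hn⟩ := exists_nat_one_div_lt hε
  set q : ℕ := n + 1 with hqdef
  obtain ⟨m, h1, h2⟩ := floor_lemma H f hf (g ^ q)
  have hA : ((m : ℝ) / q) ∈ As f g := ⟨m, q, n.succ_pos, h1, rfl⟩
  have hB : (((m + 1 : ℤ) : ℝ) / q) ∈ Bs f g := ⟨m + 1, q, n.succ_pos, h2, rfl⟩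
  have hq0 : ((q : ℝ)) = (n : ℝ) + 1 := by push_cast [hqdef]; ring
  calc tau' f g ≤ ((m + 1 : ℤ) : ℝ) / q := csInf_le (B_bddBelow f H hf g) hB
    _ = (m : ℝ) / q + 1 / q := by push_cast; ring
    _ ≤ tau f g + ε := by
        have hT : (m : ℝ) / q ≤ tau f g := le_csSup (A_bddAbove f H hf g) hA
        have h1q : 1 / (q:ℝ) < ε := by rw [hq0]; exact hn
        linarith

lemma tau_eq_tau' (H : Good Γ) (hf : ∀ x, x < ap f x) (g : Γ) : tau f g = tau' f g :=
  le_antisymm (tau_le_tau' f H hf g) (tau'_le_tau f H hf g)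

lemma addA (H : Good Γ) (comm : ∀ u v : Γ, u * v = v * u) {g h : Γ} {x y : ℝ}
    (hx : x ∈ As f g) (hy : y ∈ As f h) : x + y ∈ As f (g * h) := by
  obtain ⟨p, q, hq, hpq, rfl⟩ := hx
  obtain ⟨p', q', hq', hpq', rfl⟩ := hy
  refine ⟨p * q' + p' * q, q * q', Nat.mul_pos hq hq', ?_, ?_⟩
  · have h1 : ev (f ^ (p * q')) ≤ ev (g ^ (q * q')) := pow_scale_le f H hpq q'
    have h2 : ev (f ^ (p' * q)) ≤ ev (h ^ (q' * q)) := pow_scale_le f H hpq' q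
    rw [Nat.mul_comm q' q] at h2
    have h3 := mul_le' H h1 h2
    rwa [← zpow_add, ← Commute.mul_pow (a := g) (b := h) (comm g h) ] at h3
  · have hq0 : ((q : ℝ)) ≠ 0 := Nat.cast_ne_zero.mpr hq.ne'
    have hq'0 : ((q' : ℝ)) ≠ 0 := Nat.cast_ne_zero.mpr hq'.ne'
    push_cast
    field_simp
    try ring

lemma addB (H : Good Γ) (comm : ∀ u v : Γ, u * v = v * u) {g h : Γ} {x y : ℝ}
    (hx : x ∈ Bs f g) (hy : y ∈ Bs f h) : x + y ∈ Bs f (g * h) := by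
  obtain ⟨p, q, hq, hpq, rfl⟩ := hx
  obtain ⟨p', q', hq', hpq', rfl⟩ := hy
  refine ⟨p * q' + p' * q, q * q', Nat.mul_pos hq hq', ?_, ?_⟩
  · have h1 : ev (g ^ (q * q')) < ev (f ^ (p * q')) := pow_scale_lt f H hpq hq'
    have h2 : ev (h ^ (q' * q)) < ev (f ^ (p' * q)) := pow_scale_lt f H hpq' hq
    rw [Nat.mul_comm q' q] at h2
    have h3 := mul_lt' H h1 h2
    rwa [← zpow_add, ← Commute.mul_pow (a := g) (b := h) (comm g h)] at h3
  · have hq0 : ((q : ℝ)) ≠ 0 := Nat.cast_ne_zero.mpr hq.ne'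
    have hq'0 : ((q' : ℝ)) ≠ 0 := Nat.cast_ne_zero.mpr hq'.ne'
    push_cast
    field_simp
    try ring


lemma tau_superadd (H : Good Γ) (hf : ∀ x, x < ap f x) (comm : ∀ u v : Γ, u * v = v * u)
    (g h : Γ) : tau f g + tau f h ≤ tau f (g * h) := by
  have hbdd := A_bddAbove f H hf (g * h)
  have step : ∀ x ∈ As f g, x + tau f h ≤ tau f (g * h) := by
    intro x hx
    have h1 : ∀ y ∈ As f h, y ≤ tau f (g * h) - x := fun y hy => by
      have := le_csSup hbdd (addA f H comm hx hy)
      have e : sSup (As f (g * h)) = tau f (g * h) := rfl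
      linarith
    have h2 : tau f h ≤ tau f (g * h) - x := csSup_le (A_nonempty f H hf h) h1
    linarith
  have h3 : ∀ x ∈ As f g, x ≤ tau f (g * h) - tau f h := fun x hx => by
    have := step x hx; linarith
  have h4 : tau f g ≤ tau f (g * h) - tau f h := csSup_le (A_nonempty f H hf g) h3
  linarith

lemma tau'_subadd (H : Good Γ) (hf : ∀ x, x < ap f x) (comm : ∀ u v : Γ, u * v = v * u)
    (g h : Γ) : tau' f (g * h) ≤ tau' f g + tau' f h := by
  have hbdd := B_bddBelow f H hf (g * h)
  have step : ∀ x ∈ Bs f g, tau' f (g * h) ≤ x + tau' f h := by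
    intro x hx
    have h1 : ∀ y ∈ Bs f h, tau' f (g * h) - x ≤ y := fun y hy => by
      have := csInf_le hbdd (addB f H comm hx hy)
      have e : sInf (Bs f (g * h)) = tau' f (g * h) := rfl
      linarith
    have h2 : tau' f (g * h) - x ≤ tau' f h := le_csInf (B_nonempty f H hf h) h1
    linarith
  have h3 : ∀ x ∈ Bs f g, tau' f (g * h) - tau' f h ≤ x := fun x hx => by
    have := step x hx; linarith
  have h4 : tau' f (g * h) - tau' f h ≤ tau' f g := le_csInf (B_nonempty f H hf g) h3
  linarith

lemma tau_hom (H : Good Γ) (hf : ∀ x, x < ap f x) (comm : ∀ u v : Γ, u * v = v * u)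
    (g h : Γ) : tau f (g * h) = tau f g + tau f h := by
  refine le_antisymm ?_ (tau_superadd f H hf comm g h)
  rw [tau_eq_tau' f H hf (g * h), tau_eq_tau' f H hf g, tau_eq_tau' f H hf h]
  exact tau'_subadd f H hf comm g h

lemma tau_pos (H : Good Γ) (hf : ∀ x, x < ap f x) {g : Γ} (hg : ∀ x, x < ap g x) :
    0 < tau f g := by
  obtain ⟨n, hn⟩ := orbit_up H g hg 0 (ev f)
  have hn0 : n ≠ 0 := by
    rintro rfl
    rw [pow_zero] at hn
    exact absurd (hf 0) (not_lt.mpr (le_of_lt (show ev f < 0 by simpa [ap_one] using hn)))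
  have hmem : (1 : ℝ) / n ∈ As f g := by
    refine ⟨1, n, Nat.pos_of_ne_zero hn0, ?_, by norm_num⟩
    rw [zpow_one]
    exact hn.le
  have := le_csSup (A_bddAbove f H hf g) hmem
  have e : sSup (As f g) = tau f g := rfl
  have hpos : (0:ℝ) < 1 / n := by
    have : (0:ℝ) < n := by exact_mod_cast Nat.pos_of_ne_zero hn0
    positivity
  linarith

lemma tau_neg (H : Good Γ) (hf : ∀ x, x < ap f x) {g : Γ} (hg : ∀ x, ap g x < x) :
    tau f g < 0 := by
  have hfi : ap f⁻¹ 0 < 0 := by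
    have := hf (ap f⁻¹ 0); rwa [ap_ap_inv] at this
  obtain ⟨n, hn⟩ := orbit_down H g hg 0 (ap f⁻¹ 0)
  have hn0 : n ≠ 0 := by
    rintro rfl
    rw [pow_zero] at hn
    simp only [ap_one] at hn
    linarith
  have hmem : ((-1 : ℤ) : ℝ) / n ∈ Bs f g := by
    refine ⟨-1, n, Nat.pos_of_ne_zero hn0, ?_, rfl⟩
    rw [zpow_neg, zpow_one]
    exact hn
  rw [tau_eq_tau' f H hf g]
  have h1 := csInf_le (B_bddBelow f H hf g) hmem
  have e : sInf (Bs f g) = tau' f g := rfl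
  have hpos : (0:ℝ) < 1 / n := by
    have : (0:ℝ) < n := by exact_mod_cast Nat.pos_of_ne_zero hn0
    positivity
  have : ((-1 : ℤ) : ℝ) / n = -(1 / n) := by push_cast; ring
  rw [this] at h1
  linarith

end
end HolderAux

/-- **Hölder's theorem on the line.** A group of orientation-preserving
homeomorphisms of `ℝ` (strictly increasing continuous bijections) acting freely
on `ℝ` embeds into the additive group `(ℝ, +)`. -/
theorem holder_theorem_line (Γ : Subgroup (Equiv.Perm ℝ))
    (hmono : ∀ g ∈ Γ, StrictMono (g : ℝ → ℝ))
    (hcont : ∀ g ∈ Γ, Continuous (g : ℝ → ℝ))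
    (hfree : ∀ g ∈ Γ, g ≠ 1 → ∀ x : ℝ, g x ≠ x) :
    ∃ φ : Γ →* Multiplicative ℝ, Function.Injective φ := by
  classical
  have H : HolderAux.Good Γ := ⟨hmono, hcont, hfree⟩
  by_cases htriv : ∀ u : Γ, u = 1
  · exact ⟨1, fun a b _ => (htriv a).trans (htriv b).symm⟩
  push_neg at htriv
  obtain ⟨u, hu⟩ := htriv
  obtain ⟨f, hf⟩ : ∃ f : Γ, ∀ x, x < HolderAux.ap f x := by
    rcases HolderAux.sign_lemma H hu with h | h
    · refine ⟨u⁻¹, fun x => ?_⟩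
      have := h (HolderAux.ap u⁻¹ x)
      rwa [HolderAux.ap_ap_inv] at this
    · exact ⟨u, h⟩
  have comm : ∀ a b : Γ, a * b = b * a := HolderAux.comm_lemma H
  refine ⟨MonoidHom.mk' (fun g => Multiplicative.ofAdd (HolderAux.tau f g)) ?_, ?_⟩
  · intro a b
    show Multiplicative.ofAdd (HolderAux.tau f (a * b)) =
      Multiplicative.ofAdd (HolderAux.tau f a) * Multiplicative.ofAdd (HolderAux.tau f b)
    rw [HolderAux.tau_hom f H hf comm a b]
    rfl
  · rw [injective_iff_map_eq_one]
    intro a ha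
    have hτ : HolderAux.tau f a = 0 := by
      simpa using congrArg Multiplicative.toAdd ha
    by_contra ha1
    rcases HolderAux.sign_lemma H ha1 with h | h
    · exact absurd hτ (HolderAux.tau_neg f H hf h).ne
    · exact absurd hτ (HolderAux.tau_pos f H hf h).ne'
end

section
/- Hölder's theorem on the circle: Let Γ be a group (under composition) of orientation-preserving homeomorphisms of the circle ℝ/ℤ, where a homeomorphism g of ℝ/ℤ is called orientation-preserving if it admits a lift, i.e. a strictly increasing continuous map G : ℝ → ℝ with G(x+1) = G(x)+1 for all x and π ∘ G = g ∘ π, where π : ℝ → ℝ/ℤ is the quotient projection. Assume Γ acts freely on ℝ/ℤ, meaning every element of Γ other than the identity has no fixed point. Then Γ is isomorphic to a subgroup of the rotation group of the circle; equivalently, there exists an injective group homomorphism from Γ into the additive group ℝ/ℤ. -/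
open CircleDeg1Lift

namespace HolderCircleAux
local notation "τ" => translationNumber

lemma mul_le_left (C : CircleDeg1Lift) {A B : CircleDeg1Lift} (h : A ≤ B) : C*A ≤ C*B :=
  fun x => C.mono (h x)

lemma mul_le_right {A B : CircleDeg1Lift} (h : A ≤ B) (C : CircleDeg1Lift) : A*C ≤ B*C :=
  fun x => h (C x)

lemma L1 {F K : CircleDeg1Lift} (h : F*K ≤ K*F) : ∀ n : ℕ, F*K^n ≤ K^n*F := by
  intro n
  induction n with
  | zero => simp
  | succ n ih =>
      calc F*K^(n+1) = (F*K)*K^n := by rw [pow_succ', mul_assoc]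
        _ ≤ (K*F)*K^n := mul_le_right h _
        _ = K*(F*K^n) := by rw [mul_assoc]
        _ ≤ K*(K^n*F) := mul_le_left _ ih
        _ = K^(n+1)*F := by rw [pow_succ', mul_assoc]

lemma L2 {F K : CircleDeg1Lift} (h : F*K ≤ K*F) : ∀ n : ℕ, F^n*K ≤ K*F^n := by
  intro n
  induction n with
  | zero => simp
  | succ n ih =>
      calc F^(n+1)*K = F*(F^n*K) := by rw [pow_succ', mul_assoc]
        _ ≤ F*(K*F^n) := mul_le_left _ ih
        _ = (F*K)*F^n := by rw [mul_assoc]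
        _ ≤ (K*F)*F^n := mul_le_right h _
        _ = K*F^(n+1) := by rw [pow_succ', mul_assoc]

lemma L3 {F K : CircleDeg1Lift} (h : F*K ≤ K*F) : ∀ n : ℕ, (F*K)^n ≤ K^n*F^n := by
  intro n
  induction n with
  | zero => simp
  | succ n ih =>
      calc (F*K)^(n+1) = (F*K)*(F*K)^n := by rw [pow_succ', mul_assoc]
        _ ≤ (F*K)*(K^n*F^n) := mul_le_left _ ih
        _ = (F*K^(n+1))*F^n := by rw [pow_succ', mul_assoc, mul_assoc, mul_assoc]
        _ ≤ (K^(n+1)*F)*F^n := mul_le_right (L1 h _) _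
        _ = K^(n+1)*F^(n+1) := by rw [pow_succ' F, mul_assoc]

lemma L4 {F K : CircleDeg1Lift} (h : F*K ≤ K*F) : ∀ n : ℕ, F^n*K^n ≤ (K*F)^n := by
  intro n
  induction n with
  | zero => simp
  | succ n ih =>
      calc F^(n+1)*K^(n+1) = (F^(n+1)*K)*K^n := by rw [pow_succ' K, ← mul_assoc]
        _ ≤ (K*F^(n+1))*K^n := mul_le_right (L2 h _) _
        _ = K*(F^(n+1)*K^n) := by rw [mul_assoc]
        _ = K*(F*(F^n*K^n)) := by rw [pow_succ' F, mul_assoc]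
        _ ≤ K*(F*(K*F)^n) := mul_le_left _ (mul_le_left _ ih)
        _ = (K*F)^(n+1) := by rw [pow_succ' (K*F), mul_assoc]

lemma tau_le_map_zero_add_one (A : CircleDeg1Lift) : τ A ≤ A 0 + 1 := by
  have := A.dist_map_zero_translationNumber_le
  rw [Real.dist_eq, abs_le] at this
  linarith [this.1, this.2]

lemma map_zero_le_tau_add_one (A : CircleDeg1Lift) : A 0 ≤ τ A + 1 := by
  have := A.dist_map_zero_translationNumber_le
  rw [Real.dist_eq, abs_le] at this
  linarith [this.1, this.2]

lemma tau_mul_le (A B : CircleDeg1Lift) : τ (A*B) ≤ τ A + τ B + 4 := by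
  have h1 := tau_le_map_zero_add_one (A*B)
  have h2 : (A*B) 0 < A 0 + B 0 + 1 := A.map_map_zero_lt B
  have h3 := map_zero_le_tau_add_one A
  have h4 := map_zero_le_tau_add_one B
  linarith

lemma le_tau_mul (A B : CircleDeg1Lift) : τ A + τ B - 4 ≤ τ (A*B) := by
  have h1 := map_zero_le_tau_add_one (A*B)
  have h2 : A 0 + B 0 - 1 < (A*B) 0 := A.lt_map_map_zero B
  have h3 := tau_le_map_zero_add_one A
  have h4 := tau_le_map_zero_add_one B
  linarith

lemma nonpos_of_nat_mul_le {c : ℝ} (h : ∀ n : ℕ, (n:ℝ) * c ≤ 4) : c ≤ 0 := by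
  by_contra hc
  push_neg at hc
  obtain ⟨n, hn⟩ := exists_nat_gt (4 / c)
  have := h n
  have : (4:ℝ) / c < 4 / c := lt_of_lt_of_le (by calc (4:ℝ)/c < n := hn
    _ ≤ 4/c := (le_div_iff₀ hc).2 (h n)) le_rfl
  exact lt_irrefl _ this

lemma tau_mul_eq_of_le {F K : CircleDeg1Lift} (h : F*K ≤ K*F) : τ (F*K) = τ F + τ K := by
  have hconj : τ (K*F) = τ (F*K) := by
    have : SemiconjBy F (K*F) (F*K) := by
      unfold SemiconjBy; rw [mul_assoc]
    exact translationNumber_eq_of_semiconjBy this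
  have hub : ∀ n : ℕ, (n:ℝ) * (τ (F*K) - (τ F + τ K)) ≤ 4 := by
    intro n
    have h1 : τ ((F*K)^n) ≤ τ (K^n*F^n) := translationNumber_mono (L3 h n)
    have h2 : τ (K^n*F^n) ≤ τ (K^n) + τ (F^n) + 4 := tau_mul_le _ _
    rw [translationNumber_pow] at h1
    rw [translationNumber_pow, translationNumber_pow] at h2
    nlinarith [h1, h2]
  have hlb : ∀ n : ℕ, (n:ℝ) * ((τ F + τ K) - τ (F*K)) ≤ 4 := by
    intro n
    have h1 : τ (F^n*K^n) ≤ τ ((K*F)^n) := translationNumber_mono (L4 h n)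
    have h2 : τ (F^n) + τ (K^n) - 4 ≤ τ (F^n*K^n) := le_tau_mul _ _
    rw [translationNumber_pow, hconj] at h1
    rw [translationNumber_pow, translationNumber_pow] at h2
    nlinarith [h1, h2]
  have h1 := nonpos_of_nat_mul_le hub
  have h2 := nonpos_of_nat_mul_le hlb
  linarith


lemma const_of_int_valued {D : ℝ → ℝ} (hc : Continuous D) (hi : ∀ x, ∃ n : ℤ, D x = n)
    (x y : ℝ) : D x = D y := by
  have half : ∀ a b : ℝ, D a < D b → False := fun a b hab => by
    obtain ⟨na, hna⟩ := hi a
    obtain ⟨nb, hnb⟩ := hi b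
    have hlt : na < nb := by exact_mod_cast hna ▸ hnb ▸ hab
    have h1 : (na:ℝ) + 1 ≤ nb := by exact_mod_cast Int.add_one_le_of_lt hlt
    have hmem : D a + 1/2 ∈ Set.uIcc (D a) (D b) := by
      rw [Set.mem_uIcc]
      left
      constructor <;> [linarith; linarith [hna, hnb]]
    obtain ⟨z, _, hz⟩ := intermediate_value_uIcc (hc.continuousOn) hmem
    obtain ⟨nz, hnz⟩ := hi z
    have : ((nz - na : ℤ) : ℝ) = 1/2 := by push_cast; rw [← hnz, hz, hna]; ring
    have h2 : (0:ℝ) < ((nz - na : ℤ) : ℝ) := by rw [this]; norm_num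
    have h3 : (0:ℤ) < nz - na := by exact_mod_cast h2
    have h4 : (1:ℝ) ≤ ((nz - na : ℤ) : ℝ) := by exact_mod_cast h3
    linarith [this]
  rcases lt_trichotomy (D x) (D y) with h | h | h
  · exact absurd h (fun hh => half _ _ hh)
  · exact h
  · exact absurd h (fun hh => half _ _ hh)

lemma tau_eq_add_int {A B : CircleDeg1Lift} {n : ℤ} (h : ∀ x, A x = (n:ℝ) + B x) :
    τ A = n + τ B := by
  set T : CircleDeg1Lift := ((translate (Multiplicative.ofAdd (n:ℝ)) : CircleDeg1Liftˣ) : CircleDeg1Lift) with hT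
  have hTapp : ∀ y, T y = (n:ℝ) + y := fun y => translate_apply _ _
  have hA : A = T * B := by
    apply CircleDeg1Lift.ext
    intro x
    rw [CircleDeg1Lift.mul_apply, hTapp, h]
  have hcomm : Commute T B := by
    rw [commute_iff_commute]
    intro x
    show T (B x) = B (T x)
    rw [hTapp, hTapp, B.map_int_add]
  rw [hA, translationNumber_mul_of_commute hcomm]
  congr 1
  rw [hT]
  exact translationNumber_translate _

lemma tau_comm (A B : CircleDeg1Lift) : τ (A*B) = τ (B*A) := by
  have h : SemiconjBy A (B*A) (A*B) := by unfold SemiconjBy; rw [mul_assoc]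
  exact (translationNumber_eq_of_semiconjBy h).symm

end HolderCircleAux

open HolderCircleAux
local notation "τ" => CircleDeg1Lift.translationNumber

/-- **Hölder's theorem on the circle.** A group of orientation-preserving
homeomorphisms of the circle `ℝ/ℤ` (each admitting a strictly increasing
continuous lift `G : ℝ → ℝ` with `G (x+1) = G x + 1` projecting to it) acting
freely on the circle embeds into the rotation group, i.e. the additive group
`ℝ/ℤ`. -/
theorem holder_theorem_circle (Γ : Subgroup (Equiv.Perm (AddCircle (1 : ℝ))))
    (hlift : ∀ g ∈ Γ, ∃ G : ℝ → ℝ, StrictMono G ∧ Continuous G ∧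
      (∀ x : ℝ, G (x + 1) = G x + 1) ∧
      (∀ x : ℝ, ((G x : ℝ) : AddCircle (1 : ℝ)) = g ((x : ℝ) : AddCircle (1 : ℝ))))
    (hfree : ∀ g ∈ Γ, g ≠ 1 → ∀ x : AddCircle (1 : ℝ), g x ≠ x) :
    ∃ φ : Γ →* Multiplicative (AddCircle (1 : ℝ)), Function.Injective φ := by
  classical
  have hex : ∀ g : Γ, ∃ F : CircleDeg1Lift, Continuous ⇑F ∧
      ∀ x : ℝ, ((F x : ℝ) : AddCircle (1:ℝ)) =
        (g : Equiv.Perm (AddCircle (1:ℝ))) ((x:ℝ) : AddCircle (1:ℝ)) := by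
    intro g
    obtain ⟨G, hm, hc, ha, hp⟩ := hlift g g.2
    exact ⟨CircleDeg1Lift.mk ⟨G, hm.monotone⟩ ha, hc, hp⟩
  choose L hLc hLp using hex
  -- coercion facts
  have hcoe_int : ∀ n : ℤ, (((n:ℝ) : AddCircle (1:ℝ))) = 0 := by
    intro n
    rw [AddCircle.coe_eq_zero_iff]
    exact ⟨n, by simp⟩
  have hcoe_add : ∀ a b : ℝ, ((a + b : ℝ) : AddCircle (1:ℝ)) = (a : AddCircle (1:ℝ)) + b :=
    fun a b => rfl
  -- projection of products
  have hmulp : ∀ (f k : Γ) (x : ℝ), (((L f * L k) x : ℝ) : AddCircle (1:ℝ))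
      = ((f*k : Γ) : Equiv.Perm (AddCircle (1:ℝ))) ((x:ℝ) : AddCircle (1:ℝ)) := by
    intro f k x
    rw [CircleDeg1Lift.mul_apply, hLp f, hLp k]
    simp [Equiv.Perm.mul_apply]
  -- fixed point implies identity
  have hfix : ∀ (g : Γ) (p : AddCircle (1:ℝ)), (g : Equiv.Perm (AddCircle (1:ℝ))) p = p → g = 1 := by
    intro g p hp
    by_contra hg
    exact hfree g g.2 (fun h => hg (by exact_mod_cast h)) p hp
  -- two continuous lifts of the same map differ by an integer
  have hdiff : ∀ (A B : CircleDeg1Lift), Continuous ⇑A → Continuous ⇑B →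
      (∀ x : ℝ, ((A x : ℝ) : AddCircle (1:ℝ)) = ((B x : ℝ) : AddCircle (1:ℝ))) →
      ∃ n : ℤ, ∀ x, A x = (n:ℝ) + B x := by
    intro A B hA hB h
    have hint : ∀ x, ∃ n : ℤ, A x - B x = n := by
      intro x
      have h0 : ((A x - B x : ℝ) : AddCircle (1:ℝ)) = 0 := by
        rw [sub_eq_add_neg, hcoe_add]
        have : ((-(B x) : ℝ) : AddCircle (1:ℝ)) = -((B x : ℝ) : AddCircle (1:ℝ)) := rfl
        rw [this, h x, add_neg_cancel]
      rw [AddCircle.coe_eq_zero_iff] at h0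
      obtain ⟨m, hm⟩ := h0
      exact ⟨m, by simpa using hm.symm⟩
    obtain ⟨n, hn⟩ := hint 0
    refine ⟨n, fun x => ?_⟩
    have := const_of_int_valued (hA.sub hB) hint x 0
    simp only [Pi.sub_apply] at this
    linarith [this, hn]
  -- key: translation number is additive on chosen lifts
  have key : ∀ f k : Γ, τ (L f * L k) = τ (L f) + τ (L k) := by
    intro f k
    set c : ℝ → ℝ := fun x => (L f * L k) x - (L k * L f) x with hc
    have hcc : Continuous c := by
      have h1 : Continuous ⇑(L f * L k) := by
        rw [CircleDeg1Lift.coe_mul]; exact (hLc f).comp (hLc k)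
      have h2 : Continuous ⇑(L k * L f) := by
        rw [CircleDeg1Lift.coe_mul]; exact (hLc k).comp (hLc f)
      exact h1.sub h2
    by_cases hz : ∃ x, c x = 0
    · -- the two products agree somewhere; freeness forces f*k = k*f
      obtain ⟨x₀, hx₀⟩ := hz
      have heqpt : ((f*k : Γ) : Equiv.Perm (AddCircle (1:ℝ))) ((x₀:ℝ) : AddCircle (1:ℝ))
          = ((k*f : Γ) : Equiv.Perm (AddCircle (1:ℝ))) ((x₀:ℝ) : AddCircle (1:ℝ)) := by
        rw [← hmulp f k, ← hmulp k f]
        congr 1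
        have : (L f * L k) x₀ = (L k * L f) x₀ := by
          have := hx₀; simp only [hc] at this; linarith
        rw [this]
      have hcomm : f * k = k * f := by
        have hfixpt : ((((k*f)⁻¹ * (f*k) : Γ)) : Equiv.Perm (AddCircle (1:ℝ)))
            ((x₀:ℝ) : AddCircle (1:ℝ)) = ((x₀:ℝ) : AddCircle (1:ℝ)) := by
          rw [Subgroup.coe_mul, Equiv.Perm.mul_apply, heqpt, Subgroup.coe_inv]
          exact Equiv.symm_apply_apply _ _
        have := hfix _ _ hfixpt
        rw [inv_mul_eq_one] at this
        exact this.symm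
      -- hence the two lifts differ by an integer which must be 0
      obtain ⟨n, hn⟩ := hdiff (L f * L k) (L k * L f)
        (by rw [CircleDeg1Lift.coe_mul]; exact (hLc f).comp (hLc k))
        (by rw [CircleDeg1Lift.coe_mul]; exact (hLc k).comp (hLc f))
        (fun x => by rw [hmulp f k, hmulp k f, hcomm])
      have htau := tau_eq_add_int hn
      rw [tau_comm (L f) (L k)] at htau
      have hn0 : (n:ℝ) = 0 := by linarith
      exact tau_mul_eq_of_le (fun x => le_of_eq (by rw [hn x, hn0, zero_add]))
    · -- no crossing: one product dominates the other pointwise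
      push_neg at hz
      rcases (hz 0).lt_or_gt with h0 | h0
      · have hle : L f * L k ≤ L k * L f := by
          intro x
          by_contra hx
          push_neg at hx
          have hmem : (0:ℝ) ∈ Set.uIcc (c 0) (c x) := by
            rw [Set.mem_uIcc]
            left
            constructor
            · linarith
            · simp only [hc]; linarith
          obtain ⟨z, _, hz'⟩ := intermediate_value_uIcc (hcc.continuousOn) hmem
          exact hz z hz'
        exact tau_mul_eq_of_le hle
      · have hle : L k * L f ≤ L f * L k := by
          intro x
          by_contra hx
          push_neg at hx
          have hmem : (0:ℝ) ∈ Set.uIcc (c 0) (c x) := by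
            rw [Set.mem_uIcc]
            right
            constructor
            · simp only [hc]; linarith
            · linarith
          obtain ⟨z, _, hz'⟩ := intermediate_value_uIcc (hcc.continuousOn) hmem
          exact hz z hz'
        rw [tau_comm (L f) (L k), tau_mul_eq_of_le hle, add_comm]
  -- build the homomorphism
  refine ⟨MonoidHom.mk' (fun g => Multiplicative.ofAdd ((τ (L g) : ℝ) : AddCircle (1:ℝ))) ?_, ?_⟩
  · intro f k
    show Multiplicative.ofAdd ((τ (L (f*k)) : ℝ) : AddCircle (1:ℝ)) = _
    rw [← ofAdd_add]
    congr 1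
    obtain ⟨n, hn⟩ := hdiff (L (f*k)) (L f * L k) (hLc _)
      (by rw [CircleDeg1Lift.coe_mul]; exact (hLc f).comp (hLc k))
      (fun x => by rw [hLp (f*k) x, hmulp f k x])
    have htau := tau_eq_add_int hn
    rw [htau, key f k, hcoe_add, hcoe_add, hcoe_int, zero_add]
  · rw [injective_iff_map_eq_one]
    intro g hg
    have h0 : ((τ (L g) : ℝ) : AddCircle (1:ℝ)) = 0 := by
      simpa using hg
    rw [AddCircle.coe_eq_zero_iff] at h0
    obtain ⟨m, hm⟩ := h0
    have hm' : τ (L g) = (m:ℝ) := by simpa using hm.symm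
    obtain ⟨x, hx⟩ := (L g).exists_eq_add_translationNumber (hLc g)
    refine hfix g ((x:ℝ) : AddCircle (1:ℝ)) ?_
    rw [← hLp g x, hx, hm', hcoe_add, hcoe_int, add_zero]
end

section
/- Let Γ be a group (under composition) of orientation-preserving homeomorphisms of ℝ, i.e. of strictly increasing continuous bijections of ℝ, acting freely on ℝ (every non-identity element has no fixed point) and transitively on ℝ (for all x, y ∈ ℝ there exists g ∈ Γ with g(x) = y). Then Γ is topologically conjugate to the full group of translations of ℝ: there exists a homeomorphism ψ : ℝ → ℝ such that Γ = { ψ⁻¹ ∘ T_t ∘ ψ : t ∈ ℝ }, where T_t : ℝ → ℝ is the translation T_t(s) = s + t. -/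
open Filter Topology

namespace FTLAux

/-- Bundled setup: a group of orientation preserving homeos of `ℝ` acting freely
and transitively. -/
structure Setup where
  G : Subgroup (Equiv.Perm ℝ)
  hmono : ∀ g ∈ G, StrictMono (g : ℝ → ℝ)
  hcont : ∀ g ∈ G, Continuous (g : ℝ → ℝ)
  hfree : ∀ g ∈ G, g ≠ 1 → ∀ x : ℝ, g x ≠ x
  htrans : ∀ x y : ℝ, ∃ g ∈ G, g x = y

namespace Setup

variable (S : Setup)

/-- Evaluation at `0`. -/
def e (g : S.G) : ℝ := (g : Equiv.Perm ℝ) 0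

lemma e_one : S.e 1 = 0 := rfl

lemma e_mul (g h : S.G) : S.e (g * h) = (g : Equiv.Perm ℝ) (S.e h) := rfl

lemma mono (g : S.G) : StrictMono ((g : Equiv.Perm ℝ) : ℝ → ℝ) := S.hmono _ g.2

lemma cont (g : S.G) : Continuous ((g : Equiv.Perm ℝ) : ℝ → ℝ) := S.hcont _ g.2

/-- If an element of the group moves some point up, it moves every point up. -/
lemma sign (g : S.G) (x0 : ℝ) (h0 : x0 < (g : Equiv.Perm ℝ) x0) :
    ∀ x, x < (g : Equiv.Perm ℝ) x := by
  have hg1 : (g : Equiv.Perm ℝ) ≠ 1 := by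
    intro h1; rw [h1] at h0; exact absurd h0 (lt_irrefl x0)
  intro x
  rcases lt_trichotomy x ((g : Equiv.Perm ℝ) x) with h | h | h
  · exact h
  · exact absurd h.symm (S.hfree _ g.2 hg1 x)
  · exfalso
    -- IVT on `fun y => g y - y`
    have hc : ContinuousOn (fun y : ℝ => (g : Equiv.Perm ℝ) y - y) (Set.uIcc x x0) :=
      ((S.cont g).sub continuous_id).continuousOn
    have h01 : (0:ℝ) ∈ Set.uIcc ((fun y : ℝ => (g : Equiv.Perm ℝ) y - y) x)
        ((fun y : ℝ => (g : Equiv.Perm ℝ) y - y) x0) := by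
      simp only [Set.mem_uIcc]
      left
      constructor
      · linarith
      · linarith
    obtain ⟨c, -, hc0⟩ := intermediate_value_uIcc hc h01
    simp only at hc0
    exact S.hfree _ g.2 hg1 c (by linarith)

lemma e_injective : Function.Injective S.e := by
  intro g h hgh
  have key : ((g⁻¹ * h : S.G) : Equiv.Perm ℝ) 0 = 0 := by
    have hcoe : ((g⁻¹ * h : S.G) : Equiv.Perm ℝ) = (g : Equiv.Perm ℝ)⁻¹ * (h : Equiv.Perm ℝ) := rfl
    rw [hcoe, Equiv.Perm.mul_apply]
    have hh0 : (h : Equiv.Perm ℝ) 0 = (g : Equiv.Perm ℝ) 0 := hgh.symm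
    rw [hh0]
    exact Equiv.symm_apply_apply _ _
  have h1 : (g⁻¹ * h : S.G) = 1 := by
    by_contra hne
    have hne' : ((g⁻¹ * h : S.G) : Equiv.Perm ℝ) ≠ 1 := by
      simpa [Subtype.ext_iff] using hne
    exact S.hfree _ (g⁻¹ * h).2 hne' 0 key
  exact (inv_mul_eq_one.mp h1).symm ▸ rfl

lemma e_surjective : Function.Surjective S.e := by
  intro y
  obtain ⟨g, hg, hgy⟩ := S.htrans 0 y
  exact ⟨⟨g, hg⟩, hgy⟩

lemma e_bijective : Function.Bijective S.e := ⟨S.e_injective, S.e_surjective⟩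

/-- The inverse of evaluation: the unique group element sending `0` to `x`. -/
noncomputable def E (x : ℝ) : S.G := (Equiv.ofBijective S.e S.e_bijective).symm x

@[simp] lemma e_E (x : ℝ) : S.e (S.E x) = x :=
  (Equiv.ofBijective S.e S.e_bijective).apply_symm_apply x

@[simp] lemma E_e (g : S.G) : S.E (S.e g) = g :=
  (Equiv.ofBijective S.e S.e_bijective).symm_apply_apply g

/-- The transported group law on `ℝ`. -/
noncomputable def mu (x y : ℝ) : ℝ := ((S.E x : S.G) : Equiv.Perm ℝ) y

lemma mu_e (g : S.G) (y : ℝ) : S.mu (S.e g) y = (g : Equiv.Perm ℝ) y := by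
  rw [mu, E_e]

lemma e_mul' (g h : S.G) : S.e (g * h) = S.mu (S.e g) (S.e h) := by
  rw [mu_e]; rfl

@[simp] lemma mu_zero (x : ℝ) : S.mu x 0 = x := S.e_E x

@[simp] lemma zero_mu (y : ℝ) : S.mu 0 y = y := by
  have h : S.E 0 = 1 := by
    have : S.e 1 = 0 := rfl
    rw [← this, E_e]
  rw [mu, h]; rfl

lemma E_mul (x y : ℝ) : S.E (S.mu x y) = S.E x * S.E y := by
  apply S.e_injective
  rw [e_E, e_mul']
  rw [e_E, e_E]

lemma mu_assoc (x y z : ℝ) : S.mu (S.mu x y) z = S.mu x (S.mu y z) := by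
  have h1 : S.mu (S.mu x y) z = ((S.E x * S.E y : S.G) : Equiv.Perm ℝ) z := by
    rw [mu, E_mul]
  rw [h1]
  show ((S.E x : S.G) : Equiv.Perm ℝ) (((S.E y : S.G) : Equiv.Perm ℝ) z) = _
  rfl

lemma mu_strictMono_right (x : ℝ) : StrictMono (S.mu x) := S.mono (S.E x)

lemma mu_surjective_right (x : ℝ) : Function.Surjective (S.mu x) :=
  fun z => ⟨((S.E x : S.G) : Equiv.Perm ℝ).symm z, Equiv.apply_symm_apply _ z⟩

lemma mu_continuous_right (x : ℝ) : Continuous (S.mu x) := S.cont (S.E x)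

/-- Pointwise comparison from comparison at `0`. -/
lemma pointwise_lt {g h : S.G} (hgh : S.e g < S.e h) :
    ∀ x, (g : Equiv.Perm ℝ) x < (h : Equiv.Perm ℝ) x := by
  intro x
  set k : S.G := h * g⁻¹ with hk
  have hk0 : S.e g < (k : Equiv.Perm ℝ) (S.e g) := by
    have : (k : Equiv.Perm ℝ) (S.e g) = S.e h := by
      show ((h : Equiv.Perm ℝ) * (g : Equiv.Perm ℝ)⁻¹) ((g : Equiv.Perm ℝ) 0) = S.e h
      rw [Equiv.Perm.mul_apply, Equiv.Perm.inv_def, Equiv.symm_apply_apply]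
      rfl
    rw [this]; exact hgh
  have := S.sign k (S.e g) hk0 ((g : Equiv.Perm ℝ) x)
  calc (g : Equiv.Perm ℝ) x < (k : Equiv.Perm ℝ) ((g : Equiv.Perm ℝ) x) := this
    _ = (h : Equiv.Perm ℝ) x := by
        show ((h : Equiv.Perm ℝ) * (g : Equiv.Perm ℝ)⁻¹) ((g : Equiv.Perm ℝ) x) = _
        rw [Equiv.Perm.mul_apply, Equiv.Perm.inv_def, Equiv.symm_apply_apply]

lemma mu_strictMono_left (y : ℝ) : StrictMono (fun x => S.mu x y) := by
  intro x x' hxx'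
  have : S.e (S.E x) < S.e (S.E x') := by rw [e_E, e_E]; exact hxx'
  exact S.pointwise_lt this y

lemma mu_mono_left (y : ℝ) : Monotone (fun x => S.mu x y) :=
  (S.mu_strictMono_left y).monotone

lemma mu_surjective_left (y : ℝ) : Function.Surjective (fun x => S.mu x y) := by
  intro z
  obtain ⟨g, hg, hgz⟩ := S.htrans y z
  refine ⟨S.e ⟨g, hg⟩, ?_⟩
  show S.mu (S.e ⟨g, hg⟩) y = z
  rw [mu_e]; exact hgz

lemma mu_continuous_left (y : ℝ) : Continuous (fun x => S.mu x y) :=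
  (S.mu_mono_left y).continuous_of_surjective (S.mu_surjective_left y)

/-- The squaring map of the transported group law. -/
noncomputable def sqf (y : ℝ) : ℝ := S.mu y y

lemma sqf_strictMono : StrictMono S.sqf := by
  intro y y' h
  calc S.mu y y < S.mu y' y := S.mu_strictMono_left y h
    _ < S.mu y' y' := S.mu_strictMono_right y' h

lemma sqf_continuous : Continuous S.sqf := by
  rw [continuous_iff_continuousAt]
  intro y0
  rw [Metric.continuousAt_iff]
  intro ε hε
  -- choose δ₁ by continuity in the second variable
  have h2 := Metric.continuousAt_iff.mp ((S.mu_continuous_right y0).continuousAt (x := y0)) (ε/2) (by linarith)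
  obtain ⟨δ₁, hδ₁pos, hδ₁⟩ := h2
  set d := min δ₁ 1 with hd
  have hdpos : 0 < d := lt_min hδ₁pos one_pos
  have hdle : d ≤ δ₁ := min_le_left _ _
  -- continuity in the first variable at the two points y0 ± d/2
  have hu := Metric.continuousAt_iff.mp ((S.mu_continuous_left (y0 + d/2)).continuousAt (x := y0)) (ε/2) (by linarith)
  obtain ⟨δ₂, hδ₂pos, hδ₂⟩ := hu
  have hl := Metric.continuousAt_iff.mp ((S.mu_continuous_left (y0 - d/2)).continuousAt (x := y0)) (ε/2) (by linarith)
  obtain ⟨δ₃, hδ₃pos, hδ₃⟩ := hl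
  refine ⟨min (min δ₂ δ₃) (d/2), by positivity, ?_⟩
  intro y hy
  rw [Real.dist_eq] at hy
  have hy2 : |y - y0| < δ₂ := lt_of_lt_of_le hy (le_trans (min_le_left _ _) (min_le_left _ _))
  have hy3 : |y - y0| < δ₃ := lt_of_lt_of_le hy (le_trans (min_le_left _ _) (min_le_right _ _))
  have hyd : |y - y0| < d/2 := lt_of_lt_of_le hy (min_le_right _ _)
  have hup : S.mu y (y0 + d/2) < S.mu y0 (y0 + d/2) + ε/2 := by
    have := hδ₂ (show dist y y0 < δ₂ by rwa [Real.dist_eq])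
    rw [Real.dist_eq] at this
    have := abs_lt.mp this
    linarith [this.2]
  have hlo : S.mu y0 (y0 - d/2) - ε/2 < S.mu y (y0 - d/2) := by
    have := hδ₃ (show dist y y0 < δ₃ by rwa [Real.dist_eq])
    rw [Real.dist_eq] at this
    have := abs_lt.mp this
    linarith [this.1]
  have hub : S.mu y0 (y0 + d/2) < S.mu y0 y0 + ε/2 := by
    have := hδ₁ (show dist (y0 + d/2) y0 < δ₁ by
      rw [Real.dist_eq]; rw [abs_of_pos (by linarith : (0:ℝ) < y0 + d/2 - y0)]; linarith)
    rw [Real.dist_eq] at this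
    have := abs_lt.mp this
    linarith [this.2]
  have hlb : S.mu y0 y0 - ε/2 < S.mu y0 (y0 - d/2) := by
    have := hδ₁ (show dist (y0 - d/2) y0 < δ₁ by
      rw [Real.dist_eq]
      have : y0 - d/2 - y0 = -(d/2) := by ring
      rw [this, abs_neg, abs_of_pos (by linarith : (0:ℝ) < d/2)]; linarith)
    rw [Real.dist_eq] at this
    have := abs_lt.mp this
    linarith [this.1]
  have hmem := abs_lt.mp hyd
  have key1 : S.sqf y ≤ S.mu y (y0 + d/2) :=
    (S.mu_strictMono_right y).monotone (by linarith [hmem.2])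
  have key2 : S.mu y (y0 - d/2) ≤ S.sqf y :=
    (S.mu_strictMono_right y).monotone (by linarith [hmem.1])
  rw [Real.dist_eq, abs_lt]
  constructor
  · show -ε < S.sqf y - S.sqf y0
    have : S.sqf y0 = S.mu y0 y0 := rfl
    nlinarith [key2, hlo, hlb]
  · show S.sqf y - S.sqf y0 < ε
    have : S.sqf y0 = S.mu y0 y0 := rfl
    nlinarith [key1, hup, hub]

lemma sqf_surjective : Function.Surjective S.sqf := by
  apply Continuous.surjective S.sqf_continuous
  · apply tendsto_atTop_mono' _ _ tendsto_id
    filter_upwards [eventually_ge_atTop (0:ℝ)] with y hy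
    show y ≤ S.mu y y
    calc y = S.mu 0 y := (S.zero_mu y).symm
      _ ≤ S.mu y y := S.mu_mono_left y hy
  · apply tendsto_atBot_mono' _ _ tendsto_id
    filter_upwards [eventually_le_atBot (0:ℝ)] with y hy
    show S.mu y y ≤ y
    calc S.mu y y ≤ S.mu 0 y := S.mu_mono_left y hy
      _ = y := S.zero_mu y

/-- Every group element has a square root, positive when the element is positive. -/
lemma exists_sqrt (g : S.G) : ∃ h : S.G, h * h = g ∧ (0 < S.e g → 0 < S.e h) := by
  obtain ⟨y, hy⟩ := S.sqf_surjective (S.e g)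
  refine ⟨S.E y, ?_, ?_⟩
  · apply S.e_injective
    rw [e_mul', e_E]
    exact hy
  · intro hpos
    rw [e_E]
    by_contra hle
    push_neg at hle
    have hmm : S.mu y y ≤ y := by
      calc S.mu y y ≤ S.mu 0 y := S.mu_mono_left y hle
        _ = y := S.zero_mu y
    rw [show S.mu y y = S.sqf y from rfl, hy] at hmm
    linarith

/-- The element translating `0` to `1`. -/
noncomputable def a : S.G := S.E 1

lemma e_a : S.e S.a = 1 := S.e_E 1

/-- A choice of square root. -/
noncomputable def sqrtG (g : S.G) : S.G := (S.exists_sqrt g).choose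

lemma sqrtG_mul (g : S.G) : S.sqrtG g * S.sqrtG g = g := (S.exists_sqrt g).choose_spec.1

lemma sqrtG_pos (g : S.G) (h : 0 < S.e g) : 0 < S.e (S.sqrtG g) :=
  (S.exists_sqrt g).choose_spec.2 h

/-- Iterated square roots of `a`: `b n` corresponds to the dyadic `1 / 2 ^ n`. -/
noncomputable def b (n : ℕ) : S.G := (S.sqrtG)^[n] S.a

lemma b_zero : S.b 0 = S.a := rfl

lemma b_succ (n : ℕ) : S.b (n + 1) = S.sqrtG (S.b n) := Function.iterate_succ_apply' _ _ _

lemma b_sq (n : ℕ) : S.b (n + 1) * S.b (n + 1) = S.b n := by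
  rw [b_succ]; exact S.sqrtG_mul (S.b n)

lemma b_pos (n : ℕ) : 0 < S.e (S.b n) := by
  induction n with
  | zero => rw [b_zero, e_a]; norm_num
  | succ n ih => rw [b_succ]; exact S.sqrtG_pos _ ih

lemma pointwise_le {g h : S.G} (hgh : S.e g ≤ S.e h) :
    ∀ x, (g : Equiv.Perm ℝ) x ≤ (h : Equiv.Perm ℝ) x := by
  rcases eq_or_lt_of_le hgh with heq | hlt
  · have : g = h := S.e_injective heq
    subst this; intro x; exact le_refl _
  · intro x; exact le_of_lt (S.pointwise_lt hlt x)

lemma pos_pointwise {g : S.G} (hg : 0 < S.e g) : ∀ x, x < (g : Equiv.Perm ℝ) x := by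
  intro x
  have h := S.pointwise_lt (g := 1) (h := g) (by rw [e_one]; exact hg) x
  simpa using h

lemma pow_pointwise_le {g : S.G} (hg : 0 < S.e g) (n : ℕ) :
    ∀ x, x ≤ ((g ^ n : S.G) : Equiv.Perm ℝ) x := by
  induction n with
  | zero => intro x; simp
  | succ n ih =>
    intro x
    have h1 : ((g ^ (n+1) : S.G) : Equiv.Perm ℝ) x
        = ((g ^ n : S.G) : Equiv.Perm ℝ) ((g : Equiv.Perm ℝ) x) := by
      rw [pow_succ]
      rfl
    rw [h1]
    calc x ≤ (g : Equiv.Perm ℝ) x := le_of_lt (S.pos_pointwise hg x)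
      _ ≤ _ := ih _

lemma pow_pos_pointwise {g : S.G} (hg : 0 < S.e g) (n : ℕ) (hn : 1 ≤ n) :
    ∀ x, x < ((g ^ n : S.G) : Equiv.Perm ℝ) x := by
  intro x
  obtain ⟨m, rfl⟩ : ∃ m, n = m + 1 := ⟨n - 1, (Nat.succ_pred_eq_of_pos hn).symm⟩
  have h1 : ((g ^ (m+1) : S.G) : Equiv.Perm ℝ) x
      = ((g ^ m : S.G) : Equiv.Perm ℝ) ((g : Equiv.Perm ℝ) x) := by
    rw [pow_succ]; rfl
  rw [h1]
  calc x < (g : Equiv.Perm ℝ) x := S.pos_pointwise hg x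
    _ ≤ _ := S.pow_pointwise_le hg m _

lemma e_zpow_lt {g : S.G} (hg : 0 < S.e g) {j j' : ℤ} (h : j < j') :
    S.e (g ^ j) < S.e (g ^ j') := by
  have key : S.e (g ^ j') = ((g ^ (j' - j).toNat : S.G) : Equiv.Perm ℝ) (S.e (g ^ j)) := by
    rw [← e_mul]
    congr 1
    rw [← zpow_natCast g, Int.toNat_of_nonneg (by omega), ← zpow_add]
    congr 1
    omega
  rw [key]
  exact S.pow_pos_pointwise hg _ (by omega) _

lemma e_zpow_le {g : S.G} (hg : 0 < S.e g) {j j' : ℤ} (h : j ≤ j') :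
    S.e (g ^ j) ≤ S.e (g ^ j') := by
  rcases eq_or_lt_of_le h with rfl | hlt
  · exact le_refl _
  · exact le_of_lt (S.e_zpow_lt hg hlt)

lemma b_pow_collapse (m : ℕ) : ∀ (n : ℕ) (k : ℤ), (S.b (n + m)) ^ (k * 2 ^ m) = (S.b n) ^ k := by
  induction m with
  | zero => intro n k; simp
  | succ m ih =>
    intro n k
    have h1 : n + (m + 1) = (n + 1) + m := by omega
    have h2 : k * 2 ^ (m + 1) = (2 * k) * 2 ^ m := by ring
    rw [h1, h2, ih (n + 1) (2 * k)]
    rw [zpow_mul]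
    congr 1
    rw [zpow_two]
    exact S.b_sq n

/-- The dyadic rational `k / 2 ^ n`. -/
noncomputable def dv (n : ℕ) (k : ℤ) : ℝ := (k : ℝ) / 2 ^ n

lemma dv_le_iff {n n' : ℕ} {k k' : ℤ} :
    dv n k ≤ dv n' k' ↔ k * 2 ^ (max n n' - n) ≤ k' * 2 ^ (max n n' - n') := by
  set N := max n n' with hN
  have p1 : (2:ℝ) ^ (N - n) * 2 ^ n = 2 ^ N := by rw [← pow_add]; congr 1; omega
  have p2 : (2:ℝ) ^ (N - n') * 2 ^ n' = 2 ^ N := by rw [← pow_add]; congr 1; omega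
  rw [dv, dv, div_le_div_iff₀ (by positivity) (by positivity), ← Int.cast_le (R := ℝ)]
  push_cast
  constructor
  · intro h
    have hh := mul_le_mul_of_nonneg_right h
      (show (0:ℝ) ≤ 2 ^ (N - n) * 2 ^ (N - n') by positivity)
    have eL : (k:ℝ) * 2 ^ n' * (2 ^ (N - n) * 2 ^ (N - n')) = ((k:ℝ) * 2 ^ (N - n)) * 2 ^ N := by
      rw [← p2]; ring
    have eR : (k':ℝ) * 2 ^ n * (2 ^ (N - n) * 2 ^ (N - n')) = ((k':ℝ) * 2 ^ (N - n')) * 2 ^ N := by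
      rw [← p1]; ring
    rw [eL, eR] at hh
    exact le_of_mul_le_mul_right hh (by positivity)
  · intro h
    have hh := mul_le_mul_of_nonneg_right h (show (0:ℝ) ≤ 2 ^ n * 2 ^ n' by positivity)
    have eL : (k:ℝ) * 2 ^ (N - n) * (2 ^ n * 2 ^ n') = ((k:ℝ) * 2 ^ n') * 2 ^ N := by
      rw [← p1]; ring
    have eR : (k':ℝ) * 2 ^ (N - n') * (2 ^ n * 2 ^ n') = ((k':ℝ) * 2 ^ n) * 2 ^ N := by
      rw [← p2]; ring
    rw [eL, eR] at hh
    exact le_of_mul_le_mul_right hh (by positivity)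

lemma dv_lt_iff {n n' : ℕ} {k k' : ℤ} :
    dv n k < dv n' k' ↔ k * 2 ^ (max n n' - n) < k' * 2 ^ (max n n' - n') := by
  rw [← not_le, ← not_le]
  apply not_congr
  rw [dv_le_iff, max_comm n' n]

lemma e_dyadic_le {n n' : ℕ} {k k' : ℤ} (h : dv n k ≤ dv n' k') :
    S.e ((S.b n) ^ k) ≤ S.e ((S.b n') ^ k') := by
  set N := max n n' with hN
  have c1 : (S.b (n + (N - n))) ^ (k * 2 ^ (N - n)) = (S.b n) ^ k := S.b_pow_collapse _ n k
  have c2 : (S.b (n' + (N - n'))) ^ (k' * 2 ^ (N - n')) = (S.b n') ^ k' := S.b_pow_collapse _ n' k'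
  rw [show n + (N - n) = N by omega] at c1
  rw [show n' + (N - n') = N by omega] at c2
  rw [← c1, ← c2]
  exact S.e_zpow_le (S.b_pos N) (dv_le_iff.mp h)

lemma e_dyadic_lt {n n' : ℕ} {k k' : ℤ} (h : dv n k < dv n' k') :
    S.e ((S.b n) ^ k) < S.e ((S.b n') ^ k') := by
  set N := max n n' with hN
  have c1 : (S.b (n + (N - n))) ^ (k * 2 ^ (N - n)) = (S.b n) ^ k := S.b_pow_collapse _ n k
  have c2 : (S.b (n' + (N - n'))) ^ (k' * 2 ^ (N - n')) = (S.b n') ^ k' := S.b_pow_collapse _ n' k'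
  rw [show n + (N - n) = N by omega] at c1
  rw [show n' + (N - n') = N by omega] at c2
  rw [← c1, ← c2]
  exact S.e_zpow_lt (S.b_pos N) (dv_lt_iff.mp h)

/-- Approximating set of dyadic group elements below `t`. -/
def SS (t : ℝ) : Set ℝ := {x | ∃ n : ℕ, ∃ k : ℤ, dv n k ≤ t ∧ x = S.e ((S.b n) ^ k)}

/-- The conjugating map: `Fr t` is the group element corresponding to translation by `t`. -/
noncomputable def Fr (t : ℝ) : ℝ := sSup (S.SS t)

lemma mem_SS {t : ℝ} {n : ℕ} {k : ℤ} (h : dv n k ≤ t) : S.e ((S.b n) ^ k) ∈ S.SS t :=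
  ⟨n, k, h, rfl⟩

lemma dv_zero_eq (k : ℤ) : dv 0 k = (k : ℝ) := by simp [dv]

lemma SS_nonempty (t : ℝ) : (S.SS t).Nonempty :=
  ⟨S.e ((S.b 0) ^ (⌊t⌋ : ℤ)), S.mem_SS (by rw [dv_zero_eq]; exact Int.floor_le t)⟩

lemma SS_bddAbove (t : ℝ) : BddAbove (S.SS t) := by
  refine ⟨S.e ((S.b 0) ^ (⌈t⌉ : ℤ)), ?_⟩
  rintro x ⟨n, k, hk, rfl⟩
  apply S.e_dyadic_le
  rw [dv_zero_eq]
  exact le_trans hk (Int.le_ceil t)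

lemma Fr_dyadic (n : ℕ) (k : ℤ) : S.Fr (dv n k) = S.e ((S.b n) ^ k) := by
  apply le_antisymm
  · apply csSup_le (S.SS_nonempty _)
    rintro x ⟨n', k', hk', rfl⟩
    exact S.e_dyadic_le hk'
  · exact le_csSup (S.SS_bddAbove _) (S.mem_SS (le_refl _))

lemma Fr_mono : Monotone S.Fr := by
  intro s t h
  apply csSup_le_csSup (S.SS_bddAbove t) (S.SS_nonempty s)
  rintro x ⟨n, k, hk, rfl⟩
  exact S.mem_SS (le_trans hk h)

lemma dv_pos (m : ℕ) : 0 < dv m 1 := by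
  rw [dv]; positivity

lemma exists_dyadic_btwn {x y : ℝ} (h : x < y) : ∃ n : ℕ, ∃ k : ℤ, x < dv n k ∧ dv n k < y := by
  obtain ⟨n, hn⟩ := pow_unbounded_of_one_lt ((y - x)⁻¹) (one_lt_two (α := ℝ))
  have hyx : (0:ℝ) < y - x := by linarith
  have h2n : (0:ℝ) < 2 ^ n := by positivity
  have hkey : 1 < (y - x) * 2 ^ n := by
    have h1 : (y - x) * (y - x)⁻¹ = 1 := mul_inv_cancel₀ (ne_of_gt hyx)
    nlinarith [mul_lt_mul_of_pos_left hn hyx]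
  refine ⟨n, ⌊x * 2 ^ n⌋ + 1, ?_, ?_⟩
  · rw [dv, lt_div_iff₀ h2n]
    push_cast
    exact Int.lt_floor_add_one _
  · rw [dv, div_lt_iff₀ h2n]
    push_cast
    have := Int.floor_le (x * 2 ^ n)
    nlinarith

lemma Fr_strictMono : StrictMono S.Fr := by
  intro s t h
  obtain ⟨n, k, hs, ht⟩ := exists_dyadic_btwn h
  obtain ⟨n', k', hd, ht'⟩ := exists_dyadic_btwn ht
  have h1 : S.Fr s ≤ S.e ((S.b n) ^ k) := by
    apply csSup_le (S.SS_nonempty s)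
    rintro x ⟨n₀, k₀, hk₀, rfl⟩
    exact S.e_dyadic_le (le_of_lt (lt_of_le_of_lt hk₀ hs))
  have h2 : S.e ((S.b n) ^ k) < S.e ((S.b n') ^ k') := S.e_dyadic_lt hd
  have h3 : S.e ((S.b n') ^ k') ≤ S.Fr t :=
    le_csSup (S.SS_bddAbove t) (S.mem_SS (le_of_lt ht'))
  linarith

lemma e_b_tendsto : Filter.Tendsto (fun n => S.e (S.b n)) Filter.atTop (𝓝 0) := by
  have hanti : Antitone (fun n => S.e (S.b n)) := by
    apply antitone_nat_of_succ_le
    intro n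
    have h1 : S.b (n+1) = (S.b (n+1)) ^ (1:ℤ) := (zpow_one _).symm
    have h2 : S.b n = (S.b n) ^ (1:ℤ) := (zpow_one _).symm
    rw [h1, h2]
    apply S.e_dyadic_le
    rw [dv, dv]
    apply div_le_div_of_nonneg_left (by norm_num) (by positivity)
    exact pow_le_pow_right₀ (by norm_num) (Nat.le_succ n)
  have hbdd : BddBelow (Set.range fun n => S.e (S.b n)) := by
    refine ⟨0, ?_⟩
    rintro x ⟨n, rfl⟩
    exact le_of_lt (S.b_pos n)
  have htend := tendsto_atTop_ciInf hanti hbdd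
  set L := ⨅ n, S.e (S.b n) with hL
  have hshift : Filter.Tendsto (fun n => S.e (S.b (n + 1))) Filter.atTop (𝓝 L) :=
    htend.comp (Filter.tendsto_add_atTop_nat 1)
  have hrel : ∀ n, S.e (S.b n) = S.sqf (S.e (S.b (n + 1))) := by
    intro n
    rw [← S.b_sq n, e_mul', sqf]
  have h2 : Filter.Tendsto (fun n => S.e (S.b n)) Filter.atTop (𝓝 (S.sqf L)) := by
    have := (S.sqf_continuous.tendsto L).comp hshift
    simp only [Function.comp_def] at this
    convert this using 1
    funext n
    exact hrel n
  have hfix : S.sqf L = L := tendsto_nhds_unique h2 htend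
  have hL0 : L = 0 := by
    have : S.mu L L = S.mu L 0 := by rw [S.mu_zero]; exact hfix
    exact (S.mu_strictMono_right L).injective this
  rw [← hL0]
  exact htend

lemma a_ne_one : S.a ≠ 1 := by
  intro h
  have : S.e S.a = S.e 1 := by rw [h]
  rw [e_a, e_one] at this
  norm_num at this

lemma exists_pow_gt (z : ℝ) : ∃ j : ℕ, z < S.e (S.a ^ (j : ℤ)) := by
  by_contra hcon
  push_neg at hcon
  have hmonoseq : Monotone (fun j : ℕ => S.e (S.a ^ (j : ℤ))) := by
    intro i j hij
    apply S.e_zpow_le (by rw [e_a]; norm_num)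
    exact_mod_cast hij
  have hbdd : BddAbove (Set.range fun j : ℕ => S.e (S.a ^ (j : ℤ))) := by
    refine ⟨z, ?_⟩; rintro x ⟨j, rfl⟩; exact hcon j
  have htend := tendsto_atTop_ciSup hmonoseq hbdd
  set sL := ⨆ j : ℕ, S.e (S.a ^ (j : ℤ)) with hsL
  have hshift : Filter.Tendsto (fun j : ℕ => S.e (S.a ^ ((j + 1 : ℕ) : ℤ))) Filter.atTop (𝓝 sL) :=
    htend.comp (Filter.tendsto_add_atTop_nat 1)
  have hrel : ∀ j : ℕ, S.e (S.a ^ ((j + 1 : ℕ) : ℤ)) = (S.a : Equiv.Perm ℝ) (S.e (S.a ^ (j : ℤ))) := by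
    intro j
    rw [← e_mul]
    congr 1
    have hc : ((j + 1 : ℕ) : ℤ) = 1 + (j : ℤ) := by push_cast; ring
    rw [hc, zpow_one_add]
  have h2 : Filter.Tendsto (fun j : ℕ => S.e (S.a ^ ((j + 1 : ℕ) : ℤ))) Filter.atTop
      (𝓝 ((S.a : Equiv.Perm ℝ) sL)) := by
    have := ((S.cont S.a).tendsto sL).comp htend
    simp only [Function.comp_def] at this
    convert this using 1
    funext j
    exact hrel j
  have hfix : (S.a : Equiv.Perm ℝ) sL = sL := tendsto_nhds_unique h2 hshift
  exact S.hfree _ S.a.2 (by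
    intro h1
    exact S.a_ne_one (Subtype.ext h1)) sL hfix

lemma exists_pow_lt (z : ℝ) : ∃ j : ℕ, S.e (S.a ^ (-(j : ℤ))) < z := by
  by_contra hcon
  push_neg at hcon
  have hantiseq : Antitone (fun j : ℕ => S.e (S.a ^ (-(j : ℤ)))) := by
    intro i j hij
    apply S.e_zpow_le (by rw [e_a]; norm_num)
    omega
  have hbdd : BddBelow (Set.range fun j : ℕ => S.e (S.a ^ (-(j : ℤ)))) := by
    refine ⟨z, ?_⟩; rintro x ⟨j, rfl⟩; exact hcon j
  have htend := tendsto_atTop_ciInf hantiseq hbdd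
  set sL := ⨅ j : ℕ, S.e (S.a ^ (-(j : ℤ))) with hsL
  have hshift : Filter.Tendsto (fun j : ℕ => S.e (S.a ^ (-((j + 1 : ℕ) : ℤ)))) Filter.atTop (𝓝 sL) :=
    htend.comp (Filter.tendsto_add_atTop_nat 1)
  have hrel : ∀ j : ℕ, S.e (S.a ^ (-((j + 1 : ℕ) : ℤ)))
      = ((S.a⁻¹ : S.G) : Equiv.Perm ℝ) (S.e (S.a ^ (-(j : ℤ)))) := by
    intro j
    rw [← e_mul]
    congr 1
    have hc : (-((j + 1 : ℕ) : ℤ)) = -1 + -(j : ℤ) := by push_cast; ring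
    rw [hc, zpow_add, zpow_neg_one]
  have h2 : Filter.Tendsto (fun j : ℕ => S.e (S.a ^ (-((j + 1 : ℕ) : ℤ)))) Filter.atTop
      (𝓝 (((S.a⁻¹ : S.G) : Equiv.Perm ℝ) sL)) := by
    have := ((S.cont S.a⁻¹).tendsto sL).comp htend
    simp only [Function.comp_def] at this
    convert this using 1
    funext j
    exact hrel j
  have hfix : ((S.a⁻¹ : S.G) : Equiv.Perm ℝ) sL = sL := tendsto_nhds_unique h2 hshift
  refine S.hfree _ (S.a⁻¹).2 ?_ sL hfix
  intro h1
  have : (S.a⁻¹ : S.G) = 1 := Subtype.ext h1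
  exact S.a_ne_one (by rwa [inv_eq_one] at this)

lemma dv_collapse {n N : ℕ} (h : n ≤ N) (k : ℤ) : dv N (k * 2 ^ (N - n)) = dv n k := by
  rw [dv, dv]
  push_cast
  rw [div_eq_div_iff (by positivity) (by positivity)]
  rw [mul_assoc, ← pow_add, show N - n + n = N by omega]

lemma b_collapse' {n N : ℕ} (h : n ≤ N) (k : ℤ) :
    (S.b n) ^ k = (S.b N) ^ (k * 2 ^ (N - n)) := by
  have hcol := S.b_pow_collapse (N - n) n k
  rw [show n + (N - n) = N by omega] at hcol
  exact hcol.symm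

lemma Fr_add (s t : ℝ) : S.Fr (s + t) = S.mu (S.Fr s) (S.Fr t) := by
  apply le_antisymm
  · apply csSup_le (S.SS_nonempty _)
    rintro x ⟨n, k, hk, rfl⟩
    have hlim : Filter.Tendsto (fun m : ℕ => S.mu (S.e (S.b m)) (S.mu (S.Fr s) (S.Fr t)))
        Filter.atTop (𝓝 (S.mu (S.Fr s) (S.Fr t))) := by
      have hc : Continuous (fun x => S.mu x (S.mu (S.Fr s) (S.Fr t))) := S.mu_continuous_left _
      have h0 := (hc.tendsto 0).comp S.e_b_tendsto
      simp only [Function.comp_def] at h0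
      rwa [S.zero_mu] at h0
    apply ge_of_tendsto hlim
    apply Filter.Eventually.of_forall
    intro m
    have hlt : dv n k - dv m 1 - t < s := by
      have h1 := dv_pos m; linarith
    obtain ⟨n₂, k₂, hd1, hd2⟩ := exists_dyadic_btwn hlt
    set N := max (max n m) n₂ with hN
    have hnN : n ≤ N := le_trans (le_max_left _ _) (le_max_left _ _)
    have hmN : m ≤ N := le_trans (le_max_right _ _) (le_max_left _ _)
    have hn₂N : n₂ ≤ N := le_max_right _ _
    have hbK : (S.b n) ^ k = (S.b N) ^ (k * 2 ^ (N - n)) := S.b_collapse' hnN k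
    have hbKM : (S.b m : S.G) = (S.b N) ^ ((2 : ℤ) ^ (N - m)) := by
      have h5 := S.b_collapse' hmN 1
      rwa [zpow_one, one_mul] at h5
    have hbK₂ : (S.b n₂) ^ k₂ = (S.b N) ^ (k₂ * 2 ^ (N - n₂)) := S.b_collapse' hn₂N k₂
    have hsplit : (S.b n) ^ k = S.b m * ((S.b n₂) ^ k₂
        * (S.b N) ^ (k * 2 ^ (N - n) - 2 ^ (N - m) - k₂ * 2 ^ (N - n₂))) := by
      rw [hbK, hbKM, hbK₂, ← zpow_add, ← zpow_add]
      congr 1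
      ring
    have hdv₃ : dv N (k * 2 ^ (N - n) - 2 ^ (N - m) - k₂ * 2 ^ (N - n₂)) ≤ t := by
      have e4 : dv N (k * 2 ^ (N - n) - 2 ^ (N - m) - k₂ * 2 ^ (N - n₂))
          = dv N (k * 2 ^ (N - n)) - dv N (2 ^ (N - m)) - dv N (k₂ * 2 ^ (N - n₂)) := by
        rw [dv, dv, dv, dv]; push_cast; ring
      have e1 : dv N (k * 2 ^ (N - n)) = dv n k := dv_collapse hnN k
      have e2 : dv N ((2:ℤ) ^ (N - m)) = dv m 1 := by
        have h6 := dv_collapse hmN 1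
        rwa [one_mul] at h6
      have e3 : dv N (k₂ * 2 ^ (N - n₂)) = dv n₂ k₂ := dv_collapse hn₂N k₂
      rw [e4, e1, e2, e3]
      linarith
    have hmem₂ : S.e ((S.b n₂) ^ k₂) ≤ S.Fr s :=
      le_csSup (S.SS_bddAbove s) (S.mem_SS (le_of_lt hd2))
    have hmem₃ : S.e ((S.b N) ^ (k * 2 ^ (N - n) - 2 ^ (N - m) - k₂ * 2 ^ (N - n₂))) ≤ S.Fr t :=
      le_csSup (S.SS_bddAbove t) (S.mem_SS hdv₃)
    rw [hsplit, e_mul', e_mul']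
    apply (S.mu_strictMono_right _).monotone
    calc S.mu (S.e ((S.b n₂) ^ k₂)) (S.e ((S.b N) ^ _))
        ≤ S.mu (S.e ((S.b n₂) ^ k₂)) (S.Fr t) := (S.mu_strictMono_right _).monotone hmem₃
      _ ≤ S.mu (S.Fr s) (S.Fr t) := S.mu_mono_left _ hmem₂
  · have h1 : S.mu (S.Fr s) (S.Fr t) = sSup ((fun y => S.mu (S.Fr s) y) '' S.SS t) :=
      Monotone.map_csSup_of_continuousAt ((S.mu_continuous_right _).continuousAt)
        (S.mu_strictMono_right _).monotone (S.SS_nonempty t) (S.SS_bddAbove t)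
    rw [h1]
    apply csSup_le ((S.SS_nonempty t).image _)
    rintro x ⟨y, ⟨n', k', hk', rfl⟩, rfl⟩
    have h2 : S.mu (S.Fr s) (S.e ((S.b n') ^ k'))
        = sSup ((fun x => S.mu x (S.e ((S.b n') ^ k'))) '' S.SS s) :=
      Monotone.map_csSup_of_continuousAt ((S.mu_continuous_left _).continuousAt)
        (S.mu_mono_left _) (S.SS_nonempty s) (S.SS_bddAbove s)
    show S.mu (S.Fr s) (S.e ((S.b n') ^ k')) ≤ S.Fr (s + t)
    rw [h2]
    apply csSup_le ((S.SS_nonempty s).image _)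
    rintro x ⟨y, ⟨n, k, hk, rfl⟩, rfl⟩
    show S.mu (S.e ((S.b n) ^ k)) (S.e ((S.b n') ^ k')) ≤ S.Fr (s + t)
    rw [← e_mul']
    set N := max n n' with hN
    have hnN : n ≤ N := le_max_left _ _
    have hn'N : n' ≤ N := le_max_right _ _
    have h3 : (S.b n) ^ k * (S.b n') ^ k'
        = (S.b N) ^ (k * 2 ^ (N - n) + k' * 2 ^ (N - n')) := by
      rw [S.b_collapse' hnN k, S.b_collapse' hn'N k', ← zpow_add]
    rw [h3]
    apply le_csSup (S.SS_bddAbove _)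
    apply S.mem_SS
    have e5 : dv N (k * 2 ^ (N - n) + k' * 2 ^ (N - n'))
        = dv N (k * 2 ^ (N - n)) + dv N (k' * 2 ^ (N - n')) := by
      rw [dv, dv, dv]; push_cast; ring
    rw [e5, dv_collapse hnN k, dv_collapse hn'N k']
    exact add_le_add hk hk'

lemma Fr_one_over (m : ℕ) : S.Fr (dv m 1) = S.e (S.b m) := by
  rw [S.Fr_dyadic m 1, zpow_one]

lemma mu_b_tendsto (X : ℝ) :
    Filter.Tendsto (fun m : ℕ => S.mu (S.e (S.b m)) X) Filter.atTop (𝓝 X) := by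
  have hc : Continuous (fun x => S.mu x X) := S.mu_continuous_left _
  have h0 := (hc.tendsto 0).comp S.e_b_tendsto
  simp only [Function.comp_def] at h0
  rwa [S.zero_mu] at h0

lemma Fr_surjective : Function.Surjective S.Fr := by
  intro z
  set A := {u : ℝ | S.Fr u ≤ z} with hA
  have hAne : A.Nonempty := by
    obtain ⟨j, hj⟩ := S.exists_pow_lt z
    refine ⟨dv 0 (-(j:ℤ)), ?_⟩
    show S.Fr (dv 0 (-(j:ℤ))) ≤ z
    rw [S.Fr_dyadic, b_zero]
    exact le_of_lt hj
  have hAbdd : BddAbove A := by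
    obtain ⟨j, hj⟩ := S.exists_pow_gt z
    refine ⟨dv 0 (j:ℤ), ?_⟩
    intro u hu
    by_contra hgt
    push_neg at hgt
    have h1 : S.Fr (dv 0 (j:ℤ)) ≤ S.Fr u := S.Fr_mono (le_of_lt hgt)
    rw [S.Fr_dyadic, b_zero] at h1
    have h2 : S.Fr u ≤ z := hu
    linarith
  set t := sSup A with ht
  refine ⟨t, le_antisymm ?_ ?_⟩
  · -- Fr t ≤ z
    have key : ∀ m : ℕ, S.Fr t ≤ S.mu (S.e (S.b m)) z := by
      intro m
      obtain ⟨u, huA, hu⟩ := exists_lt_of_lt_csSup hAne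
        (show t - dv m 1 < t by have := dv_pos m; linarith)
      have hut : u ≤ t := le_csSup hAbdd huA
      have hsplit : t = (t - u) + u := by ring
      have h1 : S.Fr t = S.mu (S.Fr (t - u)) (S.Fr u) := by
        conv_lhs => rw [hsplit]
        exact S.Fr_add _ _
      rw [h1]
      calc S.mu (S.Fr (t - u)) (S.Fr u) ≤ S.mu (S.Fr (t - u)) z :=
            (S.mu_strictMono_right _).monotone huA
        _ ≤ S.mu (S.e (S.b m)) z := by
            apply S.mu_mono_left
            have h2 : S.Fr (t - u) ≤ S.Fr (dv m 1) := S.Fr_mono (by linarith)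
            rwa [S.Fr_one_over] at h2
    exact ge_of_tendsto (S.mu_b_tendsto z) (Filter.Eventually.of_forall key)
  · -- z ≤ Fr t
    by_contra hcon
    push_neg at hcon
    obtain ⟨m, hm⟩ := ((S.mu_b_tendsto (S.Fr t)).eventually_lt_const hcon).exists
    have h1 : S.Fr (dv m 1 + t) = S.mu (S.e (S.b m)) (S.Fr t) := by
      rw [S.Fr_add, S.Fr_one_over]
    have h2 : dv m 1 + t ∈ A := by
      show S.Fr (dv m 1 + t) ≤ z
      rw [h1]
      exact le_of_lt hm
    have h3 : dv m 1 + t ≤ t := le_csSup hAbdd h2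
    have := dv_pos m
    linarith

end Setup
end FTLAux

open FTLAux

/-- A group of orientation-preserving homeomorphisms of `ℝ` acting freely and
transitively on `ℝ` is topologically conjugate, by a single homeomorphism
`ψ : ℝ → ℝ`, to the full group of translations of `ℝ`. -/
theorem free_transitive_line_action_conjugate_to_translations
    (Γ : Subgroup (Equiv.Perm ℝ))
    (hmono : ∀ g ∈ Γ, StrictMono (g : ℝ → ℝ))
    (hcont : ∀ g ∈ Γ, Continuous (g : ℝ → ℝ))
    (hfree : ∀ g ∈ Γ, g ≠ 1 → ∀ x : ℝ, g x ≠ x)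
    (htrans : ∀ x y : ℝ, ∃ g ∈ Γ, g x = y) :
    ∃ ψ : Homeomorph ℝ ℝ, ∀ g : Equiv.Perm ℝ,
      g ∈ Γ ↔ ∃ t : ℝ, (g : ℝ → ℝ) = ψ.symm ∘ (fun s : ℝ => s + t) ∘ ψ := by
  set S : Setup := ⟨Γ, hmono, hcont, hfree, htrans⟩ with hS
  set Fo : ℝ ≃o ℝ := StrictMono.orderIsoOfSurjective S.Fr S.Fr_strictMono S.Fr_surjective
    with hFo
  refine ⟨Fo.symm.toHomeomorph, ?_⟩
  set ψ : Homeomorph ℝ ℝ := Fo.symm.toHomeomorph with hψ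
  have hψ_apply : ∀ x, ψ x = Fo.symm x := fun x => rfl
  have hψ_symm : ∀ x, ψ.symm x = S.Fr x := by
    intro x
    show (Fo.symm.toHomeomorph).symm x = S.Fr x
    have : (Fo.symm.toHomeomorph).symm x = Fo.symm.symm x := rfl
    rw [this, OrderIso.symm_symm]
    exact congrFun (StrictMono.coe_orderIsoOfSurjective _ _ _) x
  have hFo_apply : ∀ x, Fo x = S.Fr x :=
    fun x => congrFun (StrictMono.coe_orderIsoOfSurjective _ _ _) x
  intro g
  constructor
  · intro hg
    set gG : S.G := ⟨g, hg⟩ with hgG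
    refine ⟨Fo.symm (S.e gG), ?_⟩
    funext y
    show g y = ψ.symm (ψ y + Fo.symm (S.e gG))
    rw [hψ_symm, hψ_apply]
    have h2 : S.Fr (Fo.symm y) = y := by
      rw [← hFo_apply]; exact Fo.apply_symm_apply y
    have h3 : S.Fr (Fo.symm (S.e gG)) = S.e gG := by
      rw [← hFo_apply]; exact Fo.apply_symm_apply _
    rw [add_comm (Fo.symm y), S.Fr_add, h3, h2]
    exact (S.mu_e gG y).symm
  · rintro ⟨t, hfun⟩
    have hx : ∀ y, g y = ((S.E (S.Fr t) : S.G) : Equiv.Perm ℝ) y := by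
      intro y
      have h0 : g y = ψ.symm (ψ y + t) := congrFun hfun y
      rw [h0, hψ_symm, hψ_apply]
      have h1 : S.Fr (Fo.symm y + t) = S.Fr (t + Fo.symm y) := by rw [add_comm]
      rw [h1, S.Fr_add]
      have h2 : S.Fr (Fo.symm y) = y := by
        rw [← hFo_apply]; exact Fo.apply_symm_apply y
      rw [h2]
      rfl
    have hg : g = ((S.E (S.Fr t) : S.G) : Equiv.Perm ℝ) :=
      Equiv.coe_fn_injective (funext hx)
    rw [hg]
    exact (S.E (S.Fr t)).2
end

section
/- Let Γ be a group (under composition) of orientation-preserving homeomorphisms of the circle ℝ/ℤ (each admitting a strictly increasing continuous lift G : ℝ → ℝ with G(x+1) = G(x)+1 projecting to it), acting freely on ℝ/ℤ (every non-identity element has no fixed point) and transitively on ℝ/ℤ (for all x, y ∈ ℝ/ℤ there exists g ∈ Γ with g(x) = y). Then Γ is topologically conjugate to the full rotation group of the circle: there exists a homeomorphism ψ : ℝ/ℤ → ℝ/ℤ such that Γ = { ψ⁻¹ ∘ R_t ∘ ψ : t ∈ ℝ/ℤ }, where R_t : ℝ/ℤ → ℝ/ℤ is the rotation R_t(s) =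 s + t. -/
open Function Filter Topology Set

noncomputable section CircleConjAux

namespace CircleConjAux

abbrev S1 := AddCircle (1 : ℝ)

/-- `G` is an increasing continuous lift of the circle map `g`. -/
def IsLift (G : ℝ → ℝ) (g : Equiv.Perm S1) : Prop :=
  StrictMono G ∧ Continuous G ∧ (∀ x, G (x + 1) = G x + 1) ∧
    ∀ x : ℝ, ((G x : ℝ) : S1) = g ((x : ℝ) : S1)

section PerLemmas

variable {G H : ℝ → ℝ}

lemma per_int (hper : ∀ x, G (x + 1) = G x + 1) : ∀ (n : ℤ) (x : ℝ), G (x + n) = G x + n := by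
  intro n
  induction n using Int.induction_on with
  | zero => simp
  | succ k ih =>
      intro x
      have h1 : x + ((k : ℤ) + 1 : ℤ) = (x + (k:ℤ)) + 1 := by push_cast; ring
      rw [h1, hper, ih]; push_cast; ring
  | pred k ih =>
      intro x
      have h1 : x + (-(k:ℤ) - 1 : ℤ) + 1 = x + (-(k:ℤ) : ℤ) := by push_cast; ring
      have h2 := hper (x + (-(k:ℤ) - 1 : ℤ))
      rw [h1, ih] at h2
      push_cast at h2 ⊢
      linarith

lemma per_bound_up (hm : Monotone G) (hper : ∀ x, G (x + 1) = G x + 1) (x : ℝ) :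
    G x ≤ G 0 + x + 1 := by
  have h1 : x ≤ ((⌊x⌋ + 1 : ℤ) : ℝ) := by
    push_cast
    exact le_of_lt (Int.lt_floor_add_one x)
  calc G x ≤ G (0 + ((⌊x⌋ + 1 : ℤ) : ℝ)) := hm (by rw [zero_add]; exact h1)
    _ = G 0 + ((⌊x⌋ + 1 : ℤ) : ℝ) := per_int hper _ _
    _ ≤ G 0 + x + 1 := by
        have := Int.floor_le x
        push_cast
        linarith

lemma per_bound_down (hm : Monotone G) (hper : ∀ x, G (x + 1) = G x + 1) (x : ℝ) :
    G 0 + x - 1 ≤ G x := by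
  have h1 : ((⌊x⌋ : ℤ) : ℝ) ≤ x := Int.floor_le x
  have h2 : G (0 + ((⌊x⌋ : ℤ) : ℝ)) ≤ G x := hm (by rw [zero_add]; exact h1)
  rw [per_int hper] at h2
  have := Int.lt_floor_add_one x
  linarith

lemma iterate_per (hper : ∀ x, G (x + 1) = G x + 1) (n : ℕ) (x : ℝ) :
    G^[n] (x + 1) = G^[n] x + 1 := by
  induction n generalizing x with
  | zero => simp
  | succ k ih => rw [iterate_succ_apply, hper, iterate_succ_apply, ih]

lemma comp_per (hGper : ∀ x, G (x + 1) = G x + 1) (hHper : ∀ x, H (x + 1) = H x + 1) :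
    ∀ x, (G ∘ H) (x + 1) = (G ∘ H) x + 1 := by
  intro x
  simp only [Function.comp, hHper, hGper]

end PerLemmas

namespace IsLift

variable {G H : ℝ → ℝ} {g h : Equiv.Perm S1}

lemma mono (hG : IsLift G g) : StrictMono G := hG.1
lemma cont (hG : IsLift G g) : Continuous G := hG.2.1
lemma per (hG : IsLift G g) : ∀ x, G (x + 1) = G x + 1 := hG.2.2.1
lemma proj (hG : IsLift G g) : ∀ x : ℝ, ((G x : ℝ) : S1) = g ((x : ℝ) : S1) := hG.2.2.2

lemma id_lift : IsLift (fun x => x) 1 :=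
  ⟨strictMono_id, continuous_id, fun _ => rfl, fun _ => rfl⟩

lemma trans_lift : IsLift (fun x => x + 1) 1 := by
  refine ⟨fun a b hab => by simpa using hab, by continuity, fun x => rfl, fun x => ?_⟩
  have : ((x + 1 : ℝ) : S1) = (x : ℝ) := by
    rw [QuotientAddGroup.eq_iff_sub_mem]
    simp [AddSubgroup.mem_zmultiples_iff]
  simp [this]

lemma comp (hG : IsLift G g) (hH : IsLift H h) : IsLift (G ∘ H) (g * h) := by
  refine ⟨hG.mono.comp hH.mono, hG.cont.comp hH.cont, fun x => ?_, fun x => ?_⟩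
  · simp [Function.comp, hH.per, hG.per]
  · simp only [Function.comp]
    rw [hG.proj, hH.proj]
    rfl

lemma surj (hG : IsLift G g) : Function.Surjective G := by
  intro y
  obtain ⟨m, hm⟩ : ∃ m : ℤ, (m : ℝ) ≤ y - G 0 := ⟨⌊y - G 0⌋, Int.floor_le _⟩
  obtain ⟨M, hM⟩ : ∃ M : ℤ, y - G 0 ≤ (M : ℝ) := ⟨⌈y - G 0⌉, Int.le_ceil _⟩
  have hGm : G ((m : ℝ)) = G 0 + m := by have := per_int hG.per m 0; simpa using this
  have hGM : G ((M : ℝ)) = G 0 + M := by have := per_int hG.per M 0; simpa using this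
  have hmM : (m : ℝ) ≤ (M : ℝ) := by linarith
  have := intermediate_value_Icc hmM hG.cont.continuousOn (a := (m:ℝ)) (b := (M:ℝ))
  have hy : y ∈ Icc (G (m:ℝ)) (G (M:ℝ)) := by
    constructor <;> [rw [hGm]; rw [hGM]] <;> linarith
  obtain ⟨x, _, hx⟩ := this hy
  exact ⟨x, hx⟩

/-- The inverse function of a lift. -/
def inv (hG : IsLift G g) : ℝ → ℝ := (StrictMono.orderIsoOfSurjective G hG.mono hG.surj).symm

lemma inv_left (hG : IsLift G g) : ∀ x, hG.inv (G x) = x := fun x =>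
  (StrictMono.orderIsoOfSurjective G hG.mono hG.surj).symm_apply_apply x

lemma inv_right (hG : IsLift G g) : ∀ x, G (hG.inv x) = x := fun x =>
  StrictMono.orderIsoOfSurjective_self_symm_apply G hG.mono hG.surj x

lemma inv_lift (hG : IsLift G g) : IsLift hG.inv g⁻¹ := by
  refine ⟨?_, ?_, fun x => ?_, fun x => ?_⟩
  · exact (StrictMono.orderIsoOfSurjective G hG.mono hG.surj).symm.strictMono
  · exact (StrictMono.orderIsoOfSurjective G hG.mono hG.surj).symm.toHomeomorph.continuous
  · apply hG.mono.injective
    rw [hG.inv_right, hG.per, hG.inv_right]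
  · have h1 : ((x : ℝ) : S1) = g ((hG.inv x : ℝ) : S1) := by
      rw [← hG.proj, hG.inv_right]
    rw [h1]
    simp

end IsLift

section Pow

variable {G H : ℝ → ℝ}

lemma sub1 (hHm : Monotone H) (hc : ∀ x, H (G x) ≤ G (H x)) :
    ∀ (n : ℕ) (x : ℝ), H^[n] (G x) ≤ G (H^[n] x) := by
  intro n
  induction n with
  | zero => intro x; simp
  | succ k ih =>
      intro x
      calc H^[k+1] (G x) = H^[k] (H (G x)) := by rw [iterate_succ_apply]
        _ ≤ H^[k] (G (H x)) := (hHm.iterate k) (hc x)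
        _ ≤ G (H^[k] (H x)) := ih (H x)
        _ = G (H^[k+1] x) := by rw [iterate_succ_apply]

lemma sub2 (hGm : Monotone G) (hc : ∀ x, H (G x) ≤ G (H x)) :
    ∀ (n : ℕ) (x : ℝ), H (G^[n] x) ≤ G^[n] (H x) := by
  intro n
  induction n with
  | zero => intro x; simp
  | succ k ih =>
      intro x
      calc H (G^[k+1] x) = H (G^[k] (G x)) := by rw [iterate_succ_apply]
        _ ≤ G^[k] (H (G x)) := ih (G x)
        _ ≤ G^[k] (G (H x)) := (hGm.iterate k) (hc x)
        _ = G^[k+1] (H x) := by rw [iterate_succ_apply]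

lemma pow_up (hGm : Monotone G) (hHm : Monotone H) (hc : ∀ x, H (G x) ≤ G (H x)) :
    ∀ (n : ℕ) (x : ℝ), (G ∘ H)^[n] x ≤ G^[n] (H^[n] x) := by
  intro n
  induction n with
  | zero => intro x; simp
  | succ k ih =>
      intro x
      calc (G ∘ H)^[k+1] x = (G ∘ H)^[k] ((G ∘ H) x) := by rw [iterate_succ_apply]
        _ ≤ G^[k] (H^[k] (G (H x))) := ih _
        _ ≤ G^[k] (G (H^[k] (H x))) := (hGm.iterate k) (sub1 hHm hc k (H x))
        _ = G^[k+1] (H^[k+1] x) := by rw [iterate_succ_apply, iterate_succ_apply]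

lemma pow_down (hGm : Monotone G) (hHm : Monotone H) (hc : ∀ x, H (G x) ≤ G (H x)) :
    ∀ (n : ℕ) (x : ℝ), H^[n] (G^[n] x) ≤ (G ∘ H)^[n] x := by
  intro n
  induction n with
  | zero => intro x; simp
  | succ k ih =>
      intro x
      calc H^[k+1] (G^[k+1] x) = H^[k] (H (G^[k] (G x))) := by
            rw [iterate_succ_apply, iterate_succ_apply]
        _ ≤ H^[k] (G^[k] (H (G x))) := (hHm.iterate k) (sub2 hGm hc k (G x))
        _ ≤ (G ∘ H)^[k] (H (G x)) := ih _
        _ ≤ (G ∘ H)^[k] (G (H x)) := ((hGm.comp hHm).iterate k) (hc x)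
        _ = (G ∘ H)^[k+1] x := by rw [iterate_succ_apply]; rfl

end Pow

section Tau

variable {G H : ℝ → ℝ}

/-- `τ` is the translation number of `G`. -/
def TauSpec (G : ℝ → ℝ) (τ : ℝ) : Prop :=
  Tendsto (fun n : ℕ => G^[n] 0 / n) atTop (𝓝 τ)

lemma tauSpec_unique {τ₁ τ₂ : ℝ} (h1 : TauSpec G τ₁) (h2 : TauSpec G τ₂) : τ₁ = τ₂ :=
  tendsto_nhds_unique h1 h2

lemma tauSpec_congr {H : ℝ → ℝ} (hGH : ∀ x, G x = H x) {τ : ℝ} (h : TauSpec G τ) :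
    TauSpec H τ := by
  have : G = H := funext hGH
  rwa [this] at h

lemma tau_exists (hm : Monotone G) (hper : ∀ x, G (x + 1) = G x + 1) :
    ∃ τ : ℝ, TauSpec G τ := by
  set a : ℕ → ℝ := fun n => G^[n] 0 with ha
  have ha0 : a 0 = 0 := by simp [ha]
  have hsub : Subadditive (fun n => a n + 1) := by
    intro m n
    have h1 : a (m + n) = G^[m] (a n) := by
      simp only [ha]
      rw [← Function.iterate_add_apply]
    have h2 : G^[m] (a n) ≤ G^[m] 0 + a n + 1 :=
      per_bound_up (hm.iterate m) (iterate_per hper m) (a n)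
    simp only [h1]
    have : G^[m] 0 = a m := rfl
    linarith
  have hlow : ∀ n : ℕ, (n : ℝ) * (G 0 - 1) ≤ a n := by
    intro n
    induction n with
    | zero => simp [ha0]
    | succ k ih =>
        have h1 : a (k + 1) = G (a k) := by
          simp only [ha]; rw [iterate_succ_apply']
        have h2 : G 0 + a k - 1 ≤ G (a k) := per_bound_down hm hper (a k)
        push_cast
        rw [h1]
        nlinarith
  have hbdd : BddBelow (Set.range fun n : ℕ => (a n + 1) / n) := by
    refine ⟨min (G 0 - 1) 0, ?_⟩
    rintro x ⟨n, rfl⟩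
    rcases Nat.eq_zero_or_pos n with h | h
    · subst h; simp [ha0]
    · have hn : (0:ℝ) < n := by exact_mod_cast h
      have h1 : (n : ℝ) * (G 0 - 1) ≤ a n := hlow n
      have h2 : (G 0 - 1) ≤ (a n + 1) / n := by
        rw [le_div_iff₀ hn]
        nlinarith
      exact le_trans (min_le_left _ _) h2
  refine ⟨hsub.lim, ?_⟩
  have h := hsub.tendsto_lim hbdd
  have h2 : Tendsto (fun n : ℕ => (a n + 1) / n - 1 / n) atTop (𝓝 (hsub.lim - 0)) :=
    h.sub tendsto_one_div_atTop_nhds_zero_nat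
  rw [sub_zero] at h2
  apply h2.congr
  intro n
  rcases Nat.eq_zero_or_pos n with h | h
  · subst h; simp
  · have hn : (n:ℝ) ≠ 0 := by positivity
    field_simp
    simp [ha]

lemma tauSpec_id : TauSpec (fun x => x) 0 := by
  have : (fun x : ℝ => x) = id := rfl
  rw [TauSpec, this]
  simp only [Function.iterate_id, id_eq]
  simpa using tendsto_const_nhds (α := ℝ) (f := atTop (α := ℕ))

lemma tauSpec_trans : TauSpec (fun x : ℝ => x + 1) 1 := by
  have hiter : ∀ n : ℕ, (fun x : ℝ => x + 1)^[n] 0 = n := by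
    intro n
    induction n with
    | zero => simp
    | succ k ih => rw [iterate_succ_apply', ih]; push_cast; ring
  rw [TauSpec]
  have : Tendsto (fun n : ℕ => (n : ℝ) / n) atTop (𝓝 1) := by
    apply Tendsto.congr' _ tendsto_const_nhds
    filter_upwards [eventually_ne_atTop 0] with n hn
    have : (n:ℝ) ≠ 0 := by exact_mod_cast hn
    field_simp
  apply this.congr
  intro n
  rw [hiter n]

lemma tendsto_aux {a b : ℝ} {u v : ℕ → ℝ} (hu : Tendsto (fun n : ℕ => u n / n) atTop (𝓝 a))
    (hv : Tendsto (fun n : ℕ => v n / n) atTop (𝓝 b)) (c : ℝ) :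
    Tendsto (fun n : ℕ => (u n + v n + c) / n) atTop (𝓝 (a + b)) := by
  have h : Tendsto (fun n : ℕ => u n / n + v n / n + c * (1 / n)) atTop (𝓝 (a + b + c * 0)) :=
    (hu.add hv).add (tendsto_one_div_atTop_nhds_zero_nat.const_mul c)
  rw [mul_zero, add_zero] at h
  apply h.congr
  intro n
  rcases Nat.eq_zero_or_pos n with h0 | h0
  · subst h0; simp
  · have hn : (n:ℝ) ≠ 0 := by positivity
    field_simp

lemma tendsto_aux1 {a : ℝ} {u : ℕ → ℝ} (hu : Tendsto (fun n : ℕ => u n / n) atTop (𝓝 a))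
    (c : ℝ) : Tendsto (fun n : ℕ => (u n + c) / n) atTop (𝓝 a) := by
  have hv : Tendsto (fun n : ℕ => (fun _ : ℕ => (0:ℝ)) n / n) atTop (𝓝 0) := by
    simpa using tendsto_const_nhds (α := ℝ) (f := atTop (α := ℕ))
  have := tendsto_aux hu hv c
  rw [add_zero] at this
  apply this.congr
  intro n
  ring_nf

lemma tau_add_of_le (hGm : Monotone G) (hHm : Monotone H)
    (hGper : ∀ x, G (x + 1) = G x + 1) (hHper : ∀ x, H (x + 1) = H x + 1)
    (hc : ∀ x, H (G x) ≤ G (H x)) {a b : ℝ} (ha : TauSpec G a) (hb : TauSpec H b) :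
    TauSpec (G ∘ H) (a + b) := by
  have hup : ∀ n : ℕ, (G ∘ H)^[n] 0 ≤ G^[n] 0 + H^[n] 0 + 1 := by
    intro n
    refine le_trans (pow_up hGm hHm hc n 0) ?_
    exact per_bound_up (hGm.iterate n) (iterate_per hGper n) (H^[n] 0)
  have hdown : ∀ n : ℕ, G^[n] 0 + H^[n] 0 - 1 ≤ (G ∘ H)^[n] 0 := by
    intro n
    refine le_trans ?_ (pow_down hGm hHm hc n 0)
    have := per_bound_down (hHm.iterate n) (iterate_per hHper n) (G^[n] 0)
    linarith
  have hlo : Tendsto (fun n : ℕ => (G^[n] 0 + H^[n] 0 + (-1)) / n) atTop (𝓝 (a + b)) :=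
    tendsto_aux ha hb (-1)
  have hhi : Tendsto (fun n : ℕ => (G^[n] 0 + H^[n] 0 + 1) / n) atTop (𝓝 (a + b)) :=
    tendsto_aux ha hb 1
  apply tendsto_of_tendsto_of_tendsto_of_le_of_le hlo hhi
  · intro n
    rcases Nat.eq_zero_or_pos n with h | h
    · subst h; simp
    · have hn : (0:ℝ) < n := by exact_mod_cast h
      refine (div_le_div_iff_of_pos_right hn).mpr ?_
      have := hdown n; linarith
  · intro n
    rcases Nat.eq_zero_or_pos n with h | h
    · subst h; simp
    · have hn : (0:ℝ) < n := by exact_mod_cast h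
      exact (div_le_div_iff_of_pos_right hn).mpr (hup n)

/-- `τ(G ∘ H) = τ(H ∘ G)` (transfer of the translation number under cyclic permutation). -/
lemma tau_comm (hGm : Monotone G) (hHm : Monotone H)
    (hGper : ∀ x, G (x + 1) = G x + 1) (hHper : ∀ x, H (x + 1) = H x + 1)
    {c : ℝ} (hc : TauSpec (H ∘ G) c) : TauSpec (G ∘ H) c := by
  have hsemi : Function.Semiconj G (H ∘ G) (G ∘ H) := fun x => rfl
  have hkey : ∀ n : ℕ, (G ∘ H)^[n] (G 0) = G ((H ∘ G)^[n] 0) := by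
    intro n
    exact ((hsemi.iterate_right n) 0).symm
  have hFm : ∀ n : ℕ, Monotone ((G ∘ H)^[n]) := fun n => (hGm.comp hHm).iterate n
  have hFper : ∀ n : ℕ, ∀ x, (G ∘ H)^[n] (x + 1) = (G ∘ H)^[n] x + 1 :=
    fun n => iterate_per (comp_per hGper hHper) n
  have hup : ∀ n : ℕ, (G ∘ H)^[n] 0 ≤ (H ∘ G)^[n] 0 + 2 := by
    intro n
    have h1 : (G ∘ H)^[n] 0 + G 0 - 1 ≤ (G ∘ H)^[n] (G 0) := per_bound_down (hFm n) (hFper n) _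
    have h2 : G ((H ∘ G)^[n] 0) ≤ G 0 + (H ∘ G)^[n] 0 + 1 := per_bound_up hGm hGper _
    rw [hkey n] at h1
    linarith
  have hdown : ∀ n : ℕ, (H ∘ G)^[n] 0 - 2 ≤ (G ∘ H)^[n] 0 := by
    intro n
    have h1 : (G ∘ H)^[n] (G 0) ≤ (G ∘ H)^[n] 0 + G 0 + 1 := per_bound_up (hFm n) (hFper n) _
    have h2 : G 0 + (H ∘ G)^[n] 0 - 1 ≤ G ((H ∘ G)^[n] 0) := per_bound_down hGm hGper _
    rw [hkey n] at h1
    linarith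
  have hlo : Tendsto (fun n : ℕ => ((H ∘ G)^[n] 0 + (-2)) / n) atTop (𝓝 c) := tendsto_aux1 hc _
  have hhi : Tendsto (fun n : ℕ => ((H ∘ G)^[n] 0 + 2) / n) atTop (𝓝 c) := tendsto_aux1 hc _
  apply tendsto_of_tendsto_of_tendsto_of_le_of_le hlo hhi
  · intro n
    rcases Nat.eq_zero_or_pos n with h | h
    · subst h; simp
    · have hn : (0:ℝ) < n := by exact_mod_cast h
      refine (div_le_div_iff_of_pos_right hn).mpr ?_
      have := hdown n; linarith
  · intro n
    rcases Nat.eq_zero_or_pos n with h | h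
    · subst h; simp
    · have hn : (0:ℝ) < n := by exact_mod_cast h
      refine (div_le_div_iff_of_pos_right hn).mpr ?_
      have := hup n; linarith

end Tau

section WithGroup

variable {Γ : Subgroup (Equiv.Perm S1)}
variable {G H : ℝ → ℝ} {g h : Equiv.Perm S1}

/-- Rigidity: a lift of a group element with a fixed point is the identity. -/
lemma fix_eq_id (hfree : ∀ g ∈ Γ, g ≠ 1 → ∀ x : S1, g x ≠ x)
    (hg : g ∈ Γ) (hG : IsLift G g) {x₀ : ℝ} (hfix : G x₀ = x₀) :
    ∀ x, G x = x := by
  have hg1 : g = 1 := by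
    by_contra hne
    exact hfree g hg hne ((x₀ : ℝ) : S1) (by rw [← hG.proj, hfix])
  have hint : ∀ x, ∃ n : ℤ, G x - x = n := by
    intro x
    have h2 : ((G x : ℝ) : S1) = ((x : ℝ) : S1) := by
      rw [hG.proj, hg1]; rfl
    rw [QuotientAddGroup.eq_iff_sub_mem, AddSubgroup.mem_zmultiples_iff] at h2
    obtain ⟨n, hn⟩ := h2
    exact ⟨n, by simpa using hn.symm⟩
  by_contra hcon
  push_neg at hcon
  obtain ⟨x, hx⟩ := hcon
  obtain ⟨n, hn⟩ := hint x
  have hn0 : n ≠ 0 := by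
    intro h0
    rw [h0] at hn
    push_cast at hn
    exact hx (by linarith)
  set F : ℝ → ℝ := fun t => G t - t with hF
  have hFc : ContinuousOn F (uIcc x₀ x) := ((hG.cont.sub continuous_id).continuousOn)
  have hmem : ∀ r : ℝ, r ∈ uIcc (F x₀) (F x) → r ∈ F '' uIcc x₀ x :=
    fun r hr => intermediate_value_uIcc hFc hr
  have hFx₀ : F x₀ = 0 := by simp [hF, hfix]
  have hFx : F x = n := by simp [hF, hn]
  rcases lt_or_gt_of_ne hn0 with hneg | hpos
  · have hval : (-1/2 : ℝ) ∈ uIcc (F x₀) (F x) := by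
      rw [hFx₀, hFx, Set.mem_uIcc]
      right
      constructor
      · have hn1 : n ≤ -1 := by omega
        have : (n : ℝ) ≤ -1 := by exact_mod_cast hn1
        linarith
      · norm_num
    obtain ⟨t, _, ht⟩ := hmem _ hval
    obtain ⟨m, hm⟩ := hint t
    have ht' : G t - t = -1/2 := ht
    have : (m : ℝ) = -1/2 := by rw [← hm]; exact ht'
    have : (2 * m : ℤ) = -1 := by exact_mod_cast (by linarith : (2 * m : ℝ) = -1)
    omega
  · have hval : (1/2 : ℝ) ∈ uIcc (F x₀) (F x) := by
      rw [hFx₀, hFx, Set.mem_uIcc]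
      left
      constructor
      · norm_num
      · have : (1 : ℝ) ≤ (n : ℝ) := by exact_mod_cast hpos
        linarith
    obtain ⟨t, _, ht⟩ := hmem _ hval
    obtain ⟨m, hm⟩ := hint t
    have ht' : G t - t = 1/2 := ht
    have : (m : ℝ) = 1/2 := by rw [← hm]; exact ht'
    have : (2 * m : ℤ) = 1 := by exact_mod_cast (by linarith : (2 * m : ℝ) = 1)
    omega

/-- Comparison: lifts of group elements are pointwise ordered according to their value at 0. -/
lemma lift_le (hfree : ∀ g ∈ Γ, g ≠ 1 → ∀ x : S1, g x ≠ x)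
    (hg : g ∈ Γ) (hh : h ∈ Γ) (hG : IsLift G g) (hH : IsLift H h)
    (h0 : G 0 ≤ H 0) : ∀ x, G x ≤ H x := by
  by_contra hcon
  push_neg at hcon
  obtain ⟨x, hx⟩ := hcon
  set K : ℝ → ℝ := hH.inv ∘ G with hK
  have hKlift : IsLift K (h⁻¹ * g) := hH.inv_lift.comp hG
  have hKmem : h⁻¹ * g ∈ Γ := mul_mem (inv_mem hh) hg
  have hK0 : K 0 ≤ 0 := by
    have h1 : hH.inv (G 0) ≤ hH.inv (H 0) := (hH.inv_lift.mono.monotone h0)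
    rw [hH.inv_left] at h1
    exact h1
  have hKx : x < K x := by
    have h1 : hH.inv (H x) < hH.inv (G x) := hH.inv_lift.mono hx
    rw [hH.inv_left] at h1
    exact h1
  have hmem : (0:ℝ) ∈ uIcc (K 0 - 0) (K x - x) := by
    rw [Set.mem_uIcc]
    left
    constructor <;> linarith
  have hcont : ContinuousOn (fun t => K t - t) (uIcc 0 x) :=
    (hKlift.cont.sub continuous_id).continuousOn
  obtain ⟨t, _, ht⟩ := intermediate_value_uIcc hcont hmem
  have ht' : K t - t = 0 := ht
  have hfix : K t = t := by linarith
  have hid : ∀ s, K s = s := fix_eq_id hfree hKmem hKlift hfix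
  have hGH : ∀ s, G s = H s := by
    intro s
    have h1 : hH.inv (G s) = s := hid s
    have h2 : H (hH.inv (G s)) = G s := hH.inv_right _
    rw [h1] at h2
    exact h2.symm
  exact absurd (hGH x) (by linarith)

lemma lift_eq (hfree : ∀ g ∈ Γ, g ≠ 1 → ∀ x : S1, g x ≠ x)
    (hg : g ∈ Γ) (hh : h ∈ Γ) (hG : IsLift G g) (hH : IsLift H h)
    (h0 : G 0 = H 0) : ∀ x, G x = H x := fun x =>
  le_antisymm (lift_le hfree hg hh hG hH h0.le x) (lift_le hfree hh hg hH hG h0.ge x)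

lemma lift_lt (hfree : ∀ g ∈ Γ, g ≠ 1 → ∀ x : S1, g x ≠ x)
    (hg : g ∈ Γ) (hh : h ∈ Γ) (hG : IsLift G g) (hH : IsLift H h)
    (h0 : G 0 < H 0) : ∀ x, G x < H x := by
  intro x
  rcases lt_or_eq_of_le (lift_le hfree hg hh hG hH h0.le x) with h | h
  · exact h
  · exfalso
    have hK : ∀ s, hH.inv (G s) = s := by
      apply fix_eq_id hfree (mul_mem (inv_mem hh) hg) (hH.inv_lift.comp hG) (x₀ := x)
      show hH.inv (G x) = x
      rw [h, hH.inv_left]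
    have := hK 0
    have h2 : H (hH.inv (G 0)) = G 0 := hH.inv_right _
    rw [this] at h2
    linarith

/-- Full additivity of the translation number on lifts of group elements. -/
lemma tau_add (hfree : ∀ g ∈ Γ, g ≠ 1 → ∀ x : S1, g x ≠ x)
    (hg : g ∈ Γ) (hh : h ∈ Γ) (hG : IsLift G g) (hH : IsLift H h)
    {a b : ℝ} (ha : TauSpec G a) (hb : TauSpec H b) : TauSpec (G ∘ H) (a + b) := by
  rcases le_total ((H ∘ G) 0) ((G ∘ H) 0) with hle | hle
  · have hc : ∀ x, H (G x) ≤ G (H x) :=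
      lift_le hfree (mul_mem hh hg) (mul_mem hg hh) (hH.comp hG) (hG.comp hH) hle
    exact tau_add_of_le hG.mono.monotone hH.mono.monotone hG.per hH.per hc ha hb
  · have hc : ∀ x, G (H x) ≤ H (G x) :=
      lift_le hfree (mul_mem hg hh) (mul_mem hh hg) (hG.comp hH) (hH.comp hG) hle
    have h1 : TauSpec (H ∘ G) (b + a) :=
      tau_add_of_le hH.mono.monotone hG.mono.monotone hH.per hG.per hc hb ha
    have h2 : TauSpec (G ∘ H) (b + a) :=
      tau_comm hG.mono.monotone hH.mono.monotone hG.per hH.per h1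
    rwa [add_comm b a] at h2

/-- Positivity: a lift of a group element with positive value at 0 has positive
translation number. -/
lemma tau_pos (hfree : ∀ g ∈ Γ, g ≠ 1 → ∀ x : S1, g x ≠ x)
    (hg : g ∈ Γ) (hG : IsLift G g) (hpos : 0 < G 0) {a : ℝ} (ha : TauSpec G a) : 0 < a := by
  have hlt : ∀ x : ℝ, x < G x :=
    lift_lt hfree (one_mem Γ) hg IsLift.id_lift hG (by simpa using hpos)
  obtain ⟨x₀, hx₀, hmin⟩ := isCompact_Icc.exists_isMinOn (f := fun t => G t - t)
    (Set.nonempty_Icc.mpr zero_le_one) ((hG.cont.sub continuous_id).continuousOn)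
  set δ := G x₀ - x₀ with hδ
  have hδpos : 0 < δ := by have := hlt x₀; simp [hδ]; linarith
  have hall : ∀ x : ℝ, x + δ ≤ G x := by
    intro x
    have hf : Int.fract x ∈ Icc (0:ℝ) 1 := ⟨Int.fract_nonneg x, (Int.fract_lt_one x).le⟩
    have h1 : δ ≤ G (Int.fract x) - Int.fract x := hmin hf
    have h2 : G x = G (Int.fract x) + ⌊x⌋ := by
      have := per_int hG.per ⌊x⌋ (Int.fract x)
      rw [Int.fract_add_floor x] at this
      exact this
    have h3 : x = Int.fract x + ⌊x⌋ := by rw [Int.fract]; ring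
    linarith
  have hiter : ∀ n : ℕ, (n : ℝ) * δ ≤ G^[n] 0 := by
    intro n
    induction n with
    | zero => simp
    | succ k ih =>
        rw [iterate_succ_apply']
        have h1 := hall (G^[k] 0)
        push_cast
        nlinarith
  have hev : ∀ᶠ n : ℕ in atTop, δ ≤ G^[n] 0 / n := by
    filter_upwards [eventually_ge_atTop 1] with n hn
    have hnpos : (0:ℝ) < n := by exact_mod_cast hn
    rw [le_div_iff₀ hnpos]
    have := hiter n
    linarith
  exact lt_of_lt_of_le hδpos (ge_of_tendsto ha hev)

lemma tau_nonneg_mono (hfree : ∀ g ∈ Γ, g ≠ 1 → ∀ x : S1, g x ≠ x)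
    (hg : g ∈ Γ) (hh : h ∈ Γ) (hG : IsLift G g) (hH : IsLift H h)
    {a b : ℝ} (ha : TauSpec G a) (hb : TauSpec H b) (h0 : G 0 < H 0) : a < b := by
  -- consider H ∘ G⁻¹
  obtain ⟨c, hc⟩ := tau_exists hG.inv_lift.mono.monotone hG.inv_lift.per
  have hca : TauSpec (G ∘ hG.inv) (a + c) :=
    tau_add hfree hg (inv_mem hg) hG hG.inv_lift ha hc
  have hid : TauSpec (G ∘ hG.inv) 0 := by
    apply tauSpec_congr (G := fun x : ℝ => x) _ tauSpec_id
    intro x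
    exact (hG.inv_right x).symm
  have hch : c = -a := by
    have := tauSpec_unique hca hid
    linarith
  have hlift : IsLift (H ∘ hG.inv) (h * g⁻¹) := hH.comp hG.inv_lift
  have hmem : h * g⁻¹ ∈ Γ := mul_mem hh (inv_mem hg)
  have htau : TauSpec (H ∘ hG.inv) (b + c) := tau_add hfree hh (inv_mem hg) hH hG.inv_lift hb hc
  have hpos0 : 0 < (H ∘ hG.inv) 0 := by
    have h1 : G (hG.inv 0) = 0 := hG.inv_right 0
    have h2 : G (hG.inv 0) < H (hG.inv 0) := lift_lt hfree hg hh hG hH h0 (hG.inv 0)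
    simp only [Function.comp]
    linarith
  have := tau_pos hfree hmem hlift hpos0 htau
  rw [hch] at this
  linarith

end WithGroup

section Psi

/-- `y` is the translation number of the (unique) lift, normalized to send `0` to `x`,
of an element of `Γ`. -/
def PsiSpec (Γ : Subgroup (Equiv.Perm S1)) (x y : ℝ) : Prop :=
  ∃ g ∈ Γ, ∃ G : ℝ → ℝ, IsLift G g ∧ G 0 = x ∧ TauSpec G y

/-- A strictly monotone map commuting with the unit translation and having dense
range is surjective. -/
lemma surj_of_dense {F : ℝ → ℝ} (hm : StrictMono F) (hper : ∀ x, F (x + 1) = F x + 1)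
    (hd : Dense (Set.range F)) : Function.Surjective F := by
  intro y
  by_contra hy
  push_neg at hy
  have hint : ∀ n : ℤ, F ((n : ℝ)) = F 0 + n := fun n => by
    have := per_int hper n 0; simpa using this
  set A := {x : ℝ | F x < y} with hA
  have hne : A.Nonempty := by
    obtain ⟨n, hn⟩ := exists_int_lt (y - F 0)
    refine ⟨(n : ℝ), ?_⟩
    simp only [hA, Set.mem_setOf_eq, hint n]
    linarith
  have hbdd : BddAbove A := by
    obtain ⟨n, hn⟩ := exists_int_gt (y - F 0)
    refine ⟨(n : ℝ), fun x hx => ?_⟩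
    by_contra hgt
    push_neg at hgt
    have h1 : F (n:ℝ) < F x := hm hgt
    rw [hint n] at h1
    have h2 : F x < y := hx
    linarith
  set x₀ := sSup A with hx₀
  have hup : ∀ x, x₀ < x → y < F x := by
    intro x hx
    have hxA : x ∉ A := fun hmem => absurd (le_csSup hbdd hmem) (not_le.mpr hx)
    have h1 : ¬ F x < y := by simpa [hA] using hxA
    rcases lt_or_eq_of_le (not_lt.mp h1) with h | h
    · exact h
    · exact absurd h.symm (hy x)
  have hlow : ∀ x, x < x₀ → F x < y := by
    intro x hx
    obtain ⟨x', hx', hlt⟩ := exists_lt_of_lt_csSup hne hx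
    exact lt_trans (hm hlt) hx'
  rcases lt_trichotomy (F x₀) y with h | h | h
  · obtain ⟨z, hz, hzo⟩ := hd.exists_mem_open isOpen_Ioo (Set.nonempty_Ioo.mpr h)
    obtain ⟨x, rfl⟩ := hz
    obtain ⟨hz1, hz2⟩ := hzo
    rcases le_or_gt x x₀ with hle | hgt
    · exact absurd (hm.monotone hle) (not_le.mpr hz1)
    · exact absurd (hup x hgt) (not_lt.mpr hz2.le)
  · exact hy x₀ h
  · obtain ⟨z, hz, hzo⟩ := hd.exists_mem_open isOpen_Ioo (Set.nonempty_Ioo.mpr h)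
    obtain ⟨x, rfl⟩ := hz
    obtain ⟨hz1, hz2⟩ := hzo
    rcases le_or_gt x₀ x with hle | hgt
    · exact absurd (hm.monotone hle) (not_le.mpr hz2)
    · exact absurd (hlow x hgt) (not_lt.mpr hz1.le)

end Psi

end CircleConjAux

end CircleConjAux

open CircleConjAux Function Filter Topology Set

/-- A group of orientation-preserving homeomorphisms of the circle `ℝ/ℤ`
acting freely and transitively on the circle is topologically conjugate, by a
single homeomorphism `ψ` of the circle, to the full rotation group. -/
theorem free_transitive_circle_action_conjugate_to_rotations
    (Γ : Subgroup (Equiv.Perm (AddCircle (1 : ℝ))))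
    (hlift : ∀ g ∈ Γ, ∃ G : ℝ → ℝ, StrictMono G ∧ Continuous G ∧
      (∀ x : ℝ, G (x + 1) = G x + 1) ∧
      (∀ x : ℝ, ((G x : ℝ) : AddCircle (1 : ℝ)) = g ((x : ℝ) : AddCircle (1 : ℝ))))
    (hfree : ∀ g ∈ Γ, g ≠ 1 → ∀ x : AddCircle (1 : ℝ), g x ≠ x)
    (htrans : ∀ x y : AddCircle (1 : ℝ), ∃ g ∈ Γ, g x = y) :
    ∃ ψ : Homeomorph (AddCircle (1 : ℝ)) (AddCircle (1 : ℝ)),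
      ∀ g : Equiv.Perm (AddCircle (1 : ℝ)),
        g ∈ Γ ↔ ∃ t : AddCircle (1 : ℝ),
          (g : AddCircle (1 : ℝ) → AddCircle (1 : ℝ)) =
            ψ.symm ∘ (fun s : AddCircle (1 : ℝ) => s + t) ∘ ψ := by
  classical
  -- Step 1: for every `x : ℝ` there is a normalized lift with its translation number
  have hex : ∀ x : ℝ, ∃ y : ℝ, PsiSpec Γ x y := by
    intro x
    obtain ⟨g, hg, hgx⟩ := htrans ((0:ℝ) : AddCircle (1:ℝ)) ((x:ℝ) : AddCircle (1:ℝ))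
    obtain ⟨G₀, h1, h2, h3, h4⟩ := hlift g hg
    have hcoe : ((G₀ 0 : ℝ) : AddCircle (1:ℝ)) = ((x:ℝ) : AddCircle (1:ℝ)) := by
      rw [h4 0, hgx]
    rw [QuotientAddGroup.eq_iff_sub_mem, AddSubgroup.mem_zmultiples_iff] at hcoe
    obtain ⟨n, hn⟩ := hcoe
    have hn' : G₀ 0 - (n:ℝ) = x := by
      have : ((n : ℤ) : ℝ) = n • (1:ℝ) := by simp
      rw [this, hn]; ring
    have hGlift : IsLift (fun t => G₀ t - (n:ℝ)) g := by
      refine ⟨?_, h2.sub continuous_const, fun t => ?_, fun t => ?_⟩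
      · intro a b hab
        simpa using h1 hab
      · simp only [h3]; ring
      · have hmem : ((G₀ t - (n:ℝ) : ℝ) : AddCircle (1:ℝ)) = ((G₀ t : ℝ) : AddCircle (1:ℝ)) := by
          rw [QuotientAddGroup.eq_iff_sub_mem]
          exact AddSubgroup.mem_zmultiples_iff.mpr ⟨-n, by simp⟩
        rw [hmem, h4]
    obtain ⟨τ, hτ⟩ := tau_exists hGlift.mono.monotone hGlift.per
    exact ⟨τ, g, hg, _, hGlift, hn', hτ⟩
  choose Ψ hΨ using hex
  -- Step 2: uniqueness and basic properties of Ψ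
  have huniq : ∀ x y, PsiSpec Γ x y → Ψ x = y := by
    rintro x y ⟨g, hg, G, hG, hG0, hτ⟩
    obtain ⟨g', hg', G', hG', hG0', hτ'⟩ := hΨ x
    have heq : ∀ t, G' t = G t := lift_eq hfree hg' hg hG' hG (by rw [hG0', hG0])
    exact tauSpec_unique (tauSpec_congr heq hτ') hτ
  have hequiv : ∀ h ∈ Γ, ∀ H, IsLift H h → ∀ b, TauSpec H b → ∀ x, Ψ (H x) = b + Ψ x := by
    intro h hh H hH b hb x
    obtain ⟨g, hg, G, hG, hG0, hτ⟩ := hΨ x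
    refine huniq _ _ ⟨h * g, mul_mem hh hg, H ∘ G, hH.comp hG, ?_,
      tau_add hfree hh hg hH hG hb hτ⟩
    simp only [Function.comp]
    rw [hG0]
  have hΨ0 : Ψ 0 = 0 := huniq 0 0 ⟨1, one_mem Γ, fun t => t, IsLift.id_lift, rfl, tauSpec_id⟩
  have hΨper : ∀ x, Ψ (x + 1) = Ψ x + 1 := by
    intro x
    have h1 := hequiv 1 (one_mem Γ) (fun t => t + 1) IsLift.trans_lift 1 tauSpec_trans x
    rw [h1]; ring
  have hmono : StrictMono Ψ := by
    intro x y hxy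
    obtain ⟨g, hg, G, hG, hG0, hτ⟩ := hΨ x
    obtain ⟨h, hh, H, hH, hH0, hτ'⟩ := hΨ y
    exact tau_nonneg_mono hfree hg hh hG hH hτ hτ' (by rw [hG0, hH0]; exact hxy)
  -- Step 3: the range of Ψ is an additive subgroup
  have hadd : ∀ a b : ℝ, a ∈ Set.range Ψ → b ∈ Set.range Ψ → a + b ∈ Set.range Ψ := by
    rintro _ _ ⟨x, rfl⟩ ⟨y, rfl⟩
    obtain ⟨g, hg, G, hG, hG0, hτ⟩ := hΨ x
    exact ⟨G y, hequiv g hg G hG (Ψ x) hτ y⟩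
  have hneg : ∀ a : ℝ, a ∈ Set.range Ψ → -a ∈ Set.range Ψ := by
    rintro _ ⟨x, rfl⟩
    obtain ⟨g, hg, G, hG, hG0, hτ⟩ := hΨ x
    obtain ⟨c, hc⟩ := tau_exists hG.inv_lift.mono.monotone hG.inv_lift.per
    have hzero : TauSpec (G ∘ hG.inv) (Ψ x + c) :=
      tau_add hfree hg (inv_mem hg) hG hG.inv_lift hτ hc
    have hid : TauSpec (G ∘ hG.inv) 0 :=
      tauSpec_congr (fun t => (hG.inv_right t).symm) tauSpec_id
    have hc' : c = -Ψ x := by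
      have := tauSpec_unique hzero hid
      linarith
    refine ⟨hG.inv 0, ?_⟩
    rw [← hc']
    exact huniq _ _ ⟨g⁻¹, inv_mem hg, hG.inv, hG.inv_lift, rfl, hc⟩
  let S : AddSubgroup ℝ :=
    { carrier := Set.range Ψ
      zero_mem' := ⟨0, hΨ0⟩
      add_mem' := fun ha hb => hadd _ _ ha hb
      neg_mem' := fun ha => hneg _ ha }
  -- Step 4: Ψ is surjective
  have hsurj : Function.Surjective Ψ := by
    rcases S.dense_or_cyclic with hd | ⟨a, haS⟩
    · exact surj_of_dense hmono hΨper hd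
    · exfalso
      have hcount : (Set.range Ψ).Countable := by
        have h1 : (S : Set ℝ) ⊆ Set.range (fun n : ℤ => n • a) := by
          intro z hz
          rw [haS] at hz
          obtain ⟨n, hn⟩ := AddSubgroup.mem_closure_singleton.mp hz
          exact ⟨n, hn⟩
        exact Set.Countable.mono h1 (Set.countable_range _)
      have huniv : (Set.univ : Set ℝ).Countable := by
        refine Set.Countable.mono ?_ (hcount.preimage hmono.injective)
        intro z _
        exact ⟨z, rfl⟩
      exact Cardinal.not_countable_real huniv
  -- Step 5: Ψ is an order isomorphism, hence a homeomorphism of ℝ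
  let e : ℝ ≃o ℝ := StrictMono.orderIsoOfSurjective Ψ hmono hsurj
  have hΨcont : Continuous Ψ := e.continuous
  have hinv_left : ∀ z, e.symm (Ψ z) = z := fun z =>
    StrictMono.orderIsoOfSurjective_symm_apply_self Ψ hmono hsurj z
  have hinv_right : ∀ z, Ψ (e.symm z) = z := fun z =>
    StrictMono.orderIsoOfSurjective_self_symm_apply Ψ hmono hsurj z
  have hΨ'per : ∀ y, e.symm (y + 1) = e.symm y + 1 := by
    intro y
    apply hmono.injective
    rw [hinv_right, hΨper, hinv_right]
  have hΨ'cont : Continuous (⇑e.symm : ℝ → ℝ) := e.symm.continuous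
  -- Step 6: descend to the circle
  have hrel : ∀ a b : ℝ, (QuotientAddGroup.leftRel (AddSubgroup.zmultiples (1:ℝ))) a b →
      ((Ψ a : ℝ) : AddCircle (1:ℝ)) = ((Ψ b : ℝ) : AddCircle (1:ℝ)) := by
    intro a b hab
    rw [QuotientAddGroup.leftRel_apply, AddSubgroup.mem_zmultiples_iff] at hab
    obtain ⟨n, hn⟩ := hab
    have hba : b = a + (n:ℝ) := by
      have : ((n : ℤ) : ℝ) = n • (1:ℝ) := by simp
      rw [this, hn]; ring
    rw [hba, per_int hΨper n a, QuotientAddGroup.eq_iff_sub_mem]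
    exact AddSubgroup.mem_zmultiples_iff.mpr ⟨-n, by simp⟩
  have hrel' : ∀ a b : ℝ, (QuotientAddGroup.leftRel (AddSubgroup.zmultiples (1:ℝ))) a b →
      ((e.symm a : ℝ) : AddCircle (1:ℝ)) = ((e.symm b : ℝ) : AddCircle (1:ℝ)) := by
    intro a b hab
    rw [QuotientAddGroup.leftRel_apply, AddSubgroup.mem_zmultiples_iff] at hab
    obtain ⟨n, hn⟩ := hab
    have hba : b = a + (n:ℝ) := by
      have : ((n : ℤ) : ℝ) = n • (1:ℝ) := by simp
      rw [this, hn]; ring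
    rw [hba, per_int hΨ'per n a, QuotientAddGroup.eq_iff_sub_mem]
    exact AddSubgroup.mem_zmultiples_iff.mpr ⟨-n, by simp⟩
  let F₁ : AddCircle (1:ℝ) → AddCircle (1:ℝ) :=
    fun s => Quotient.liftOn' s (fun z => ((Ψ z : ℝ) : AddCircle (1:ℝ))) hrel
  let F₂ : AddCircle (1:ℝ) → AddCircle (1:ℝ) :=
    fun s => Quotient.liftOn' s (fun z => ((e.symm z : ℝ) : AddCircle (1:ℝ))) hrel'
  have hF₁mk : ∀ z : ℝ, F₁ ((z : ℝ) : AddCircle (1:ℝ)) = ((Ψ z : ℝ) : AddCircle (1:ℝ)) :=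
    fun z => rfl
  have hF₂mk : ∀ z : ℝ, F₂ ((z : ℝ) : AddCircle (1:ℝ)) = ((e.symm z : ℝ) : AddCircle (1:ℝ)) :=
    fun z => rfl
  have hF₂F₁ : ∀ s, F₂ (F₁ s) = s := by
    intro s
    obtain ⟨z, rfl⟩ := QuotientAddGroup.mk_surjective s
    show F₂ (F₁ ((z : ℝ) : AddCircle (1:ℝ))) = ((z : ℝ) : AddCircle (1:ℝ))
    rw [hF₁mk, hF₂mk, hinv_left]
  have hF₁F₂ : ∀ s, F₁ (F₂ s) = s := by
    intro s
    obtain ⟨z, rfl⟩ := QuotientAddGroup.mk_surjective s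
    show F₁ (F₂ ((z : ℝ) : AddCircle (1:ℝ))) = ((z : ℝ) : AddCircle (1:ℝ))
    rw [hF₂mk, hF₁mk, hinv_right]
  have hF₁c : Continuous F₁ :=
    (QuotientAddGroup.isQuotientMap_mk _).continuous_iff.mpr
      (continuous_quotient_mk'.comp hΨcont)
  have hF₂c : Continuous F₂ :=
    (QuotientAddGroup.isQuotientMap_mk _).continuous_iff.mpr
      (continuous_quotient_mk'.comp hΨ'cont)
  let ψ : Homeomorph (AddCircle (1:ℝ)) (AddCircle (1:ℝ)) :=
    { toFun := F₁
      invFun := F₂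
      left_inv := hF₂F₁
      right_inv := hF₁F₂
      continuous_toFun := hF₁c
      continuous_invFun := hF₂c }
  -- Step 7: equivariance
  have hconj : ∀ g ∈ Γ, ∀ G, IsLift G g → ∀ b, TauSpec G b →
      ∀ s : AddCircle (1:ℝ), F₁ (g s) = F₁ s + ((b : ℝ) : AddCircle (1:ℝ)) := by
    intro g hg G hG b hb s
    obtain ⟨z, rfl⟩ := QuotientAddGroup.mk_surjective s
    have h1 : g ((z : ℝ) : AddCircle (1:ℝ)) = ((G z : ℝ) : AddCircle (1:ℝ)) := (hG.proj z).symm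
    show F₁ (g ((z : ℝ) : AddCircle (1:ℝ))) = F₁ ((z : ℝ) : AddCircle (1:ℝ)) + _
    rw [h1, hF₁mk, hF₁mk, hequiv g hg G hG b hb z]
    show ((b + Ψ z : ℝ) : AddCircle (1:ℝ)) = _
    rw [QuotientAddGroup.mk_add]
    exact add_comm _ _
  refine ⟨ψ, fun g => ⟨?_, ?_⟩⟩
  · intro hg
    obtain ⟨G₀, h1, h2, h3, h4⟩ := hlift g hg
    have hG : IsLift G₀ g := ⟨h1, h2, h3, h4⟩
    obtain ⟨b, hb⟩ := tau_exists hG.mono.monotone hG.per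
    refine ⟨((b:ℝ) : AddCircle (1:ℝ)), funext fun s => ?_⟩
    have h5 := hconj g hg G₀ hG b hb s
    have h6 : F₂ (F₁ (g s)) = g s := hF₂F₁ (g s)
    rw [h5] at h6
    exact h6.symm
  · rintro ⟨t, ht⟩
    obtain ⟨t', rfl⟩ := QuotientAddGroup.mk_surjective t
    obtain ⟨x, hx⟩ := hsurj t'
    obtain ⟨h, hh, H, hH, hH0, hτ⟩ := hΨ x
    rw [hx] at hτ
    have hconjh := hconj h hh H hH t' hτ
    have hgh : ∀ s : AddCircle (1:ℝ), g s = h s := by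
      intro s
      have h5 : g s = F₂ (F₁ s + ((t' : ℝ) : AddCircle (1:ℝ))) := congrFun ht s
      have h6 : F₂ (F₁ (h s)) = h s := hF₂F₁ (h s)
      rw [hconjh s] at h6
      rw [h5, h6]
    have : g = h := Equiv.coe_fn_injective (funext hgh)
    rw [this]
    exact hh
end

section
/- Let X be a topological space and A : X → X a continuous map which is topologically mixing: for any nonempty open sets U, V ⊆ X there exists N ∈ ℕ such that Aⁿ(U) ∩ V ≠ ∅ for all n ≥ N. Let α ∈ ℝ be irrational and let R : ℝ/ℤ → ℝ/ℤ be the rotation R(y) = y + α (mod ℤ). Then the product map F : X × (ℝ/ℤ) → X × (ℝ/ℤ), F(x, y) = (A(x), y + α), is topologically transitive: for any nonempty open sets W₁, W₂ ⊆ X × (ℝ/ℤ) there exists n ∈ ℕ with Fⁿ(W₁) ∩ W₂ ≠ ∅. -/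
/-- The forward iterate of the product map `F(x,y) = (A x, y + α)`. -/
lemma prod_rotation_iterate {X : Type*} (A : X → X) (α : ℝ) (n : ℕ)
    (p : X × AddCircle (1 : ℝ)) :
    (fun p : X × AddCircle (1 : ℝ) =>
        (A p.1, p.2 + ((α : ℝ) : AddCircle (1 : ℝ))))^[n] p
      = (A^[n] p.1, p.2 + n • ((α : ℝ) : AddCircle (1 : ℝ))) := by
  induction n with
  | zero => simp
  | succ n ih =>
      rw [Function.iterate_succ_apply', ih, Function.iterate_succ_apply']
      simp [succ_nsmul, add_assoc]

/-- The natural multiples of an irrational point are dense in the circle. -/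
lemma denseRange_nsmul_irrational (α : ℝ) (hα : Irrational α) :
    DenseRange (fun n : ℕ => n • ((α : ℝ) : AddCircle (1 : ℝ))) := by
  rw [← denseRange_zsmul_iff_nsmul]
  have hd : Dense ((AddSubgroup.closure {α, 1} : AddSubgroup ℝ) : Set ℝ) := by
    rcases AddSubgroup.dense_or_cyclic (AddSubgroup.closure {α, 1}) with h | ⟨a, ha⟩
    · exact h
    · exfalso
      have hαm : α ∈ AddSubgroup.closure ({α, 1} : Set ℝ) :=
        AddSubgroup.subset_closure (by simp)
      have h1m : (1 : ℝ) ∈ AddSubgroup.closure ({α, 1} : Set ℝ) :=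
        AddSubgroup.subset_closure (by simp)
      rw [ha, AddSubgroup.mem_closure_singleton] at hαm h1m
      obtain ⟨m, hm⟩ := hαm
      obtain ⟨n, hn⟩ := h1m
      have hn0 : n ≠ 0 := by rintro rfl; simp at hn
      apply hα
      refine ⟨(m : ℚ) / n, ?_⟩
      rw [zsmul_eq_mul] at hm hn
      have key : α * (n : ℝ) = (m : ℝ) := by
        calc α * (n : ℝ) = ((m : ℝ) * a) * n := by rw [hm]
          _ = (m : ℝ) * ((n : ℝ) * a) := by ring
          _ = (m : ℝ) := by rw [hn]; ring
      push_cast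
      field_simp
      linarith [key]
  have hcont : Continuous ((↑) : ℝ → AddCircle (1 : ℝ)) := continuous_quotient_mk'
  have hsurj : DenseRange ((↑) : ℝ → AddCircle (1 : ℝ)) :=
    (Quotient.mk''_surjective).denseRange
  have himg : Dense (((↑) : ℝ → AddCircle (1 : ℝ)) ''
      (AddSubgroup.closure {α, 1} : AddSubgroup ℝ)) :=
    hsurj.dense_image hcont hd
  refine himg.mono ?_
  rintro _ ⟨x, hx, rfl⟩
  rw [SetLike.mem_coe, AddSubgroup.mem_closure_pair] at hx
  obtain ⟨m, n, rfl⟩ := hx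
  exact ⟨m, by push_cast; simp [AddCircle.coe_eq_zero_iff]⟩

/-- The product of a topologically mixing continuous map with an irrational
rotation of the circle `ℝ/ℤ` is topologically transitive. -/
theorem mixing_times_irrational_rotation_transitive
    {X : Type*} [TopologicalSpace X] (A : X → X) (hA : Continuous A)
    (hmix : ∀ U V : Set X, IsOpen U → IsOpen V → U.Nonempty → V.Nonempty →
      ∃ N : ℕ, ∀ n : ℕ, N ≤ n → (A^[n] '' U ∩ V).Nonempty)
    (α : ℝ) (hα : Irrational α) :
    ∀ W₁ W₂ : Set (X × AddCircle (1 : ℝ)), IsOpen W₁ → IsOpen W₂ →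
      W₁.Nonempty → W₂.Nonempty →
      ∃ n : ℕ,
        (((fun p : X × AddCircle (1 : ℝ) =>
            (A p.1, p.2 + ((α : ℝ) : AddCircle (1 : ℝ))))^[n]) '' W₁ ∩ W₂).Nonempty := by
  intro W₁ W₂ hW₁ hW₂ hne₁ hne₂
  obtain ⟨⟨x₁, y₁⟩, h1⟩ := hne₁
  obtain ⟨⟨x₂, y₂⟩, h2⟩ := hne₂
  obtain ⟨U₁, V₁, hU₁, hV₁, hx₁, hy₁, hsub₁⟩ := isOpen_prod_iff.mp hW₁ x₁ y₁ h1
  obtain ⟨U₂, V₂, hU₂, hV₂, hx₂, hy₂, hsub₂⟩ := isOpen_prod_iff.mp hW₂ x₂ y₂ h2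
  obtain ⟨N, hN⟩ := hmix U₁ U₂ hU₁ hU₂ ⟨x₁, hx₁⟩ ⟨x₂, hx₂⟩
  set β : AddCircle (1 : ℝ) := ((α : ℝ) : AddCircle (1 : ℝ)) with hβ
  set c : AddCircle (1 : ℝ) := y₁ + N • β with hc
  have hnat : DenseRange (fun m : ℕ => m • β) := denseRange_nsmul_irrational α hα
  have hcd : DenseRange (fun m : ℕ => c + m • β) := by
    have := ((Homeomorph.addLeft c).surjective.denseRange).comp hnat
      (Homeomorph.addLeft c).continuous
    simpa [Function.comp_def] using this
  obtain ⟨m, hm⟩ := hcd.exists_mem_open hV₂ ⟨y₂, hy₂⟩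
  refine ⟨N + m, ?_⟩
  obtain ⟨z, hz1, hz2⟩ := hN (N + m) (Nat.le_add_right N m)
  obtain ⟨w, hw, rfl⟩ := hz1
  refine ⟨(A^[N + m] w, y₁ + (N + m) • β), ⟨(w, y₁), hsub₁ ⟨hw, hy₁⟩, ?_⟩, ?_⟩
  · exact prod_rotation_iterate A α (N + m) (w, y₁)
  · apply hsub₂
    refine ⟨hz2, ?_⟩
    have : y₁ + (N + m) • β = c + m • β := by
      rw [hc, add_nsmul, add_assoc]
    rw [this]
    exact hm
end

section
/- Let X be a topological space, f : X → X a homeomorphism, and y ∈ X. Define the ω-limit set ω(y) = ⋂_{N ∈ ℕ} closure{ fⁿ(y) : n ≥ N }. If the interior of ω(y) is nonempty, then y belongs to the interior of ω(y), and moreover ω(y) equals the closure of the forward orbit { fⁿ(y) : n ≥ 0 } of y (so that the restriction of f to ω(y) is a transitive homeomorphism, y having dense forward orbit in ω(y)). -/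
/-- If the `ω`-limit set `ω(y) = ⋂ N, closure {fⁿ y : n ≥ N}` of a point `y`
under a homeomorphism `f` has nonempty interior, then `y` lies in the interior
of `ω(y)` and `ω(y)` is the closure of the forward orbit of `y`. -/
theorem omega_limit_nonempty_interior_eq_orbit_closure
    {X : Type*} [TopologicalSpace X] (f : Homeomorph X X) (y : X)
    (hint : (interior (⋂ N : ℕ, closure {x : X | ∃ n : ℕ, N ≤ n ∧ (⇑f)^[n] y = x})).Nonempty) :
    y ∈ interior (⋂ N : ℕ, closure {x : X | ∃ n : ℕ, N ≤ n ∧ (⇑f)^[n] y = x}) ∧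
    (⋂ N : ℕ, closure {x : X | ∃ n : ℕ, N ≤ n ∧ (⇑f)^[n] y = x}) =
      closure {x : X | ∃ n : ℕ, (⇑f)^[n] y = x} := by
  set T : ℕ → Set X := fun N => {x : X | ∃ n : ℕ, N ≤ n ∧ (⇑f)^[n] y = x} with hT
  set ω : Set X := ⋂ N : ℕ, closure (T N) with hω
  have hωclosed : IsClosed ω := isClosed_iInter fun _ => isClosed_closure
  -- forward invariance: f '' T N ⊆ T N
  have himgT : ∀ N, f '' T N ⊆ T N := by
    rintro N _ ⟨_, ⟨n, hn, rfl⟩, rfl⟩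
    exact ⟨n + 1, le_trans hn (Nat.le_succ n), Function.iterate_succ_apply' (⇑f) n y⟩
  have hfwd : ∀ x ∈ ω, f x ∈ ω := by
    intro x hx
    rw [hω, Set.mem_iInter] at hx ⊢
    intro N
    have : f x ∈ closure (f '' T N) := by
      rw [← f.image_closure]; exact ⟨x, hx N, rfl⟩
    exact closure_mono (himgT N) this
  -- backward: f.symm '' T (N+1) ⊆ T N
  have himgT' : ∀ N, f.symm '' T (N + 1) ⊆ T N := by
    rintro N _ ⟨_, ⟨n, hn, rfl⟩, rfl⟩
    obtain ⟨m, rfl⟩ : ∃ m, n = m + 1 := ⟨n - 1, by omega⟩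
    refine ⟨m, by omega, ?_⟩
    rw [Function.iterate_succ_apply' (⇑f) m y, f.symm_apply_apply]
  have hbwd : ∀ x ∈ ω, f.symm x ∈ ω := by
    intro x hx
    rw [hω, Set.mem_iInter] at hx ⊢
    intro N
    have : f.symm x ∈ closure (f.symm '' T (N + 1)) := by
      rw [← f.symm.image_closure]; exact ⟨x, hx (N + 1), rfl⟩
    exact closure_mono (himgT' N) this
  -- f.symm maps interior ω into interior ω
  have hbwdInt : ∀ x ∈ interior ω, f.symm x ∈ interior ω := by
    intro x hx
    have hopen : IsOpen (f.symm '' interior ω) := f.symm.isOpenMap _ isOpen_interior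
    have hsub : f.symm '' interior ω ⊆ ω := by
      rintro _ ⟨z, hz, rfl⟩
      exact hbwd z (interior_subset hz)
    exact interior_maximal hsub hopen ⟨x, hx, rfl⟩
  -- find some n with f^[n] y ∈ interior ω
  obtain ⟨u, hu⟩ := hint
  have hu0 : u ∈ closure (T 0) := by
    have := (interior_subset hu); rw [hω, Set.mem_iInter] at this; exact this 0
  obtain ⟨v, hv1, n, _, rfl⟩ :=
    mem_closure_iff.mp hu0 (interior ω) isOpen_interior hu
  -- pull back n times
  have hy : y ∈ interior ω := by
    have key : ∀ k : ℕ, ∀ x ∈ interior ω, f.symm^[k] x ∈ interior ω := by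
      intro k
      induction k with
      | zero => intro x hx; simpa using hx
      | succ k ih =>
        intro x hx
        rw [Function.iterate_succ_apply]
        exact ih _ (hbwdInt x hx)
    have := key n _ hv1
    rwa [Function.LeftInverse.iterate f.symm_apply_apply n _] at this
  refine ⟨hy, ?_⟩
  apply le_antisymm
  · refine le_trans (Set.iInter_subset _ 0) (closure_mono ?_)
    rintro _ ⟨n, _, rfl⟩; exact ⟨n, rfl⟩
  · apply closure_minimal _ hωclosed
    rintro _ ⟨n, rfl⟩
    induction n with
    | zero => exact interior_subset hy
    | succ n ih =>
      rw [Function.iterate_succ_apply']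
      exact hfwd _ ih
end

section
/- Let (X, d) be a compact metric space, f : X → X a homeomorphism, and y ∈ X such that the interior of the ω-limit set ω(y) = ⋂_{N ∈ ℕ} closure{ fⁿ(y) : n ≥ N } is nonempty. Then there exists a point x in the interior of ω(y) such that ω(x) = ω(y) and α(x) = ω(y), where α(x) = ⋂_{N ∈ ℕ} closure{ f⁻ⁿ(x) : n ≥ N } is the α-limit set of x (i.e. the ω-limit set of x under f⁻¹). -/
open Metric Set Function

private def omSet {X : Type*} [MetricSpace X] (g : X → X) (y : X) : Set X :=
  ⋂ N : ℕ, closure {x : X | ∃ n : ℕ, N ≤ n ∧ g^[n] y = x}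

private lemma isClosed_omSet {X : Type*} [MetricSpace X] (g : X → X) (y : X) :
    IsClosed (omSet g y) :=
  isClosed_iInter fun _ => isClosed_closure

private lemma visit {X : Type*} [MetricSpace X] (f : Homeomorph X X) (y : X) (V : Set X)
    (hV : IsOpen V) (hmeet : (V ∩ omSet (⇑f) y).Nonempty) (N : ℕ) :
    ∃ n, N ≤ n ∧ (⇑f)^[n] y ∈ V := by
  obtain ⟨z, hzV, hzΩ⟩ := hmeet
  have hz := mem_iInter.mp hzΩ N
  rcases mem_closure_iff_nhds.mp hz V (hV.mem_nhds hzV) with ⟨w, hwV, n, hn, rfl⟩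
  exact ⟨n, hn, hwV⟩

private lemma mapsTo_omSet {X : Type*} [MetricSpace X] (f : Homeomorph X X) (y : X) {z : X}
    (hz : z ∈ omSet (⇑f) y) : f z ∈ omSet (⇑f) y := by
  rw [omSet, mem_iInter] at hz ⊢
  intro N
  have h1 : f z ∈ closure ((⇑f) '' {x : X | ∃ n : ℕ, N ≤ n ∧ (⇑f)^[n] y = x}) :=
    (image_closure_subset_closure_image f.continuous) (mem_image_of_mem _ (hz N))
  refine closure_mono ?_ h1
  rintro _ ⟨w, ⟨n, hn, rfl⟩, rfl⟩
  exact ⟨n + 1, hn.trans (Nat.le_succ n), (Function.iterate_succ_apply' _ _ _)⟩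

private lemma symm_mapsTo_omSet {X : Type*} [MetricSpace X] (f : Homeomorph X X) (y : X) {z : X}
    (hz : z ∈ omSet (⇑f) y) : f.symm z ∈ omSet (⇑f) y := by
  rw [omSet, mem_iInter] at hz ⊢
  intro N
  have h1 : f.symm z ∈ closure ((⇑f.symm) '' {x : X | ∃ n : ℕ, N + 1 ≤ n ∧ (⇑f)^[n] y = x}) :=
    (image_closure_subset_closure_image f.symm.continuous) (mem_image_of_mem _ (hz (N + 1)))
  refine closure_mono ?_ h1
  rintro _ ⟨w, ⟨n, hn, rfl⟩, rfl⟩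
  obtain ⟨m, rfl⟩ : ∃ m, n = m + 1 := ⟨n - 1, (Nat.succ_pred_eq_of_pos (by omega)).symm⟩
  refine ⟨m, by omega, ?_⟩
  rw [Function.iterate_succ_apply', f.symm_apply_apply]

private lemma iter_mem_omSet {X : Type*} [MetricSpace X] (f : Homeomorph X X) (y : X) {z : X}
    (hz : z ∈ omSet (⇑f) y) : ∀ n, (⇑f)^[n] z ∈ omSet (⇑f) y := by
  intro n; induction n with
  | zero => exact hz
  | succ n ih => rw [Function.iterate_succ_apply']; exact mapsTo_omSet f y ih

private lemma symm_iter_mem_omSet {X : Type*} [MetricSpace X] (f : Homeomorph X X) (y : X) {z : X}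
    (hz : z ∈ omSet (⇑f) y) : ∀ n, (⇑f.symm)^[n] z ∈ omSet (⇑f) y := by
  intro n; induction n with
  | zero => exact hz
  | succ n ih => rw [Function.iterate_succ_apply']; exact symm_mapsTo_omSet f y ih

private lemma omSet_subset {X : Type*} [MetricSpace X] (g : X → X) (x : X) (S : Set X)
    (hS : IsClosed S) (h : ∀ n, g^[n] x ∈ S) : omSet g x ⊆ S := by
  refine (iInter_subset _ 0).trans ?_
  rw [hS.closure_subset_iff]
  rintro _ ⟨n, _, rfl⟩
  exact h n

private lemma step {X : Type*} [MetricSpace X] (f : Homeomorph X X) (y : X) (ζ : X)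
    (hζ : ζ ∈ omSet (⇑f) y) (ε : ℝ) (hε : 0 < ε) (k : ℕ) (c : X) (r : ℝ) (hr : 0 < r)
    (hsub : ball c r ⊆ omSet (⇑f) y) :
    ∃ c' r', 0 < r' ∧ closedBall c' r' ⊆ ball c r ∧
      (∃ t, k ≤ t ∧ ∀ u ∈ closedBall c' r', (⇑f.symm)^[t] u ∈ ball ζ ε) ∧
      (∃ s, k ≤ s ∧ ∀ u ∈ closedBall c' r', (⇑f)^[s] u ∈ ball ζ ε) := by
  have hc : c ∈ omSet (⇑f) y := hsub (mem_ball_self hr)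
  obtain ⟨a, hak, hay⟩ := visit f y (ball ζ ε) isOpen_ball ⟨ζ, mem_ball_self hε, hζ⟩ k
  obtain ⟨b, hab, hby⟩ := visit f y (ball c r) isOpen_ball ⟨c, mem_ball_self hr, hc⟩ (a + k)
  set t := b - a with ht
  have htk : k ≤ t := by omega
  have hba : b = t + a := by omega
  have hsymm : (⇑f.symm)^[t] ((⇑f)^[b] y) = (⇑f)^[a] y := by
    rw [hba, Function.iterate_add_apply]
    exact (Function.LeftInverse.iterate f.symm_apply_apply t) _
  set W : Set X := ball c r ∩ ((⇑f.symm)^[t]) ⁻¹' (ball ζ ε) with hW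
  have hWopen : IsOpen W :=
    isOpen_ball.inter ((f.symm.continuous.iterate t).isOpen_preimage _ isOpen_ball)
  have hpW : (⇑f)^[b] y ∈ W := ⟨hby, by simp only [mem_preimage, hsymm]; exact hay⟩
  obtain ⟨a', ha'b, ha'y⟩ := visit f y (ball ζ ε) isOpen_ball ⟨ζ, mem_ball_self hε, hζ⟩ (b + k)
  set s := a' - b with hs
  have hsk : k ≤ s := by omega
  have hfwd : (⇑f)^[s] ((⇑f)^[b] y) = (⇑f)^[a'] y := by
    rw [← Function.iterate_add_apply]
    congr 1; omega
  set W' : Set X := W ∩ ((⇑f)^[s]) ⁻¹' (ball ζ ε) with hW'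
  have hW'open : IsOpen W' :=
    hWopen.inter ((f.continuous.iterate s).isOpen_preimage _ isOpen_ball)
  have hpW' : (⇑f)^[b] y ∈ W' := ⟨hpW, by simp only [mem_preimage, hfwd]; exact ha'y⟩
  obtain ⟨r', hr', hball⟩ := (Metric.nhds_basis_closedBall.mem_iff).mp (hW'open.mem_nhds hpW')
  exact ⟨(⇑f)^[b] y, r', hr', fun u hu => (hball hu).1.1,
    ⟨t, htk, fun u hu => (hball hu).1.2⟩, ⟨s, hsk, fun u hu => (hball hu).2⟩⟩

/-- In a compact metric space, if the `ω`-limit set of `y` under a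
homeomorphism `f` has nonempty interior, then there is a point `x` in the
interior of `ω(y)` with `ω(x) = ω(y)` and `α(x) = ω(y)`. -/
theorem exists_point_with_full_alpha_omega
    {X : Type*} [MetricSpace X] [CompactSpace X] (f : Homeomorph X X) (y : X)
    (hint : (interior (⋂ N : ℕ, closure {x : X | ∃ n : ℕ, N ≤ n ∧ (⇑f)^[n] y = x})).Nonempty) :
    ∃ x ∈ interior (⋂ N : ℕ, closure {x : X | ∃ n : ℕ, N ≤ n ∧ (⇑f)^[n] y = x}),
      (⋂ N : ℕ, closure {z : X | ∃ n : ℕ, N ≤ n ∧ (⇑f)^[n] x = z}) =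
        (⋂ N : ℕ, closure {x : X | ∃ n : ℕ, N ≤ n ∧ (⇑f)^[n] y = x}) ∧
      (⋂ N : ℕ, closure {z : X | ∃ n : ℕ, N ≤ n ∧ (⇑f.symm)^[n] x = z}) =
        (⋂ N : ℕ, closure {x : X | ∃ n : ℕ, N ≤ n ∧ (⇑f)^[n] y = x}) := by
  classical
  have hΩ : (⋂ N : ℕ, closure {x : X | ∃ n : ℕ, N ≤ n ∧ (⇑f)^[n] y = x}) = omSet (⇑f) y := rfl
  set Ω : Set X := omSet (⇑f) y with hΩdef
  rw [hΩ] at hint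
  have hclosed : IsClosed Ω := isClosed_omSet _ _
  have hΩne : Ω.Nonempty := hint.mono interior_subset
  -- dense sequence in Ω
  haveI : CompactSpace Ω := isCompact_iff_compactSpace.mp hclosed.isCompact
  haveI : Nonempty Ω := hΩne.to_subtype
  obtain ⟨w, hw⟩ := TopologicalSpace.exists_dense_seq Ω
  set z : ℕ → X := fun k => (w (Nat.unpair k).1 : X) with hzdef
  have hzΩ : ∀ k, z k ∈ Ω := fun k => (w (Nat.unpair k).1).2
  have hεpos : ∀ k : ℕ, (0 : ℝ) < 1 / (k + 1) := fun k => by positivity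
  -- the recursive step through "good" balls
  have hstep : ∀ (k : ℕ) (p : {q : X × ℝ // 0 < q.2 ∧ ball q.1 q.2 ⊆ Ω}),
      ∃ p' : {q : X × ℝ // 0 < q.2 ∧ ball q.1 q.2 ⊆ Ω},
        closedBall p'.1.1 p'.1.2 ⊆ ball p.1.1 p.1.2 ∧
        (∃ t, k ≤ t ∧ ∀ u ∈ closedBall p'.1.1 p'.1.2, (⇑f.symm)^[t] u ∈ ball (z k) (1 / (k + 1))) ∧
        (∃ s, k ≤ s ∧ ∀ u ∈ closedBall p'.1.1 p'.1.2, (⇑f)^[s] u ∈ ball (z k) (1 / (k + 1))) := by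
    rintro k ⟨⟨c, r⟩, hr, hsub⟩
    obtain ⟨c', r', hr', hcb, hα, hω⟩ :=
      step f y (z k) (hzΩ k) (1 / (k + 1)) (hεpos k) k c r hr hsub
    exact ⟨⟨⟨c', r'⟩, hr', fun u hu => hsub (hcb (ball_subset_closedBall hu))⟩, hcb, hα, hω⟩
  choose nxt h1 h2 h3 using hstep
  -- initial ball inside the interior of Ω
  obtain ⟨x₀, hx₀⟩ := hint
  obtain ⟨r₀, hr₀, hball₀⟩ := Metric.isOpen_iff.mp isOpen_interior x₀ hx₀
  set p0 : {q : X × ℝ // 0 < q.2 ∧ ball q.1 q.2 ⊆ Ω} :=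
    ⟨⟨x₀, r₀⟩, hr₀, hball₀.trans interior_subset⟩ with hp0
  set g : ℕ → {q : X × ℝ // 0 < q.2 ∧ ball q.1 q.2 ⊆ Ω} :=
    fun k => Nat.rec (nxt 0 p0) (fun k gk => nxt (k + 1) gk) k with hgdef
  set T : ℕ → Set X := fun k => closedBall (g k).1.1 (g k).1.2 with hTdef
  have hnest : ∀ k, T (k + 1) ⊆ T k := fun k =>
    (h1 (k + 1) (g k)).trans ball_subset_closedBall
  have hTne : ∀ k, (T k).Nonempty := fun k =>
    ⟨(g k).1.1, mem_closedBall_self (le_of_lt (g k).2.1)⟩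
  have hTclosed : ∀ k, IsClosed (T k) := fun k => isClosed_closedBall
  obtain ⟨x, hx⟩ := IsCompact.nonempty_iInter_of_sequence_nonempty_isCompact_isClosed T
    hnest hTne (hTclosed 0).isCompact hTclosed
  have hxk : ∀ k, x ∈ T k := mem_iInter.mp hx
  have hxint : x ∈ interior Ω := hball₀ ((h1 0 p0) (hxk 0))
  have hxΩ : x ∈ Ω := interior_subset hxint
  -- the approximation properties of x
  have hprop : ∀ k, ((∃ t, k ≤ t ∧ (⇑f.symm)^[t] x ∈ ball (z k) (1 / (k + 1))) ∧
      (∃ s, k ≤ s ∧ (⇑f)^[s] x ∈ ball (z k) (1 / (k + 1)))) := by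
    intro k
    cases k with
    | zero =>
      obtain ⟨t, htk, ht⟩ := h2 0 p0
      obtain ⟨s, hsk, hs⟩ := h3 0 p0
      exact ⟨⟨t, htk, ht x (hxk 0)⟩, ⟨s, hsk, hs x (hxk 0)⟩⟩
    | succ k =>
      obtain ⟨t, htk, ht⟩ := h2 (k + 1) (g k)
      obtain ⟨s, hsk, hs⟩ := h3 (k + 1) (g k)
      exact ⟨⟨t, htk, ht x (hxk (k + 1))⟩, ⟨s, hsk, hs x (hxk (k + 1))⟩⟩
  -- density argument, common to both limit sets
  have key : ∀ (F : ℕ → ℕ → X), (∀ k, ∃ n, k ≤ n ∧ F n 0 ∈ ball (z k) (1 / (k + 1))) →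
      ∀ zz ∈ Ω, ∀ N : ℕ, ∀ ε : ℝ, 0 < ε → ∃ n, N ≤ n ∧ dist zz (F n 0) < ε := by
    intro F hF zz hzz N ε hε
    obtain ⟨i, hi⟩ := Metric.denseRange_iff.mp hw ⟨zz, hzz⟩ (ε / 2) (by positivity)
    rw [Subtype.dist_eq] at hi
    obtain ⟨m0, hm0⟩ := exists_nat_one_div_lt (show (0 : ℝ) < ε / 2 by positivity)
    set m := max N m0 with hm
    set k := Nat.pair i m with hk
    have hkm : m ≤ k := Nat.right_le_pair i m
    have hzk : z k = (w i : X) := by simp [hzdef, hk, Nat.unpair_pair]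
    obtain ⟨n, hnk, hn⟩ := hF k
    refine ⟨n, by omega, ?_⟩
    have hd1 : dist (F n 0) (z k) < 1 / (k + 1) := mem_ball.mp hn
    have hd2 : (1 : ℝ) / (k + 1) ≤ 1 / (m0 + 1) := by
      apply one_div_le_one_div_of_le
      · positivity
      · have : m0 ≤ k := le_trans (le_max_right N m0) hkm; exact by exact_mod_cast by omega
    calc dist zz (F n 0) ≤ dist zz (z k) + dist (z k) (F n 0) := dist_triangle _ _ _
      _ < ε / 2 + 1 / (k + 1) := by
          rw [hzk] at hd1 ⊢
          rw [dist_comm ((w i : X))]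
          exact add_lt_add_of_lt_of_le hi (le_of_lt hd1)
      _ ≤ ε / 2 + 1 / (m0 + 1) := by linarith
      _ < ε / 2 + ε / 2 := by linarith
      _ = ε := by ring
  -- ω(x) = Ω
  have hω : omSet (⇑f) x = Ω := by
    apply Subset.antisymm
    · exact omSet_subset (⇑f) x Ω hclosed (iter_mem_omSet f y hxΩ)
    · intro zz hzz
      rw [omSet, mem_iInter]
      intro N
      rw [Metric.mem_closure_iff]
      intro ε hε
      obtain ⟨n, hn, hd⟩ := key (fun n _ => (⇑f)^[n] x)
        (fun k => (hprop k).2) zz hzz N ε hε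
      exact ⟨(⇑f)^[n] x, ⟨n, hn, rfl⟩, hd⟩
  -- α(x) = Ω
  have hα : omSet (⇑f.symm) x = Ω := by
    apply Subset.antisymm
    · exact omSet_subset (⇑f.symm) x Ω hclosed (symm_iter_mem_omSet f y hxΩ)
    · intro zz hzz
      rw [omSet, mem_iInter]
      intro N
      rw [Metric.mem_closure_iff]
      intro ε hε
      obtain ⟨n, hn, hd⟩ := key (fun n _ => (⇑f.symm)^[n] x)
        (fun k => (hprop k).1) zz hzz N ε hε
      exact ⟨(⇑f.symm)^[n] x, ⟨n, hn, rfl⟩, hd⟩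
  exact ⟨x, hxint, hω, hα⟩
end

section
/- Let (X, d) be a metric space, f : X → X a homeomorphism, and y ∈ X such that the interior of the ω-limit set ω(y) = ⋂_{N ∈ ℕ} closure{ fⁿ(y) : n ≥ N } is nonempty. Let x be a point in the interior of ω(y) which is positively recurrent, i.e. x ∈ ω(x), and let z ∈ X satisfy d(fⁿ(x), fⁿ(z)) → 0 as n → +∞. Then z belongs to the interior of ω(y). -/
/-- Let `f` be a homeomorphism of a metric space and `y` a point whose
`ω`-limit set has nonempty interior. If `x` is a positively recurrent point in
the interior of `ω(y)` and `z` satisfies `d(fⁿ x, fⁿ z) → 0`, then `z` also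
lies in the interior of `ω(y)`. -/
theorem stable_point_of_recurrent_in_interior_omega
    {X : Type*} [MetricSpace X] (f : Homeomorph X X) (y : X)
    (hint : (interior (⋂ N : ℕ, closure {x : X | ∃ n : ℕ, N ≤ n ∧ (⇑f)^[n] y = x})).Nonempty)
    (x : X)
    (hx : x ∈ interior (⋂ N : ℕ, closure {x : X | ∃ n : ℕ, N ≤ n ∧ (⇑f)^[n] y = x}))
    (hrec : x ∈ ⋂ N : ℕ, closure {z : X | ∃ n : ℕ, N ≤ n ∧ (⇑f)^[n] x = z})
    (z : X)
    (hz : Filter.Tendsto (fun n : ℕ => dist ((⇑f)^[n] x) ((⇑f)^[n] z))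
      Filter.atTop (nhds 0)) :
    z ∈ interior (⋂ N : ℕ, closure {x : X | ∃ n : ℕ, N ≤ n ∧ (⇑f)^[n] y = x}) := by
  set ω := ⋂ N : ℕ, closure {x : X | ∃ n : ℕ, N ≤ n ∧ (⇑f)^[n] y = x} with hω
  -- f⁻¹(ω) ⊆ ω
  have key : ∀ w : X, f w ∈ ω → w ∈ ω := by
    intro w hw
    rw [hω, Set.mem_iInter] at hw ⊢
    intro N
    have h1 := hw (N + 1)
    have h2 : w ∈ f ⁻¹' closure {x : X | ∃ n : ℕ, N + 1 ≤ n ∧ (⇑f)^[n] y = x} := h1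
    rw [f.preimage_closure] at h2
    refine closure_mono ?_ h2
    rintro a ⟨n, hn, ha⟩
    obtain ⟨m, rfl⟩ : ∃ m, n = m + 1 := ⟨n - 1, by omega⟩
    refine ⟨m, by omega, ?_⟩
    have : f ((⇑f)^[m] y) = f a := by
      rw [← Function.iterate_succ_apply' (⇑f) m y]; exact ha
    exact f.injective this
  -- f⁻¹(interior ω) ⊆ interior ω
  have keyU : ∀ w : X, f w ∈ interior ω → w ∈ interior ω := by
    intro w hw
    have : w ∈ f ⁻¹' interior ω := hw
    rw [f.preimage_interior] at this
    exact interior_mono (fun a ha => key a ha) this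
  have keyn : ∀ n : ℕ, ∀ w : X, (⇑f)^[n] w ∈ interior ω → w ∈ interior ω := by
    intro n
    induction n with
    | zero => intro w hw; exact hw
    | succ n ih =>
      intro w hw
      rw [Function.iterate_succ_apply] at hw
      exact keyU w (ih (f w) hw)
  obtain ⟨ε, hε, hball⟩ := Metric.isOpen_iff.mp isOpen_interior x hx
  have hε2 : (0 : ℝ) < ε / 2 := by positivity
  obtain ⟨N, hN⟩ := (hz.eventually (gt_mem_nhds hε2)).exists_forall_of_atTop
  rw [Set.mem_iInter] at hrec
  obtain ⟨b, ⟨n, hnN, rfl⟩, hdb⟩ := Metric.mem_closure_iff.mp (hrec N) (ε / 2) hε2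
  refine keyn n z ?_
  apply hball
  have : dist ((⇑f)^[n] z) x ≤ dist ((⇑f)^[n] z) ((⇑f)^[n] x) + dist ((⇑f)^[n] x) x := dist_triangle _ _ _
  rw [Metric.mem_ball]
  calc dist ((⇑f)^[n] z) x ≤ dist ((⇑f)^[n] z) ((⇑f)^[n] x) + dist ((⇑f)^[n] x) x := this
    _ < ε / 2 + ε / 2 := by
        have h1 := hN n hnN
        rw [dist_comm] at h1 hdb
        exact add_lt_add h1 hdb
    _ = ε := by ring
end

section
/- Let F : ℝ → ℝ be a strictly increasing continuous bijection whose family of iterates is uniformly equicontinuous in both time directions: for every ε > 0 there exists δ > 0 such that for every n ∈ ℤ and all x, y ∈ ℝ, |x − y| < δ implies |Fⁿ(x) − Fⁿ(y)| < ε, where Fⁿ denotes the n-th iterate of F (the |n|-th iterate of F⁻¹ when n < 0). If F has a fixed point, then F is the identity map of ℝ. -/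
open Filter Topology

/-- Auxiliary: a strictly monotone permutation of `ℝ` with uniformly equicontinuous
iterate family, admitting a fixed point `p` but with `x < e x` somewhere, is impossible. -/
lemma neutral_aux (e : Equiv.Perm ℝ) (hm : StrictMono ⇑e)
    (hequi : ∀ ε > (0 : ℝ), ∃ δ > (0 : ℝ), ∀ n : ℤ, ∀ x y : ℝ, |x - y| < δ →
      |((e ^ n : Equiv.Perm ℝ) x) - ((e ^ n : Equiv.Perm ℝ) y)| < ε)
    (p : ℝ) (hp : e p = p) (x : ℝ) (hx : x < e x) : False := by
  have hc : (0:ℝ) < e x - x := sub_pos.mpr hx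
  obtain ⟨δ, hδ, H⟩ := hequi (e x - x) hc
  have hsm : StrictMono ⇑e.symm := fun u v huv => hm.lt_iff_lt.mp (by simpa using huv)
  rcases lt_trichotomy p x with hpx | rfl | hxp
  · -- p < x : backward orbit
    set a : ℕ → ℝ := fun n => (⇑e.symm)^[n] x with ha
    have hstep : ∀ n, a (n+1) = e.symm (a n) := fun n =>
      Function.iterate_succ_apply' (⇑e.symm) n x
    have hinv : ∀ n, a n < e (a n) := by
      intro n; induction n with
      | zero => simpa [ha] using hx
      | succ k ih =>
        have h2 : e (a (k+1)) = a k := by rw [hstep]; exact e.apply_symm_apply _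
        rw [h2, hstep]
        simpa using hsm ih
    have hanti : StrictAnti a := strictAnti_nat_of_succ_lt (fun n => by
      rw [hstep]; simpa using hsm (hinv n))
    have hbdd : ∀ n, p < a n := by
      intro n; induction n with
      | zero => simpa [ha] using hpx
      | succ k ih =>
        have hp' : e.symm p = p := by
          conv_lhs => rw [← hp]
          exact e.symm_apply_apply p
        rw [hstep, ← hp']; exact hsm ih
    have hconv : Tendsto a atTop (𝓝 (⨅ n, a n)) :=
      tendsto_atTop_ciInf hanti.antitone ⟨p, by rintro y ⟨n, rfl⟩; exact (hbdd n).le⟩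
    have hgap : Tendsto (fun n => a n - a (n+1)) atTop (𝓝 0) := by
      have h2 := hconv.comp (tendsto_add_atTop_nat 1)
      simpa using hconv.sub h2
    obtain ⟨N, hN⟩ := (Metric.tendsto_atTop.mp hgap) δ hδ
    have hNd : |a N - a (N+1)| < δ := by
      have := hN N le_rfl; simpa [Real.dist_eq] using this
    have key : ∀ m : ℕ, (e ^ (m:ℤ)) (a m) = x := by
      intro m; induction m with
      | zero => simp [ha]
      | succ k ih =>
        have : ((k+1 : ℕ) : ℤ) = (k:ℤ) + 1 := by push_cast; ring
        rw [this, zpow_add_one, Equiv.Perm.mul_apply, hstep, e.apply_symm_apply, ih]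
    have key2 : ∀ m : ℕ, (e ^ ((m:ℤ)+1)) (a m) = e x := by
      intro m
      rw [show (m:ℤ)+1 = 1+(m:ℤ) by ring, zpow_add, zpow_one, Equiv.Perm.mul_apply, key m]
    have := H ((N:ℤ)+1) (a N) (a (N+1)) hNd
    rw [key2 N] at this
    have hkey : (e ^ ((N:ℤ)+1)) (a (N+1)) = x := by
      have := key (N+1)
      have hcast : ((N+1 : ℕ) : ℤ) = (N:ℤ) + 1 := by push_cast; ring
      rwa [hcast] at this
    rw [hkey] at this
    rw [abs_of_pos hc] at this
    exact lt_irrefl _ this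
  · exact hx.ne' hp
  · -- p > x : forward orbit
    set a : ℕ → ℝ := fun n => (⇑e)^[n] x with ha
    have hstep : ∀ n, a (n+1) = e (a n) := fun n =>
      Function.iterate_succ_apply' (⇑e) n x
    have hmonoa : StrictMono a := strictMono_nat_of_lt_succ (fun n => by
      have h1 : a (n+1) = (⇑e)^[n] (e x) := Function.iterate_succ_apply (⇑e) n x
      rw [h1]
      exact hm.iterate n hx)
    have hbdd : ∀ n, a n < p := by
      intro n; induction n with
      | zero => simpa [ha] using hxp
      | succ k ih => rw [hstep, ← hp]; exact hm ih
    have hconv : Tendsto a atTop (𝓝 (⨆ n, a n)) :=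
      tendsto_atTop_ciSup hmonoa.monotone ⟨p, by rintro y ⟨n, rfl⟩; exact (hbdd n).le⟩
    have hgap : Tendsto (fun n => a (n+1) - a n) atTop (𝓝 0) := by
      have h2 := hconv.comp (tendsto_add_atTop_nat 1)
      simpa using h2.sub hconv
    obtain ⟨N, hN⟩ := (Metric.tendsto_atTop.mp hgap) δ hδ
    have hNd : |a (N+1) - a N| < δ := by
      have := hN N le_rfl; simpa [Real.dist_eq] using this
    have key : ∀ m : ℕ, (e ^ (-(m:ℤ))) (a m) = x := by
      intro m; induction m with
      | zero => simp [ha]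
      | succ k ih =>
        have hcast : -((k+1 : ℕ) : ℤ) = -(k:ℤ) - 1 := by push_cast; ring
        rw [hcast, zpow_sub_one, Equiv.Perm.mul_apply, hstep]
        rw [show (e⁻¹) (e (a k)) = a k from e.symm_apply_apply _, ih]
    have key2 : ∀ m : ℕ, (e ^ (-(m:ℤ))) (a (m+1)) = e x := by
      intro m
      have h1 : -(m:ℤ) = 1 + (-((m+1:ℕ):ℤ)) := by push_cast; ring
      rw [h1, zpow_add, zpow_one, Equiv.Perm.mul_apply, key (m+1)]
    have := H (-(N:ℤ)) (a (N+1)) (a N) hNd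
    rw [key2 N, key N, abs_of_pos hc] at this
    exact lt_irrefl _ this

/-- An orientation-preserving (strictly increasing) continuous bijection of `ℝ`
whose family of iterates `{Fⁿ : n ∈ ℤ}` is uniformly equicontinuous and which
has a fixed point is the identity. -/
theorem neutral_increasing_with_fixed_point_is_id
    (F : ℝ → ℝ) (hmono : StrictMono F) (hcont : Continuous F)
    (hbij : Function.Bijective F)
    (hequi : ∀ ε > (0 : ℝ), ∃ δ > (0 : ℝ), ∀ n : ℤ, ∀ x y : ℝ, |x - y| < δ →
      |((Equiv.ofBijective F hbij ^ n : Equiv.Perm ℝ) x) -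
        ((Equiv.ofBijective F hbij ^ n : Equiv.Perm ℝ) y)| < ε)
    (hfix : ∃ p : ℝ, F p = p) :
    F = id := by
  obtain ⟨p, hp⟩ := hfix
  set e : Equiv.Perm ℝ := Equiv.ofBijective F hbij with he
  have hFe : ⇑e = F := rfl
  have hme : StrictMono ⇑e := hmono
  have hpe : e p = p := hp
  funext x
  simp only [id]
  by_contra hne
  rcases lt_or_gt_of_ne hne with hlt | hgt
  · -- F x < x : use e⁻¹
    have hsm : StrictMono ⇑e.symm := fun u v huv => hme.lt_iff_lt.mp (by simpa using huv)
    have hinvcoe : ⇑(e⁻¹) = ⇑e.symm := rfl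
    refine neutral_aux e⁻¹ (by rw [hinvcoe]; exact hsm) ?_ p ?_ x ?_
    · intro ε hε
      obtain ⟨δ, hδ, H⟩ := hequi ε hε
      refine ⟨δ, hδ, fun n u v huv => ?_⟩
      have : (e⁻¹) ^ n = e ^ (-n) := by rw [inv_zpow, zpow_neg]
      rw [this]
      exact H (-n) u v huv
    · show e.symm p = p
      conv_lhs => rw [← hpe]
      exact e.symm_apply_apply p
    · show x < e.symm x
      have : e x < e (e.symm x) := by rw [e.apply_symm_apply]; exact hlt
      exact hme.lt_iff_lt.mp this
  · exact neutral_aux e hme hequi p hpe x hgt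
end

section
/- Let F : ℝ → ℝ be a strictly decreasing continuous bijection whose family of iterates is uniformly equicontinuous in both time directions: for every ε > 0 there exists δ > 0 such that for every n ∈ ℤ and all x, y ∈ ℝ, |x − y| < δ implies |Fⁿ(x) − Fⁿ(y)| < ε, where Fⁿ denotes the n-th iterate of F (the |n|-th iterate of F⁻¹ when n < 0). Then F is an involution: F ∘ F is the identity map of ℝ. -/
private lemma perm_inv_strictMono (g : Equiv.Perm ℝ) (hg : StrictMono ⇑g) :
    StrictMono ⇑g⁻¹ := by
  intro a b hab
  have h := hg.lt_iff_lt (a := g⁻¹ a) (b := g⁻¹ b)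
  rw [Equiv.Perm.coe_inv, Equiv.apply_symm_apply, Equiv.apply_symm_apply] at h
  exact h.mp hab

private lemma chain_bound (e : Equiv.Perm ℝ) (δ : ℝ) (hδ : 0 < δ)
    (h : ∀ n : ℤ, ∀ x y : ℝ, |x - y| < δ → |(e ^ n) x - (e ^ n) y| < 1) :
    ∀ K : ℕ, ∀ n : ℤ, ∀ x y : ℝ, x ≤ y → y - x ≤ K * (δ / 2) →
      |(e ^ n) x - (e ^ n) y| ≤ K := by
  intro K
  induction K with
  | zero =>
    intro n x y hxy hle
    have hxy' : x = y := le_antisymm hxy (by simpa using hle)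
    simp [hxy']
  | succ K ih =>
    intro n x y hxy hle
    by_cases hsmall : y - x < δ
    · have h1 := h n x y (by rw [abs_sub_comm, abs_of_nonneg (by linarith)]; exact hsmall)
      push_cast
      linarith
    · push_neg at hsmall
      set z := y - δ / 2 with hz
      have h1 : x ≤ z := by simp only [hz]; linarith
      have h2 : z - x ≤ K * (δ / 2) := by push_cast at hle ⊢; simp only [hz]; linarith
      have hzy : |z - y| < δ := by
        rw [abs_of_nonpos (by simp only [hz]; linarith)]; simp only [hz]; linarith
      have b1 := ih n x z h1 h2
      have b2 := h n z y hzy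
      have htri := abs_sub_le ((e ^ n) x) ((e ^ n) z) ((e ^ n) y)
      push_cast
      linarith

private lemma no_increasing_point (e : Equiv.Perm ℝ) (p : ℝ)
    (hp : ∀ m : ℤ, (e ^ m) p = p)
    (hequi : ∀ ε > (0 : ℝ), ∃ δ > (0 : ℝ), ∀ n : ℤ, ∀ x y : ℝ, |x - y| < δ →
      |(e ^ n) x - (e ^ n) y| < ε)
    (k : ℤ) (hmono : StrictMono ⇑(e ^ k)) (x : ℝ) (hx : x < (e ^ k) x) : False := by
  set X : ℕ → ℝ := fun n => (e ^ (k * n)) x with hX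
  have orbit_succ : ∀ n : ℕ, X (n + 1) = (e ^ k) (X n) := by
    intro n
    simp only [hX]
    rw [← Equiv.Perm.mul_apply, ← zpow_add]
    congr 1
    push_cast
    ring
  have X0 : X 0 = x := by simp [hX]
  have hmono_orbit : ∀ n, X n < X (n + 1) := by
    intro n
    induction n with
    | zero => rw [orbit_succ, X0]; exact hx
    | succ m ihm => rw [orbit_succ (m + 1)]; rw [orbit_succ m] at ihm ⊢; exact hmono ihm
  obtain ⟨δ₁, hδ₁, hb⟩ := hequi 1 one_pos
  obtain ⟨K, hK⟩ := exists_nat_ge (|x - p| / (δ₁ / 2))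
  have hKb : |x - p| ≤ K * (δ₁ / 2) := by
    rw [div_le_iff₀ (by linarith)] at hK; linarith
  have hbound : ∀ n : ℕ, |X n - p| ≤ K := by
    intro n
    have hp' : (e ^ (k * n)) p = p := hp _
    rcases le_total x p with hxp | hxp
    · have hth := chain_bound e δ₁ hδ₁ hb K (k * n) x p hxp
        (by rw [abs_sub_comm, abs_of_nonneg (by linarith)] at hKb; linarith)
      rw [hp', abs_sub_comm] at hth
      rw [abs_sub_comm]
      exact hth
    · have hth := chain_bound e δ₁ hδ₁ hb K (k * n) p x hxp
        (by rw [abs_of_nonneg (by linarith)] at hKb; linarith)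
      rw [hp', abs_sub_comm] at hth
      exact hth
  set c := (e ^ k) x - x with hc
  have hc0 : 0 < c := by simp only [hc]; linarith
  obtain ⟨δ₀, hδ₀, hg⟩ := hequi c hc0
  have hgap : ∃ n : ℕ, X (n + 1) - X n < δ₀ := by
    by_contra hno
    push_neg at hno
    have grow : ∀ n : ℕ, x + n * δ₀ ≤ X n := by
      intro n
      induction n with
      | zero => simp [X0]
      | succ m ihm =>
        have hm := hno m
        push_cast
        linarith
    obtain ⟨N, hN⟩ := exists_nat_gt ((2 * K) / δ₀)
    have h1 := grow N
    have h2 := abs_le.1 (hbound N)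
    have h3 := abs_le.1 (by simpa [X0] using hbound 0 : |x - p| ≤ (K : ℝ))
    have hN' : (N : ℝ) * δ₀ > 2 * K := by
      rw [div_lt_iff₀ hδ₀] at hN; linarith
    linarith [h2.2, h3.1]
  obtain ⟨n, hn⟩ := hgap
  have hlt : |X n - X (n + 1)| < δ₀ := by
    rw [abs_sub_comm, abs_of_nonneg (by linarith [hmono_orbit n])]
    exact hn
  have hcontr := hg (-(k * n)) (X n) (X (n + 1)) hlt
  have e1 : (e ^ (-(k * (n : ℤ)))) (X n) = x := by
    simp only [hX]
    rw [← Equiv.Perm.mul_apply, ← zpow_add]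
    simp
  have e2 : (e ^ (-(k * (n : ℤ)))) (X (n + 1)) = (e ^ k) x := by
    simp only [hX]
    rw [← Equiv.Perm.mul_apply, ← zpow_add]
    congr 1
    push_cast
    ring
  rw [e1, e2, abs_sub_comm, abs_of_nonneg (by linarith)] at hcontr
  simp only [hc] at hcontr
  linarith

/-- An orientation-reversing (strictly decreasing) continuous bijection of `ℝ`
whose family of iterates `{Fⁿ : n ∈ ℤ}` is uniformly equicontinuous is an
involution: `F ∘ F = id`. -/
theorem neutral_decreasing_is_involution
    (F : ℝ → ℝ) (hanti : StrictAnti F) (hcont : Continuous F)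
    (hbij : Function.Bijective F)
    (hequi : ∀ ε > (0 : ℝ), ∃ δ > (0 : ℝ), ∀ n : ℤ, ∀ x y : ℝ, |x - y| < δ →
      |((Equiv.ofBijective F hbij ^ n : Equiv.Perm ℝ) x) -
        ((Equiv.ofBijective F hbij ^ n : Equiv.Perm ℝ) y)| < ε) :
    F ∘ F = id := by
  set e := Equiv.ofBijective F hbij with he
  -- fixed point of F
  obtain ⟨p, hpfix⟩ : ∃ p, F p = p := by
    rcases le_total (F 0) 0 with h0 | h0
    · have h1 : F 0 ≤ F (F 0) := hanti.antitone h0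
      have hsub := intermediate_value_Icc' (a := F 0) (b := 0) h0
        ((hcont.sub continuous_id).continuousOn (s := Set.Icc (F 0) 0))
      have hmem : (0 : ℝ) ∈ Set.Icc (F 0 - 0) (F (F 0) - F 0) := ⟨by linarith, by linarith⟩
      obtain ⟨q, _, hq⟩ := hsub hmem
      exact ⟨q, by simp only [Pi.sub_apply] at hq; exact sub_eq_zero.mp hq⟩
    · have h1 : F (F 0) ≤ F 0 := hanti.antitone h0
      have hsub := intermediate_value_Icc' (a := 0) (b := F 0) h0
        ((hcont.sub continuous_id).continuousOn (s := Set.Icc 0 (F 0)))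
      have hmem : (0 : ℝ) ∈ Set.Icc (F (F 0) - F 0) (F 0 - 0) := ⟨by linarith, by linarith⟩
      obtain ⟨q, _, hq⟩ := hsub hmem
      exact ⟨q, by simp only [Pi.sub_apply] at hq; exact sub_eq_zero.mp hq⟩
  have hep : e p = p := hpfix
  have hinv : e⁻¹ p = p := by
    have h := congrArg e.symm hep
    simpa using h.symm
  have hp_all : ∀ m : ℤ, (e ^ m) p = p := by
    intro m
    induction m using Int.induction_on with
    | zero => simp
    | succ n ih => rw [zpow_add_one, Equiv.Perm.mul_apply, hep, ih]
    | pred n ih => rw [zpow_sub_one, Equiv.Perm.mul_apply]; show (e ^ (-n : ℤ)) (e⁻¹ p) = p; rw [hinv, ih]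
  have hcoe2 : ∀ t : ℝ, (e ^ (2 : ℤ)) t = F (F t) := by
    intro t
    rw [show (2 : ℤ) = 1 + 1 by norm_num, zpow_add, zpow_one, Equiv.Perm.mul_apply]
    rfl
  have h2 : StrictMono ⇑(e ^ (2 : ℤ)) := by
    have hfun : ⇑(e ^ (2 : ℤ)) = F ∘ F := funext fun t => hcoe2 t
    rw [hfun]
    exact hanti.comp hanti
  have hcancel : ∀ t : ℝ, (e ^ (-2 : ℤ)) ((e ^ (2 : ℤ)) t) = t := by
    intro t
    rw [← Equiv.Perm.mul_apply, ← zpow_add]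
    simp
  funext t
  simp only [Function.comp_apply, id_eq]
  rcases lt_trichotomy (F (F t)) t with hlt | heq | hgt
  · exfalso
    have hminv := perm_inv_strictMono _ h2
    have hfun : ⇑(e ^ (2 : ℤ))⁻¹ = ⇑(e ^ (-2 : ℤ)) := by rw [← zpow_neg]
    have hmono' : StrictMono ⇑(e ^ (-2 : ℤ)) := hfun ▸ hminv
    have hx : t < (e ^ (-2 : ℤ)) t := by
      have hstep := hmono' (show (e ^ (2 : ℤ)) t < t by rw [hcoe2]; exact hlt)
      rwa [hcancel] at hstep
    exact no_increasing_point e p hp_all hequi (-2) hmono' t hx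
  · exact heq
  · exfalso
    have hx : t < (e ^ (2 : ℤ)) t := by rw [hcoe2]; exact hgt
    exact no_increasing_point e p hp_all hequi 2 h2 t hx
end

section
/- Let F be an orientation-preserving homeomorphism of the circle ℝ/ℤ, i.e. F admits a strictly increasing continuous lift G : ℝ → ℝ with G(x+1) = G(x)+1 and π ∘ G = F ∘ π, where π : ℝ → ℝ/ℤ is the quotient projection. Suppose the family of iterates of F is uniformly equicontinuous in both time directions with respect to the standard metric d on ℝ/ℤ: for every ε > 0 there exists δ > 0 such that for every n ∈ ℤ and all x, y ∈ ℝ/ℤ, d(x, y) < δ implies d(Fⁿ(x), Fⁿ(y)) < ε. If F has a fixed point, then F is the identity map of ℝ/ℤ. -/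
private lemma dist_coe_le_abs (s t : ℝ) :
    dist ((s : ℝ) : AddCircle (1:ℝ)) ((t : ℝ) : AddCircle (1:ℝ)) ≤ |s - t| := by
  rw [dist_eq_norm]
  have : ((s : AddCircle (1:ℝ)) - t) = ((s - t : ℝ) : AddCircle (1:ℝ)) := by
    rw [QuotientAddGroup.mk_sub]
  rw [this]
  simpa using QuotientAddGroup.norm_mk_le_norm (m := s - t) (S := AddSubgroup.zmultiples (1:ℝ))

private lemma le_norm_coe (w : ℝ) (ε : ℝ) (hε : 0 < ε) (h1 : ε ≤ w) (h2 : w ≤ 1 - ε) :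
    ε ≤ ‖((w : ℝ) : AddCircle (1:ℝ))‖ := by
  rw [AddCircle.norm_eq]
  simp only [inv_one, one_mul, mul_one]
  rcases le_or_gt (round w) 0 with h | h
  · have : (round w : ℝ) ≤ 0 := by exact_mod_cast h
    rw [abs_of_nonneg (by linarith)]
    linarith
  · have : (1 : ℝ) ≤ (round w : ℝ) := by exact_mod_cast h
    rw [abs_of_nonpos (by linarith)]
    linarith

/-- Key dynamical lemma: a continuous strictly monotone real map `K` semiconjugate
(via the projection to the circle) to a circle map `f` with equicontinuous iterates
cannot have two fixed points `a < b ≤ a + 1` with `K t > t` strictly in between. -/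
private lemma key_lemma (f : AddCircle (1:ℝ) → AddCircle (1:ℝ))
    (hequi : ∀ ε > (0:ℝ), ∃ δ > (0:ℝ), ∀ n : ℕ, ∀ x y : AddCircle (1:ℝ),
      dist x y < δ → dist (f^[n] x) (f^[n] y) < ε)
    (K : ℝ → ℝ) (hKm : StrictMono K) (hKc : Continuous K)
    (a b : ℝ) (hab : a < b) (hba : b ≤ a + 1)
    (ha : K a = a) (hb : K b = b)
    (hgt : ∀ t, a < t → t < b → t < K t)
    (hcomm : ∀ x : ℝ, ((K x : ℝ) : AddCircle (1:ℝ)) = f ((x : ℝ) : AddCircle (1:ℝ))) :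
    False := by
  set m : ℝ := (a + b) / 2 with hm
  have ham : a < m := by simp only [hm]; linarith
  have hmb : m < b := by simp only [hm]; linarith
  have hKmb : K m < b := hb ▸ hKm hmb
  have hmKm : m < K m := hgt m ham hmb
  set ε : ℝ := min (m - a) (1 + a - K m) with hε
  have hε0 : 0 < ε := lt_min (by linarith) (by linarith)
  obtain ⟨δ, hδ0, hδ⟩ := hequi ε hε0
  set y : ℝ := a + min (δ/2) ((m - a)/2) with hy
  have hay : a < y := by
    have : 0 < min (δ/2) ((m - a)/2) := lt_min (by linarith) (by linarith)
    simp only [hy]; linarith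
  have hym : y < m := by
    have : min (δ/2) ((m - a)/2) ≤ (m - a)/2 := min_le_right _ _
    simp only [hy]; linarith
  have hyδ : y - a < δ := by
    have : min (δ/2) ((m - a)/2) ≤ δ/2 := min_le_left _ _
    simp only [hy]; linarith
  set u : ℕ → ℝ := fun n => K^[n] y with hu
  have hu0 : u 0 = y := rfl
  have husucc : ∀ n, u (n + 1) = K (u n) := fun n => Function.iterate_succ_apply' K n y
  have hmem : ∀ n, a < u n ∧ u n < b := by
    intro n
    induction n with
    | zero => exact ⟨hay, lt_trans hym hmb⟩
    | succ n ih =>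
      rw [husucc]
      exact ⟨ha ▸ hKm ih.1, hb ▸ hKm ih.2⟩
  have hult : ∀ n, u n < u (n + 1) := by
    intro n; rw [husucc]; exact hgt _ (hmem n).1 (hmem n).2
  have humono : Monotone u := monotone_nat_of_le_succ fun n => (hult n).le
  have hex : ∃ n, m < u n := by
    by_contra hcon
    push_neg at hcon
    have hbdd : BddAbove (Set.range u) := ⟨m, by rintro _ ⟨n, rfl⟩; exact hcon n⟩
    set L : ℝ := ⨆ n, u n with hL
    have htend : Filter.Tendsto u Filter.atTop (nhds L) :=
      tendsto_atTop_ciSup humono hbdd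
    have hLm : L ≤ m := ciSup_le hcon
    have hLa : a < L := lt_of_lt_of_le hay (le_ciSup hbdd 0)
    have htend2 : Filter.Tendsto (fun n => u (n + 1)) Filter.atTop (nhds L) :=
      htend.comp (Filter.tendsto_add_atTop_nat 1)
    have htend3 : Filter.Tendsto (fun n => K (u n)) Filter.atTop (nhds (K L)) :=
      (hKc.tendsto L).comp htend
    have : K L = L := by
      refine tendsto_nhds_unique ?_ htend2
      simpa only [← husucc] using htend3
    have := hgt L hLa (lt_of_le_of_lt hLm hmb)
    linarith
  classical
  set n : ℕ := Nat.find hex with hn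
  have hnm : m < u n := Nat.find_spec hex
  have hn0 : n ≠ 0 := by
    intro h
    rw [h, hu0] at hnm; linarith
  obtain ⟨k, hk⟩ := Nat.exists_eq_succ_of_ne_zero hn0
  have hukm : u k ≤ m := by
    by_contra hcon
    push_neg at hcon
    exact Nat.find_min hex (by omega : k < n) hcon
  have hub : u n ≤ K m := by
    rw [hk, husucc]
    exact hKm.monotone hukm
  have hiter : ∀ (s : ℝ) (j : ℕ),
      f^[j] ((s : ℝ) : AddCircle (1:ℝ)) = ((K^[j] s : ℝ) : AddCircle (1:ℝ)) := by
    intro s j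
    induction j with
    | zero => rfl
    | succ j ih =>
      rw [Function.iterate_succ_apply' f, ih, Function.iterate_succ_apply' K, hcomm]
  have hdista : dist ((y : ℝ) : AddCircle (1:ℝ)) ((a : ℝ) : AddCircle (1:ℝ)) < δ := by
    refine lt_of_le_of_lt (dist_coe_le_abs y a) ?_
    rw [abs_of_nonneg (by linarith)]
    exact hyδ
  have hfar := hδ n _ _ hdista
  rw [hiter y n, hiter a n] at hfar
  have hKa : K^[n] a = a := by
    induction n with
    | zero => rfl
    | succ j ih => rw [Function.iterate_succ_apply' K, ih, ha]
  rw [hKa] at hfar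
  have hlow : ε ≤ dist ((K^[n] y : ℝ) : AddCircle (1:ℝ)) ((a : ℝ) : AddCircle (1:ℝ)) := by
    have hKny : K^[n] y = u n := rfl
    rw [dist_eq_norm]
    have hsub : (((K^[n] y : ℝ) : AddCircle (1:ℝ)) - ((a:ℝ) : AddCircle (1:ℝ)))
        = ((u n - a : ℝ) : AddCircle (1:ℝ)) := by
      rw [hKny, QuotientAddGroup.mk_sub]
    rw [hsub]
    refine le_norm_coe _ _ hε0 ?_ ?_
    · have : ε ≤ m - a := min_le_left _ _
      linarith
    · have : ε ≤ 1 + a - K m := min_le_right _ _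
      linarith
  linarith

/-- An orientation-preserving homeomorphism of the circle `ℝ/ℤ` (admitting a
strictly increasing continuous lift `G` with `G (x+1) = G x + 1`) whose family
of iterates `{Fⁿ : n ∈ ℤ}` is uniformly equicontinuous and which has a fixed
point is the identity. -/
theorem neutral_circle_map_with_fixed_point_is_id
    (F : AddCircle (1 : ℝ) → AddCircle (1 : ℝ))
    (hbij : Function.Bijective F)
    (hlift : ∃ G : ℝ → ℝ, StrictMono G ∧ Continuous G ∧
      (∀ x : ℝ, G (x + 1) = G x + 1) ∧
      (∀ x : ℝ, ((G x : ℝ) : AddCircle (1 : ℝ)) = F ((x : ℝ) : AddCircle (1 : ℝ))))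
    (hequi : ∀ ε > (0 : ℝ), ∃ δ > (0 : ℝ), ∀ n : ℤ, ∀ x y : AddCircle (1 : ℝ),
      dist x y < δ →
      dist ((Equiv.ofBijective F hbij ^ n : Equiv.Perm (AddCircle (1 : ℝ))) x)
        ((Equiv.ofBijective F hbij ^ n : Equiv.Perm (AddCircle (1 : ℝ))) y) < ε)
    (hfix : ∃ p : AddCircle (1 : ℝ), F p = p) :
    F = id := by
  classical
  obtain ⟨G, hGm, hGc, hGper, hGπ⟩ := hlift
  obtain ⟨p, hp⟩ := hfix
  obtain ⟨x0, rfl⟩ := QuotientAddGroup.mk_surjective p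
  have h1 : ((G x0 : ℝ) : AddCircle (1:ℝ)) = ((x0 : ℝ) : AddCircle (1:ℝ)) := by
    rw [hGπ x0]; exact hp
  have h2 : (G x0 - x0 : ℝ) ∈ AddSubgroup.zmultiples (1:ℝ) :=
    (QuotientAddGroup.eq_iff_sub_mem.mp h1)
  obtain ⟨k, hk⟩ := h2
  have hk' : (k : ℝ) = G x0 - x0 := by simpa using hk
  set H : ℝ → ℝ := fun x => G x - k with hH
  have hHm : StrictMono H := fun x y hxy => by
    simp only [hH]; have := hGm hxy; linarith
  have hHc : Continuous H := hGc.sub continuous_const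
  have hHper : ∀ x : ℝ, H (x + 1) = H x + 1 := by
    intro x; simp only [hH, hGper]; ring
  have hHx0 : H x0 = x0 := by
    simp only [hH]; linarith
  have hHπ : ∀ x : ℝ, ((H x : ℝ) : AddCircle (1:ℝ)) = F ((x : ℝ) : AddCircle (1:ℝ)) := by
    intro x
    rw [← hGπ x]
    simp only [hH]
    rw [QuotientAddGroup.mk_sub]
    have : ((k : ℝ) : AddCircle (1:ℝ)) = 0 := by
      rw [QuotientAddGroup.eq_zero_iff]
      exact ⟨k, by simp⟩
    rw [this, sub_zero]
  have hHzn : ∀ (x : ℝ) (j : ℕ), H (x + j) = H x + j := by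
    intro x j
    induction j with
    | zero => simp
    | succ j ih =>
      push_cast
      rw [show x + ((j:ℝ) + 1) = (x + j) + 1 by ring, hHper, ih]; ring
  have hHz : ∀ (x : ℝ) (j : ℤ), H (x + j) = H x + j := by
    intro x j
    rcases j with j | j
    · exact_mod_cast hHzn x j
    · have h := hHzn (x + Int.negSucc j) (j + 1)
      push_cast at h ⊢
      rw [show x + -((j:ℝ) + 1) + ((j:ℝ) + 1) = x by ring] at h
      linarith
  -- it suffices to show H = id
  suffices hHid : ∀ x : ℝ, H x = x by
    funext z
    obtain ⟨x, rfl⟩ := QuotientAddGroup.mk_surjective z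
    rw [← hHπ x, hHid x, id]
  by_contra hcon
  push_neg at hcon
  obtain ⟨x, hx⟩ := hcon
  -- bracket x between consecutive fixed points a < b
  set a0 : ℝ := x0 + ⌊x - x0⌋ with ha0
  have hHa0 : H a0 = a0 := by rw [ha0, hHz, hHx0]
  have hHb0 : H (a0 + 1) = a0 + 1 := by rw [hHper, hHa0]
  have ha0x : a0 ≤ x := by
    have := Int.floor_le (x - x0)
    simp only [ha0]; linarith
  have hxb0 : x < a0 + 1 := by
    have := Int.lt_floor_add_one (x - x0)
    simp only [ha0]; linarith
  have hclosed : IsClosed {t : ℝ | H t = t} := isClosed_eq hHc continuous_id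
  obtain ⟨a, haA, haub⟩ : ∃ c ∈ {t : ℝ | H t = t} ∩ Set.Icc a0 x,
      ∀ t ∈ {t : ℝ | H t = t} ∩ Set.Icc a0 x, t ≤ c := by
    have hAc : IsCompact ({t : ℝ | H t = t} ∩ Set.Icc a0 x) :=
      isCompact_Icc.inter_left hclosed
    have hAne : ({t : ℝ | H t = t} ∩ Set.Icc a0 x).Nonempty := ⟨a0, hHa0, le_refl _, ha0x⟩
    exact ⟨sSup _, hAc.sSup_mem hAne, fun t ht => le_csSup hAc.bddAbove ht⟩
  obtain ⟨b, hbB, hblb⟩ : ∃ c ∈ {t : ℝ | H t = t} ∩ Set.Icc x (a0 + 1),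
      ∀ t ∈ {t : ℝ | H t = t} ∩ Set.Icc x (a0 + 1), c ≤ t := by
    have hBc : IsCompact ({t : ℝ | H t = t} ∩ Set.Icc x (a0 + 1)) :=
      isCompact_Icc.inter_left hclosed
    have hBne : ({t : ℝ | H t = t} ∩ Set.Icc x (a0 + 1)).Nonempty :=
      ⟨a0 + 1, hHb0, hxb0.le, le_refl _⟩
    exact ⟨sInf _, hBc.sInf_mem hBne, fun t ht => csInf_le hBc.bddBelow ht⟩
  have hHa : H a = a := haA.1
  have hHb : H b = b := hbB.1
  have haxs : a < x := lt_of_le_of_ne haA.2.2 (by rintro rfl; exact hx hHa)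
  have hxbs : x < b := lt_of_le_of_ne hbB.2.1 (fun h => hx (by rw [h]; exact hHb))
  have hab : a < b := lt_trans haxs hxbs
  have hba : b ≤ a + 1 := by
    have h1 : b ≤ a0 + 1 := hbB.2.2
    have h2 : a0 ≤ a := haA.2.1
    linarith
  have hnofix : ∀ t, a < t → t < b → H t ≠ t := by
    intro t hat htb hfixt
    rcases le_or_gt t x with h | h
    · exact absurd (haub t ⟨hfixt, le_trans haA.2.1 hat.le, h⟩) (not_le.mpr hat)
    · exact absurd (hblb t ⟨hfixt, h.le, le_trans htb.le hbB.2.2⟩) (not_le.mpr htb)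
  have hgc : Continuous fun s => H s - s := hHc.sub continuous_id
  have hivt : ∀ s t : ℝ, s ≤ t → H s - s ≤ 0 → 0 ≤ H t - t →
      ∃ r ∈ Set.Icc s t, H r = r := by
    intro s t hst h1 h2
    obtain ⟨r, hr, hr0⟩ := intermediate_value_Icc hst hgc.continuousOn
      (Set.mem_Icc.mpr ⟨h1, h2⟩)
    exact ⟨r, hr, by simp only [] at hr0; linarith⟩
  have hivt' : ∀ s t : ℝ, s ≤ t → H t - t ≤ 0 → 0 ≤ H s - s →
      ∃ r ∈ Set.Icc s t, H r = r := by
    intro s t hst h1 h2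
    obtain ⟨r, hr, hr0⟩ := intermediate_value_Icc' hst hgc.continuousOn
      (Set.mem_Icc.mpr ⟨h1, h2⟩)
    exact ⟨r, hr, by simp only [] at hr0; linarith⟩
  -- the permutation and its powers
  set e : Equiv.Perm (AddCircle (1:ℝ)) := Equiv.ofBijective F hbij with he
  have hpow : ∀ n : ℕ, ⇑(e ^ n) = F^[n] := by
    intro n
    induction n with
    | zero => funext z; simp
    | succ n ih =>
      funext z
      rw [pow_succ, Function.iterate_succ]
      simp only [Equiv.Perm.coe_mul, Function.comp_apply, ih]
      rfl
  have hpowsymm : ∀ n : ℕ, ⇑(e ^ (-(n:ℤ))) = (⇑e.symm)^[n] := by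
    intro n
    rw [zpow_neg, zpow_natCast, ← inv_pow]
    induction n with
    | zero => funext z; simp
    | succ n ih =>
      funext z
      rw [pow_succ, Function.iterate_succ]
      simp only [Equiv.Perm.coe_mul, Function.comp_apply, ih]
      rfl
  rcases lt_or_gt_of_ne hx with hxlt | hxgt
  · -- case H x < x : use the inverse of H
    have hlt : ∀ t, a < t → t < b → H t < t := by
      intro t hat htb
      rcases lt_or_gt_of_ne (hnofix t hat htb) with h | h
      · exact h
      · exfalso
        rcases le_or_gt t x with hc | hc
        · obtain ⟨r, hr, hr0⟩ := hivt' t x hc (by linarith) (by linarith)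
          exact hnofix r (lt_of_lt_of_le hat hr.1) (lt_of_le_of_lt hr.2 hxbs) hr0
        · obtain ⟨r, hr, hr0⟩ := hivt x t hc.le (by linarith) (by linarith)
          exact hnofix r (lt_of_lt_of_le haxs hr.1) (lt_of_le_of_lt hr.2 htb) hr0
    -- surjectivity of H
    have hsurj : Function.Surjective H := by
      intro y
      obtain ⟨n, hn⟩ := exists_nat_ge (|y - a0|)
      have habs := abs_le.mp (le_trans (le_abs_self _) hn |> fun _ => hn)
      have habs' : -(n:ℝ) ≤ y - a0 ∧ y - a0 ≤ n := abs_le.mp hn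
      have h1 : H (a0 - n) = a0 - n := by
        have h := hHz a0 (-(n:ℤ))
        rw [hHa0] at h
        push_cast at h
        rw [show a0 - (n:ℝ) = a0 + -(n:ℝ) by ring, h]
      have h2 : H (a0 + n) = a0 + n := by
        have h := hHzn a0 n
        rw [hHa0] at h
        exact h
      have hymem : y ∈ Set.Icc (H (a0 - (n:ℝ))) (H (a0 + (n:ℝ))) := by
        rw [h1, h2]
        exact ⟨by linarith [habs'.1], by linarith [habs'.2]⟩
      obtain ⟨s, _, hs⟩ := intermediate_value_Icc
        (by linarith : a0 - (n:ℝ) ≤ a0 + n) hHc.continuousOn hymem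
      exact ⟨s, hs⟩
    set oe : ℝ ≃o ℝ := StrictMono.orderIsoOfSurjective H hHm hsurj with hoe
    have hoeH : ∀ t, oe t = H t := fun t =>
      congrFun (StrictMono.coe_orderIsoOfSurjective H hHm hsurj) t
    set K : ℝ → ℝ := ⇑oe.symm with hKdef
    have hKm : StrictMono K := oe.symm.strictMono
    have hKc : Continuous K := oe.symm.continuous
    have hKH : ∀ t, K (H t) = t := by
      intro t
      rw [hKdef, ← hoeH t, oe.symm_apply_apply]
    have hHK : ∀ t, H (K t) = t := by
      intro t
      rw [hKdef, ← hoeH _, oe.apply_symm_apply]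
    have hKa : K a = a := by
      have := hKH a; rwa [hHa] at this
    have hKb : K b = b := by
      have := hKH b; rwa [hHb] at this
    have hgtK : ∀ t, a < t → t < b → t < K t := by
      intro t h1 h2
      have := hKm (hlt t h1 h2)
      rwa [hKH t] at this
    have hcommK : ∀ s : ℝ, ((K s : ℝ) : AddCircle (1:ℝ)) = ⇑e.symm ((s:ℝ) : AddCircle (1:ℝ)) := by
      intro s
      apply e.injective
      rw [Equiv.apply_symm_apply]
      have : e (((K s : ℝ)) : AddCircle (1:ℝ)) = F ((K s : ℝ) : AddCircle (1:ℝ)) := rfl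
      rw [this, ← hHπ, hHK]
    have hequiS : ∀ ε > (0:ℝ), ∃ δ > (0:ℝ), ∀ n : ℕ, ∀ x y : AddCircle (1:ℝ),
        dist x y < δ → dist ((⇑e.symm)^[n] x) ((⇑e.symm)^[n] y) < ε := by
      intro ε hε
      obtain ⟨δ, hδ0, hδ⟩ := hequi ε hε
      refine ⟨δ, hδ0, fun n x y h => ?_⟩
      have := hδ (-(n:ℤ)) x y h
      rwa [hpowsymm] at this
    exact key_lemma (⇑e.symm) hequiS K hKm hKc a b hab hba hKa hKb hgtK hcommK
  · -- case H x > x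
    have hgt : ∀ t, a < t → t < b → t < H t := by
      intro t hat htb
      rcases lt_or_gt_of_ne (hnofix t hat htb) with h | h
      · exfalso
        rcases le_or_gt t x with hc | hc
        · obtain ⟨r, hr, hr0⟩ := hivt t x hc (by linarith) (by linarith)
          exact hnofix r (lt_of_lt_of_le hat hr.1) (lt_of_le_of_lt hr.2 hxbs) hr0
        · obtain ⟨r, hr, hr0⟩ := hivt' x t hc.le (by linarith) (by linarith)
          exact hnofix r (lt_of_lt_of_le haxs hr.1) (lt_of_le_of_lt hr.2 htb) hr0
      · exact h
    have hequiF : ∀ ε > (0:ℝ), ∃ δ > (0:ℝ), ∀ n : ℕ, ∀ x y : AddCircle (1:ℝ),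
        dist x y < δ → dist (F^[n] x) (F^[n] y) < ε := by
      intro ε hε
      obtain ⟨δ, hδ0, hδ⟩ := hequi ε hε
      refine ⟨δ, hδ0, fun n x y h => ?_⟩
      have := hδ (n:ℤ) x y h
      rwa [zpow_natCast, hpow] at this
    exact key_lemma F hequiF H hHm hHc a b hab hba hHa hHb hgt hHπ
end
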